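/- arXiv:1406.6736 — 8 statements merged into one kernel-verified Lean document; each statement's English description precedes it below -/
import Mathlib

section
/- Let 2√(log n / n) ≤ p ≤ 1 − 2√(log n / n). Then asymptotically almost surely, the random graph G(n,p) and its complement both have diameter at most 2, and all vertex degrees of G(n,p) are at most 2np. -/
open scoped Classical

/-- The simple graph on `Fin n` determined by an indicator function on unordered pairs. -/
def graphOf {n : ℕ} (σ : Sym2 (Fin n) → Bool) : SimpleGraph (Fin n) where
  Adj u v := u ≠ v ∧ σ s(u, v)
  symm := ⟨fun u v h => ⟨h.1.symm, by rw [Sym2.eq_swap]; exact h.2⟩⟩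
  loopless := ⟨fun u h => h.1 rfl⟩

/-- The Erdős–Rényi measure `G(n,p)`: each unordered pair is an edge independently with
probability `p`. -/
noncomputable def erdosRenyi (n : ℕ) (p : ℝ) (hp : ENNReal.ofReal p ≤ 1) :
    MeasureTheory.Measure (Sym2 (Fin n) → Bool) :=
  MeasureTheory.Measure.pi fun _ => (PMF.bernoulli p.toNNReal (ENNReal.coe_le_one_iff.mp hp)).toMeasure

open scoped ENNReal
open MeasureTheory Finset

noncomputable def wgt (p : ℝ) (b : Bool) : ℝ≥0∞ := if b then ENNReal.ofReal p else 1 - ENNReal.ofReal p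

lemma bern_apply (p : ℝ) (hp : ENNReal.ofReal p ≤ 1) (s : Set Bool) :
    (PMF.bernoulli p.toNNReal (ENNReal.coe_le_one_iff.mp hp)).toMeasure s = ∑' b, s.indicator (wgt p) b := by
  rw [PMF.toMeasure_apply _ (Set.to_countable s).measurableSet]
  congr 1; funext b; unfold Set.indicator wgt; cases b <;> simp [PMF.bernoulli_apply, ENNReal.ofReal]

lemma bern_singleton (p : ℝ) (hp : ENNReal.ofReal p ≤ 1) (b : Bool) :
    (PMF.bernoulli p.toNNReal (ENNReal.coe_le_one_iff.mp hp)).toMeasure {b} = wgt p b := by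
  rw [bern_apply _ hp]; rw [tsum_eq_single b] <;> simp +contextual [Set.indicator]

lemma bern_univ (p : ℝ) (hp : ENNReal.ofReal p ≤ 1) :
    (PMF.bernoulli p.toNNReal (ENNReal.coe_le_one_iff.mp hp)).toMeasure Set.univ = 1 :=
  measure_univ

-- L1: rectangle
lemma rect (n : ℕ) (p : ℝ) (hp : ENNReal.ofReal p ≤ 1) (E : Finset (Sym2 (Fin n)))
    (f : Sym2 (Fin n) → Bool) :
    erdosRenyi n p hp {σ | ∀ e ∈ E, σ e = f e} = ∏ e ∈ E, wgt p (f e) := by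
  have : {σ : Sym2 (Fin n) → Bool | ∀ e ∈ E, σ e = f e}
      = Set.pi Set.univ (fun e => if e ∈ E then {f e} else Set.univ) := by
    ext σ; simp only [Set.mem_pi, Set.mem_univ, Set.mem_setOf_eq, forall_true_left]
    constructor
    · intro h e; by_cases he : e ∈ E <;> simp [he, h]
    · intro h e he; have := h e; simpa [he] using this
  rw [erdosRenyi, this, Measure.pi_pi]
  rw [← Finset.prod_filter_mul_prod_filter_not Finset.univ (· ∈ E)]
  have h1 : ∀ e ∈ Finset.univ.filter (· ∈ E),
      (PMF.bernoulli p.toNNReal (ENNReal.coe_le_one_iff.mp hp)).toMeasure (if e ∈ E then {f e} else Set.univ) = wgt p (f e) := by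
    intro e he; simp only [mem_filter] at he; rw [if_pos he.2, bern_singleton _ hp]
  rw [Finset.prod_congr rfl h1]
  have h2 : ∏ e ∈ Finset.univ.filter (¬ · ∈ E),
      (PMF.bernoulli p.toNNReal (ENNReal.coe_le_one_iff.mp hp)).toMeasure (if e ∈ E then {f e} else Set.univ) = 1 := by
    apply Finset.prod_eq_one; intro e he; simp only [mem_filter] at he
    rw [if_neg he.2, bern_univ _ hp]
  rw [h2, mul_one]
  have hE : Finset.univ.filter (· ∈ E) = E := by ext x; simp
  rw [hE]

-- L2: master
lemma master (n : ℕ) (p : ℝ) (hp : ENNReal.ofReal p ≤ 1) {J : Type} [Fintype J]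
    (c : J → Sym2 (Fin n)) (hc : Function.Injective c) (S : Finset (J → Bool)) :
    erdosRenyi n p hp {σ | (fun j => σ (c j)) ∈ S} = ∑ h ∈ S, ∏ j, wgt p (h j) := by
  have key : ∀ h : J → Bool, erdosRenyi n p hp {σ | ∀ j, σ (c j) = h j} = ∏ j, wgt p (h j) := by
    intro h
    set f : Sym2 (Fin n) → Bool := fun e => if h' : ∃ j, c j = e then h h'.choose else false with hf
    have hfc : ∀ j, f (c j) = h j := by
      intro j
      have h' : ∃ j', c j' = c j := ⟨j, rfl⟩
      simp only [hf, dif_pos h']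
      congr 1
      exact hc h'.choose_spec
    have hset : {σ : Sym2 (Fin n) → Bool | ∀ j, σ (c j) = h j}
        = {σ | ∀ e ∈ Finset.univ.image c, σ e = f e} := by
      ext σ; simp only [Set.mem_setOf_eq, Finset.mem_image]
      constructor
      · rintro hσ e ⟨j, -, rfl⟩; rw [hσ, hfc]
      · intro hσ j; rw [hσ (c j) ⟨j, Finset.mem_univ j, rfl⟩, hfc]
    rw [hset, rect, Finset.prod_image (fun a _ b _ hab => hc hab)]
    exact Finset.prod_congr rfl fun j _ => by rw [hfc]
  have hunion : {σ : Sym2 (Fin n) → Bool | (fun j => σ (c j)) ∈ S}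
      = ⋃ h ∈ S, {σ | ∀ j, σ (c j) = h j} := by
    ext σ; simp only [Set.mem_setOf_eq, Set.mem_iUnion]
    constructor
    · intro hσ; exact ⟨_, hσ, fun j => rfl⟩
    · rintro ⟨h, hS, hσ⟩
      have : (fun j => σ (c j)) = h := funext hσ
      rwa [this]
  rw [hunion, measure_biUnion_finset]
  · exact Finset.sum_congr rfl fun h _ => key h
  · intro h1 h1S h2 h2S hne
    simp only [Function.onFun, Set.disjoint_left, Set.mem_setOf_eq]
    intro σ hσ1 hσ2
    exact hne (funext fun j => (hσ1 j).symm.trans (hσ2 j))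
  · exact fun _ _ => (Set.to_countable _).measurableSet

-- L3: degree bound
lemma deg_bound (n : ℕ) (p : ℝ) (hp : ENNReal.ofReal p ≤ 1) (v : Fin n) (k : ℕ) :
    erdosRenyi n p hp {σ | k ≤ (Finset.univ.filter fun u => v ≠ u ∧ σ s(v,u) = true).card}
      ≤ (1 + ENNReal.ofReal p) ^ (n-1) * (2⁻¹ : ℝ≥0∞) ^ k := by
  set J := {u : Fin n // u ≠ v}
  have hcardJ : Fintype.card J = n - 1 := by
    simp [J, Fintype.card_subtype_compl]
  set c : J → Sym2 (Fin n) := fun j => s(j.1, v) with hcdef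
  have hc : Function.Injective c := by
    rintro ⟨a, ha⟩ ⟨b, hb⟩ hab
    simp only [c, Sym2.eq_iff] at hab
    rcases hab with ⟨h1, -⟩ | ⟨h1, h2⟩
    · exact Subtype.ext h1
    · exact absurd h2.symm hb
  set S : Finset (J → Bool) := Finset.univ.filter
    (fun h => k ≤ (Finset.univ.filter fun j => h j = true).card) with hS
  have hset : {σ : Sym2 (Fin n) → Bool | k ≤ (Finset.univ.filter fun u => v ≠ u ∧ σ s(v,u) = true).card}
      = {σ | (fun j => σ (c j)) ∈ S} := by
    ext σ
    simp only [Set.mem_setOf_eq, hS, Finset.mem_filter, Finset.mem_univ, true_and]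
    have : (Finset.univ.filter fun j : J => σ (c j) = true).card
        = (Finset.univ.filter fun u => v ≠ u ∧ σ s(v,u) = true).card := by
      apply Finset.card_bij (fun (a : J) _ => a.1)
      · rintro ⟨a, ha⟩ hmem
        simp only [Finset.mem_filter, Finset.mem_univ, true_and, c] at hmem ⊢
        refine ⟨Ne.symm ha, ?_⟩
        rwa [Sym2.eq_swap] at hmem
      · rintro ⟨a, _⟩ _ ⟨b, _⟩ _ h; exact Subtype.ext h
      · intro u hu
        simp only [Finset.mem_filter, Finset.mem_univ, true_and] at hu
        refine ⟨⟨u, Ne.symm hu.1⟩, ?_, rfl⟩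
        simp only [Finset.mem_filter, Finset.mem_univ, true_and, c, Sym2.eq_swap]
        exact hu.2
    rw [this]
  rw [hset, master n p hp c hc S]
  set P := ENNReal.ofReal p
  set wgt' : Bool → ℝ≥0∞ := fun b => if b then 2 * P else 1 - P with hw'
  have hkey : ∀ h ∈ S, ∏ j, wgt p (h j) ≤ (2⁻¹ : ℝ≥0∞) ^ k * ∏ j, wgt' (h j) := by
    intro h hh
    simp only [hS, Finset.mem_filter] at hh
    set m := (Finset.univ.filter fun j => h j = true).card with hm
    have hprod : ∏ j, wgt' (h j) = 2 ^ m * ∏ j, wgt p (h j) := by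
      rw [← Finset.prod_filter_mul_prod_filter_not Finset.univ (fun j => h j = true) (fun j => wgt' (h j)),
          ← Finset.prod_filter_mul_prod_filter_not Finset.univ (fun j => h j = true) (fun j => wgt p (h j))]
      have e1 : ∏ j ∈ Finset.univ.filter (fun j => h j = true), wgt' (h j)
          = 2 ^ m * ∏ j ∈ Finset.univ.filter (fun j => h j = true), wgt p (h j) := by
        have : ∀ j ∈ Finset.univ.filter (fun j => h j = true), wgt' (h j) = 2 * wgt p (h j) := by
          intro j hj; simp only [Finset.mem_filter] at hj
          simp [hw', wgt, hj.2, P]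
        rw [Finset.prod_congr rfl this, Finset.prod_mul_distrib, Finset.prod_const, hm]
      have e2 : ∀ j ∈ Finset.univ.filter (fun j => ¬ h j = true), wgt' (h j) = wgt p (h j) := by
        intro j hj; simp only [Finset.mem_filter] at hj
        have : h j = false := by simpa using hj.2
        simp [hw', wgt, this, P]
      rw [e1, Finset.prod_congr rfl e2, mul_assoc]
    rw [hprod, ← mul_assoc]
    have h1 : (1 : ℝ≥0∞) ≤ 2⁻¹ ^ k * 2 ^ m := by
      obtain ⟨d, hd⟩ : ∃ d, m = k + d := ⟨m - k, (Nat.add_sub_cancel' hh.2).symm⟩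
      rw [hd, pow_add, ← mul_assoc, ← mul_pow, ENNReal.inv_mul_cancel (by norm_num) (by norm_num),
        one_pow, one_mul]
      exact one_le_pow_of_one_le' (by norm_num : (1:ℝ≥0∞) ≤ 2) d
    calc ∏ j, wgt p (h j) = 1 * ∏ j, wgt p (h j) := (one_mul _).symm
      _ ≤ 2⁻¹ ^ k * 2 ^ m * ∏ j, wgt p (h j) := by
          exact mul_le_mul_left h1 _
  calc ∑ h ∈ S, ∏ j, wgt p (h j)
      ≤ ∑ h ∈ S, (2⁻¹ : ℝ≥0∞) ^ k * ∏ j, wgt' (h j) := Finset.sum_le_sum hkey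
    _ ≤ ∑ h : J → Bool, (2⁻¹ : ℝ≥0∞) ^ k * ∏ j, wgt' (h j) :=
        Finset.sum_le_sum_of_subset (Finset.subset_univ S)
    _ = (2⁻¹ : ℝ≥0∞) ^ k * ∑ h : J → Bool, ∏ j, wgt' (h j) := by rw [← Finset.mul_sum]
    _ = (2⁻¹ : ℝ≥0∞) ^ k * ∏ _j : J, (∑ b : Bool, wgt' b) := by
        rw [Finset.prod_univ_sum, Fintype.piFinset_univ]
    _ ≤ (1 + P) ^ (n-1) * (2⁻¹ : ℝ≥0∞) ^ k := by
        rw [mul_comm]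
        apply mul_le_mul_left
        have hbt : wgt' true = 2 * P := by simp [hw']
        have hbf : wgt' false = 1 - P := by simp [hw']
        have : ∑ b : Bool, wgt' b = 1 + P := by
          rw [Fintype.sum_bool, hbt, hbf, two_mul, add_assoc, add_tsub_cancel_of_le hp, add_comm]
        rw [Finset.prod_const, this, Finset.card_univ, hcardJ]

lemma wgt_sum (p : ℝ) (hp : ENNReal.ofReal p ≤ 1) : wgt p true + wgt p false = 1 := by
  simp only [wgt, if_true, if_false]
  exact add_tsub_cancel_of_le hp

-- L4: pair (common neighbor) bound
lemma pair_bound (n : ℕ) (p : ℝ) (hp : ENNReal.ofReal p ≤ 1) (hp0 : 0 ≤ p)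
    (u v : Fin n) (huv : u ≠ v) (b : Bool) :
    erdosRenyi n p hp {σ | ∀ w : Fin n, w ≠ u → w ≠ v → ¬(σ s(u,w) = b ∧ σ s(v,w) = b)}
      ≤ ENNReal.ofReal (1 - (if b then p else 1-p)^2) ^ (n-2) := by
  have hp1 : p ≤ 1 := by
    by_contra h
    exact absurd hp (by simp [ENNReal.ofReal_le_one]; linarith)
  set W := {w : Fin n // w ≠ u ∧ w ≠ v}
  have hcardW : Fintype.card W = n - 2 := by
    have : Fintype.card W = (Finset.univ.filter fun w : Fin n => w ≠ u ∧ w ≠ v).card :=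
      Fintype.card_subtype _
    rw [this]
    have : (Finset.univ.filter fun w : Fin n => w ≠ u ∧ w ≠ v) = Finset.univ \ {u, v} := by
      ext w; simp [not_or]
    rw [this, Finset.card_sdiff_of_subset (Finset.subset_univ _), Finset.card_univ, Fintype.card_fin,
      Finset.card_insert_of_notMem (by simpa using huv), Finset.card_singleton]
  set c : W × Bool → Sym2 (Fin n) := fun j => if j.2 then s(u, j.1.1) else s(v, j.1.1) with hcdef
  have hc : Function.Injective c := by
    rintro ⟨⟨a, ha1, ha2⟩, i⟩ ⟨⟨a', ha1', ha2'⟩, i'⟩ hab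
    cases i <;> cases i'
    · have h : s(v, a) = s(v, a') := hab
      rw [Sym2.congr_right] at h
      simp only [Prod.mk.injEq]; exact ⟨Subtype.ext h, trivial⟩
    · have h : s(v, a) = s(u, a') := hab
      rw [Sym2.eq_iff] at h
      rcases h with ⟨h1, h2⟩ | ⟨h1, h2⟩
      · exact absurd h1.symm huv
      · exact absurd h2 ha1
    · have h : s(u, a) = s(v, a') := hab
      rw [Sym2.eq_iff] at h
      rcases h with ⟨h1, h2⟩ | ⟨h1, h2⟩
      · exact absurd h1 huv
      · exact absurd h2 ha2
    · have h : s(u, a) = s(u, a') := hab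
      rw [Sym2.congr_right] at h
      simp only [Prod.mk.injEq]; exact ⟨Subtype.ext h, trivial⟩
  set S : Finset (W × Bool → Bool) := Finset.univ.filter
    (fun h => ∀ w : W, ¬(h (w, true) = b ∧ h (w, false) = b)) with hS
  have hset : {σ : Sym2 (Fin n) → Bool | ∀ w : Fin n, w ≠ u → w ≠ v → ¬(σ s(u,w) = b ∧ σ s(v,w) = b)}
      = {σ | (fun j => σ (c j)) ∈ S} := by
    ext σ
    simp only [Set.mem_setOf_eq, hS, Finset.mem_filter, Finset.mem_univ, true_and, c]
    constructor
    · rintro hσ ⟨w, hw1, hw2⟩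
      simpa using hσ w hw1 hw2
    · intro hσ w hw1 hw2
      simpa using hσ ⟨w, hw1, hw2⟩
  rw [hset, master n p hp c hc S]
  set P := ENNReal.ofReal p with hPdef
  set r : Bool × Bool → ℝ≥0∞ := fun x => wgt p x.1 * wgt p x.2 with hr
  -- reindex sum over h to sum over g : W → Bool × Bool
  have step1 : ∑ h ∈ S, ∏ j, wgt p (h j)
      = ∑ g ∈ Fintype.piFinset (fun _ : W => Finset.univ.erase (b, b)), ∏ w : W, r (g w) := by
    refine Finset.sum_nbij' (fun h => fun w => (h (w, true), h (w, false)))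
      (fun g => fun j => if j.2 then (g j.1).1 else (g j.1).2) ?_ ?_ ?_ ?_ ?_
    · intro h hh
      simp only [hS, Finset.mem_filter, Finset.mem_univ, true_and] at hh
      simp only [Fintype.mem_piFinset, Finset.mem_erase, Finset.mem_univ, and_true]
      intro w
      intro hcon
      rw [Prod.ext_iff] at hcon
      exact hh w ⟨hcon.1, hcon.2⟩
    · intro g hg
      simp only [Fintype.mem_piFinset, Finset.mem_erase, Finset.mem_univ, and_true] at hg
      simp only [hS, Finset.mem_filter, Finset.mem_univ, true_and]
      intro w hcon
      exact hg w (by rw [Prod.ext_iff]; exact ⟨hcon.1, hcon.2⟩)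
    · intro h _; funext j; rcases j with ⟨w, i⟩; rcases i <;> simp
    · intro g _; funext w; simp
    · intro h _
      rw [Fintype.prod_prod_type]
      simp only [Fintype.prod_bool]
      rfl
  rw [step1]
  rw [← Finset.prod_univ_sum]
  -- now compute the single-block sum
  have hsumuniv : ∑ x : Bool × Bool, r x = 1 := by
    rw [Fintype.sum_prod_type]
    simp only [r]
    rw [← Finset.sum_mul_sum]
    have : ∑ x : Bool, wgt p x = 1 := by rw [Fintype.sum_bool, wgt_sum p hp]
    rw [this, one_mul]
  have hwt : wgt p true = ENNReal.ofReal p := rfl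
  have hwf : wgt p false = 1 - ENNReal.ofReal p := rfl
  have hrbb : r (b, b) = ENNReal.ofReal ((if b then p else 1-p)^2) := by
    rcases b
    · have : r (false, false) = wgt p false * wgt p false := rfl
      rw [this, hwf, ← ENNReal.ofReal_one, ← ENNReal.ofReal_sub _ hp0,
        ← ENNReal.ofReal_mul (by linarith)]
      simp [sq]
    · have : r (true, true) = wgt p true * wgt p true := rfl
      rw [this, hwt, ← ENNReal.ofReal_mul hp0]
      simp [sq]
  have hblock : ∑ x ∈ Finset.univ.erase ((b,b) : Bool × Bool), r x
      = ENNReal.ofReal (1 - (if b then p else 1-p)^2) := by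
    have h0 : 0 ≤ (if b then p else 1-p) := by rcases b <;> simp <;> linarith
    have h1 : (if b then p else 1-p) ≤ 1 := by rcases b <;> simp <;> linarith
    have hadd : (∑ x ∈ Finset.univ.erase ((b,b) : Bool × Bool), r x) + r (b, b) = 1 := by
      rw [add_comm, Finset.add_sum_erase _ _ (Finset.mem_univ _), hsumuniv]
    rw [ENNReal.ofReal_sub _ (by positivity), ENNReal.ofReal_one]
    rw [← hrbb]
    refine ENNReal.eq_sub_of_add_eq ?_ hadd
    rw [hrbb]
    exact ENNReal.ofReal_ne_top
  rw [hblock, Finset.prod_const, Finset.card_univ, hcardW]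

lemma graphOf_adj {n : ℕ} (σ : Sym2 (Fin n) → Bool) (u v : Fin n) :
    (graphOf σ).Adj u v ↔ u ≠ v ∧ σ s(u,v) = true := Iff.rfl

lemma ediam_le_two_of_common {n : ℕ} (σ : Sym2 (Fin n) → Bool)
    (h : ∀ u v : Fin n, u ≠ v → ∃ w, w ≠ u ∧ w ≠ v ∧ σ s(u,w) = true ∧ σ s(v,w) = true) :
    (graphOf σ).ediam ≤ 2 := by
  apply SimpleGraph.ediam_le_of_edist_le
  intro u v
  rcases eq_or_ne u v with rfl | huv
  · simp [SimpleGraph.edist_self]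
  · obtain ⟨w, hw1, hw2, hσ1, hσ2⟩ := h u v huv
    have h1 : (graphOf σ).Adj u w := ⟨Ne.symm hw1, hσ1⟩
    have h2 : (graphOf σ).Adj w v := by
      refine ⟨hw2, ?_⟩
      rw [Sym2.eq_swap]; exact hσ2
    have := SimpleGraph.Walk.edist_le (SimpleGraph.Walk.cons h1 (SimpleGraph.Walk.cons h2 SimpleGraph.Walk.nil))
    simpa using this

lemma compl_ediam_le_two_of_common {n : ℕ} (σ : Sym2 (Fin n) → Bool)
    (h : ∀ u v : Fin n, u ≠ v → ∃ w, w ≠ u ∧ w ≠ v ∧ σ s(u,w) = false ∧ σ s(v,w) = false) :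
    (graphOf σ)ᶜ.ediam ≤ 2 := by
  apply SimpleGraph.ediam_le_of_edist_le
  intro u v
  rcases eq_or_ne u v with rfl | huv
  · simp [SimpleGraph.edist_self]
  · obtain ⟨w, hw1, hw2, hσ1, hσ2⟩ := h u v huv
    have h1 : (graphOf σ)ᶜ.Adj u w := by
      rw [SimpleGraph.compl_adj]
      exact ⟨Ne.symm hw1, fun hadj => by simp [graphOf_adj, hσ1] at hadj⟩
    have h2 : (graphOf σ)ᶜ.Adj w v := by
      rw [SimpleGraph.compl_adj]
      refine ⟨hw2, fun hadj => ?_⟩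
      rw [graphOf_adj, Sym2.eq_swap] at hadj
      simp [hσ2] at hadj
    have := SimpleGraph.Walk.edist_le (SimpleGraph.Walk.cons h1 (SimpleGraph.Walk.cons h2 SimpleGraph.Walk.nil))
    simpa using this

lemma degree_eq {n : ℕ} (σ : Sym2 (Fin n) → Bool) (v : Fin n) :
    (graphOf σ).degree v = (Finset.univ.filter fun u => v ≠ u ∧ σ s(v,u) = true).card := by
  rw [← SimpleGraph.card_neighborFinset_eq_degree]
  congr 1
  ext u
  simp [SimpleGraph.mem_neighborFinset, graphOf_adj]

lemma exp_bound_aux {x : ℝ} (hx : 0 ≤ x) : x ≤ Real.exp x :=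
  le_trans (by linarith) (Real.add_one_le_exp x)

set_option maxHeartbeats 1000000 in
lemma num_bound (ε : ℝ) (hε : 0 < ε) : ∃ N : ℕ, 9 ≤ N ∧ ∀ n : ℕ, N ≤ n → ∀ p : ℝ,
    2 * Real.sqrt (Real.log n / n) ≤ p → p ≤ 1 - 2 * Real.sqrt (Real.log n / n) →
    ∀ k : ℕ, 2 * n * p < k →
    (n:ℝ)^2 * (1 - p^2)^(n-2) + (n:ℝ)^2 * (1-(1-p)^2)^(n-2)
      + n * ((1+p)^(n-1) * (1/2)^k) ≤ ε := by
  refine ⟨max 9 (Nat.ceil ((4098:ℝ)/ε)), le_max_left _ _, ?_⟩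
  intro n hn p h1 h2 k hk
  have hn9 : (9:ℕ) ≤ n := le_trans (le_max_left _ _) hn
  have hnR : (9:ℝ) ≤ n := by exact_mod_cast hn9
  have npos : (0:ℝ) < n := by linarith
  have hlog1 : 1 ≤ Real.log n := by
    rw [Real.le_log_iff_exp_le npos]
    calc Real.exp 1 ≤ 2.7182818286 := (Real.exp_one_lt_d9).le
      _ ≤ n := by linarith
  have hdiv : 0 ≤ Real.log n / n := by positivity
  set L := Real.sqrt (Real.log n / n) with hL
  have hL0 : 0 ≤ L := Real.sqrt_nonneg _
  have hL2 : L^2 = Real.log n / n := Real.sq_sqrt hdiv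
  have hp0 : 0 ≤ p := le_trans (by positivity) h1
  have hp1 : p ≤ 1 := by nlinarith
  have hq1 : 2 * L ≤ 1 - p := by linarith
  have hp2 : 4 * (Real.log n / n) ≤ p^2 := by nlinarith
  have hq2 : 4 * (Real.log n / n) ≤ (1-p)^2 := by nlinarith
  -- generic: for c with 4 log n / n ≤ c^2, 0 ≤ c, c ≤ 1 : n^2 * (1-c^2)^(n-2) ≤ 1/n
  have key : ∀ c : ℝ, 0 ≤ c → c ≤ 1 → 4 * (Real.log n / n) ≤ c^2 →
      (n:ℝ)^2 * (1 - c^2)^(n-2) ≤ 1/(n:ℝ) := by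
    intro c hc0 hc1 hc2
    have hc2' : c^2 ≤ 1 := by nlinarith
    have step1 : (1 - c^2)^(n-2) ≤ Real.exp (-c^2) ^ (n-2) := by
      apply pow_le_pow_left₀ (by linarith)
      nlinarith [Real.add_one_le_exp (-c^2)]
    have step2 : Real.exp (-c^2) ^ (n-2) = Real.exp (((n-2:ℕ):ℝ) * (-c^2)) := by
      rw [Real.exp_nat_mul]
    have hcast : ((n-2:ℕ):ℝ) = (n:ℝ) - 2 := by
      rw [Nat.cast_sub (by omega)]; norm_num
    have step3 : Real.exp (((n-2:ℕ):ℝ) * (-c^2)) ≤ Real.exp (-(3 * Real.log n)) := by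
      apply Real.exp_le_exp.mpr
      rw [hcast]
      have expand : 4 * (Real.log n / n) * n = 4 * Real.log n := by field_simp
      nlinarith [mul_le_mul_of_nonneg_left hc2 (by linarith : (0:ℝ) ≤ (n:ℝ) - 2)]
    have step4 : Real.exp (-(3 * Real.log n)) = 1 / (n:ℝ)^3 := by
      rw [show -(3 * Real.log n) = (3:ℕ) * (-Real.log n) by ring, Real.exp_nat_mul,
        Real.exp_neg, Real.exp_log npos]
      rw [inv_pow]
      rw [one_div]
    calc (n:ℝ)^2 * (1 - c^2)^(n-2) ≤ (n:ℝ)^2 * (1 / (n:ℝ)^3) := by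
          refine mul_le_mul_of_nonneg_left ?_ (by positivity)
          exact le_trans step1 (by rw [step2]; exact le_trans step3 step4.le)
      _ = 1/(n:ℝ) := by field_simp
  have t1 := key p hp0 hp1 hp2
  have t2 := key (1-p) (by nlinarith) (by linarith) hq2
  have t2' : (n:ℝ)^2 * (1-(1-p)^2)^(n-2) ≤ 1/n := by
    have : (1 - (1-p)^2) = 1 - (1-p)^2 := rfl
    exact t2
  -- third term
  have hsn : Real.sqrt n ^ 2 = n := Real.sq_sqrt npos.le
  have hsn0 : 0 < Real.sqrt n := Real.sqrt_pos.mpr npos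
  have hnp : 2 * Real.sqrt n ≤ n * p := by
    have hnL : Real.sqrt n ≤ (n:ℝ) * L := by
      have h9 : Real.sqrt n * Real.sqrt n = n := Real.mul_self_sqrt npos.le
      have hLlow : Real.sqrt (1 / n) ≤ L := by
        apply Real.sqrt_le_sqrt
        gcongr
      have hs1 : Real.sqrt (1/n) = 1 / Real.sqrt n := by
        rw [one_div, one_div, Real.sqrt_inv]
      have : (n:ℝ) * (1 / Real.sqrt n) = Real.sqrt n := by
        field_simp
        exact hsn.symm
      calc Real.sqrt n = (n:ℝ) * (1 / Real.sqrt n) := this.symm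
        _ ≤ (n:ℝ) * L := by
            apply mul_le_mul_of_nonneg_left _ npos.le
            rw [← hs1]; exact hLlow
    nlinarith
  have t3 : (n:ℝ) * ((1+p)^(n-1) * (1/2)^k) ≤ 4096 / n := by
    have e1 : (1+p)^(n-1) ≤ Real.exp (((n-1:ℕ):ℝ) * p) := by
      calc (1+p)^(n-1) ≤ Real.exp p ^ (n-1) := by
            apply pow_le_pow_left₀ (by linarith)
            linarith [Real.add_one_le_exp p]
        _ = Real.exp (((n-1:ℕ):ℝ) * p) := by rw [Real.exp_nat_mul]
    have e2 : ((1:ℝ)/2)^k = Real.exp ((k:ℝ) * (-Real.log 2)) := by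
      rw [Real.exp_nat_mul, Real.exp_neg, Real.exp_log (by norm_num : (0:ℝ) < 2), one_div]
    have hlog2 : (0.6931471803:ℝ) < Real.log 2 := Real.log_two_gt_d9
    have hcast1 : ((n-1:ℕ):ℝ) ≤ (n:ℝ) := by
      exact_mod_cast Nat.cast_le.mpr (Nat.sub_le n 1)
    have e3 : ((n-1:ℕ):ℝ) * p + (k:ℝ) * (-Real.log 2) ≤ -(Real.sqrt n / 2) := by
      have hk' : 2 * (n:ℝ) * p ≤ k := hk.le
      have h2np : (0:ℝ) ≤ 2 * n * p := by positivity
      have : (k:ℝ) * Real.log 2 ≥ (2 * n * p) * Real.log 2 := by nlinarith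
      have hnp' : (n:ℝ) * p ≥ 2 * Real.sqrt n := hnp
      nlinarith [mul_le_mul_of_nonneg_left hcast1 hp0]
    have e4 : Real.exp (-(Real.sqrt n / 2)) ≤ 4096 / (n:ℝ)^2 := by
      have h48 : (Real.sqrt n / 8)^4 ≤ Real.exp (Real.sqrt n / 8) ^ 4 :=
        pow_le_pow_left₀ (by positivity) (exp_bound_aux (by positivity)) 4
      have hexp4 : Real.exp (Real.sqrt n / 8) ^ 4 = Real.exp (Real.sqrt n / 2) := by
        rw [← Real.exp_nat_mul]
        congr 1
        push_cast
        ring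
      have hval : (Real.sqrt n / 8)^4 = (n:ℝ)^2 / 4096 := by
        rw [div_pow, show (Real.sqrt n)^4 = ((Real.sqrt n)^2)^2 by ring, hsn]
        norm_num
      have h : (n:ℝ)^2 / 4096 ≤ Real.exp (Real.sqrt n / 2) := by
        rw [← hval, ← hexp4]; exact h48
      rw [Real.exp_neg]
      calc (Real.exp (Real.sqrt n / 2))⁻¹ ≤ ((n:ℝ)^2 / 4096)⁻¹ :=
            inv_anti₀ (by positivity) h
        _ = 4096 / (n:ℝ)^2 := by rw [inv_div]
    have comb : (1+p)^(n-1) * (1/2)^k ≤ Real.exp (-(Real.sqrt n / 2)) := by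
      rw [e2]
      calc (1+p)^(n-1) * Real.exp ((k:ℝ) * (-Real.log 2))
          ≤ Real.exp (((n-1:ℕ):ℝ) * p) * Real.exp ((k:ℝ) * (-Real.log 2)) :=
            mul_le_mul_of_nonneg_right e1 (Real.exp_pos _).le
        _ = Real.exp (((n-1:ℕ):ℝ) * p + (k:ℝ) * (-Real.log 2)) := (Real.exp_add _ _).symm
        _ ≤ Real.exp (-(Real.sqrt n / 2)) := Real.exp_le_exp.mpr e3
    calc (n:ℝ) * ((1+p)^(n-1) * (1/2)^k) ≤ (n:ℝ) * (4096 / (n:ℝ)^2) :=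
          mul_le_mul_of_nonneg_left (le_trans comb e4) npos.le
      _ = 4096 / (n:ℝ) := by field_simp
  have hfin : (4098:ℝ) / n ≤ ε := by
    have hceil : ((4098:ℝ)/ε) ≤ n := by
      have h1' : (Nat.ceil ((4098:ℝ)/ε) : ℝ) ≤ n := by
        exact_mod_cast le_trans (le_max_right 9 _) hn
      exact le_trans (Nat.le_ceil _) h1'
    rw [div_le_iff₀ npos]
    rw [div_le_iff₀ hε] at hceil
    linarith [hceil]
  calc (n:ℝ)^2 * (1 - p^2)^(n-2) + (n:ℝ)^2 * (1-(1-p)^2)^(n-2) + n * ((1+p)^(n-1) * (1/2)^k)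
      ≤ 1/n + 1/n + 4096/n := by linarith
    _ = 4098/n := by field_simp; ring
    _ ≤ ε := hfin

lemma ofReal_nsq_mul (n : ℕ) (x : ℝ) (hx : 0 ≤ x) :
    ENNReal.ofReal ((n:ℝ)^2 * x) = (n:ℝ≥0∞) * ((n:ℝ≥0∞) * ENNReal.ofReal x) := by
  rw [show ((n:ℝ)^2 * x) = (n:ℝ) * ((n:ℝ) * x) by ring,
    ENNReal.ofReal_mul (by positivity), ENNReal.ofReal_mul (by positivity),
    ENNReal.ofReal_natCast]

lemma ofReal_n_mul (n : ℕ) (x : ℝ) (hx : 0 ≤ x) :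
    ENNReal.ofReal ((n:ℝ) * x) = (n:ℝ≥0∞) * ENNReal.ofReal x := by
  rw [ENNReal.ofReal_mul (by positivity), ENNReal.ofReal_natCast]

lemma tsum_const_fin (n : ℕ) (c : ℝ≥0∞) : ∑' (_ : Fin n), c = n * c := by
  rw [tsum_fintype]
  simp [Finset.sum_const, Finset.card_univ, nsmul_eq_mul]

theorem erdosRenyi_diam_two_and_degrees_aas :
    ∀ ε : ℝ, 0 < ε → ∃ N : ℕ, ∀ n : ℕ, N ≤ n → ∀ p : ℝ,
      2 * Real.sqrt (Real.log n / n) ≤ p →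
      p ≤ 1 - 2 * Real.sqrt (Real.log n / n) →
      ∀ hp : ENNReal.ofReal p ≤ 1,
      erdosRenyi n p hp
          {σ | (graphOf σ).ediam ≤ 2 ∧ (graphOf σ)ᶜ.ediam ≤ 2 ∧
            ∀ v, ((graphOf σ).degree v : ℝ) ≤ 2 * n * p}
        ≥ 1 - ENNReal.ofReal ε := by
  intro ε hε
  obtain ⟨N, hN9, hnum⟩ := num_bound ε hε
  refine ⟨N, ?_⟩
  intro n hn p h1 h2 hp
  have hprob : IsProbabilityMeasure (erdosRenyi n p hp) := by
    unfold erdosRenyi; infer_instance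
  have hp0 : 0 ≤ p := le_trans (by positivity) h1
  have hp1 : p ≤ 1 := le_trans h2 (by nlinarith [Real.sqrt_nonneg (Real.log n / n)])
  set k := Nat.floor (2*(n:ℝ)*p) + 1 with hkdef
  have hk1 : (2*(n:ℝ)*p : ℝ) < k := by
    have := Nat.lt_floor_add_one (2*(n:ℝ)*p)
    rw [hkdef]
    push_cast
    exact this
  set G : Set (Sym2 (Fin n) → Bool) :=
    {σ | (graphOf σ).ediam ≤ 2 ∧ (graphOf σ)ᶜ.ediam ≤ 2 ∧
      ∀ v, ((graphOf σ).degree v : ℝ) ≤ 2 * n * p} with hG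
  set D : Fin n → Fin n → Bool → Set (Sym2 (Fin n) → Bool) := fun u v b =>
    {σ | u ≠ v ∧ ∀ w, w ≠ u → w ≠ v → ¬(σ s(u,w) = b ∧ σ s(v,w) = b)} with hD
  set Dg : Fin n → Set (Sym2 (Fin n) → Bool) := fun v =>
    {σ | k ≤ (Finset.univ.filter fun u => v ≠ u ∧ σ s(v,u) = true).card} with hDg
  -- event inclusion
  have hsub : Gᶜ ⊆ (⋃ u, ⋃ v, D u v true) ∪ (⋃ u, ⋃ v, D u v false) ∪ (⋃ v, Dg v) := by
    intro σ hσ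
    simp only [hG, Set.mem_compl_iff, Set.mem_setOf_eq, not_and_or] at hσ
    rcases hσ with hA | hB | hC
    · left; left
      by_contra hmem
      simp only [Set.mem_iUnion, not_exists, hD, Set.mem_setOf_eq, not_and] at hmem
      apply hA
      apply ediam_le_two_of_common
      intro u v huv
      have := hmem u v huv
      push_neg at this
      obtain ⟨w, hw1, hw2, hw3⟩ := this
      exact ⟨w, hw1, hw2, hw3.1, hw3.2⟩
    · left; right
      by_contra hmem
      simp only [Set.mem_iUnion, not_exists, hD, Set.mem_setOf_eq, not_and] at hmem
      apply hB
      apply compl_ediam_le_two_of_common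
      intro u v huv
      have := hmem u v huv
      push_neg at this
      obtain ⟨w, hw1, hw2, hw3⟩ := this
      exact ⟨w, hw1, hw2, hw3.1, hw3.2⟩
    · right
      push_neg at hC
      obtain ⟨v, hv⟩ := hC
      refine Set.mem_iUnion.mpr ⟨v, ?_⟩
      simp only [hDg, Set.mem_setOf_eq]
      rw [← degree_eq]
      rw [hkdef]
      rw [Nat.add_one_le_iff]
      rw [Nat.floor_lt (by positivity)]
      exact hv
  -- measure bounds
  have hp2le : ENNReal.ofReal p ≤ 1 := hp
  have hDbound : ∀ (u v : Fin n) (b : Bool),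
      erdosRenyi n p hp (D u v b) ≤ ENNReal.ofReal ((1 - (if b then p else 1-p)^2)^(n-2)) := by
    intro u v b
    have hnn : 0 ≤ 1 - (if b then p else 1-p)^2 := by
      rcases b
      · rw [show (if false then p else 1-p) = 1 - p by simp]
        nlinarith
      · rw [show (if true then p else 1-p) = p by simp]
        nlinarith
    rcases eq_or_ne u v with rfl | huv
    · have : D u u b = ∅ := by
        ext σ; simp [hD]
      rw [this, measure_empty]
      positivity
    · have hsub' : D u v b ⊆ {σ | ∀ w : Fin n, w ≠ u → w ≠ v → ¬(σ s(u,w) = b ∧ σ s(v,w) = b)} :=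
        fun σ hσ => hσ.2
      calc erdosRenyi n p hp (D u v b)
          ≤ erdosRenyi n p hp {σ | ∀ w : Fin n, w ≠ u → w ≠ v → ¬(σ s(u,w) = b ∧ σ s(v,w) = b)} :=
            measure_mono hsub'
        _ ≤ ENNReal.ofReal (1 - (if b then p else 1-p)^2) ^ (n-2) := pair_bound n p hp hp0 u v huv b
        _ = ENNReal.ofReal ((1 - (if b then p else 1-p)^2)^(n-2)) := (ENNReal.ofReal_pow hnn _).symm
  have hDgbound : ∀ v : Fin n,
      erdosRenyi n p hp (Dg v) ≤ ENNReal.ofReal ((1+p)^(n-1) * (1/2)^k) := by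
    intro v
    calc erdosRenyi n p hp (Dg v)
        ≤ (1 + ENNReal.ofReal p) ^ (n-1) * (2⁻¹ : ℝ≥0∞) ^ k := deg_bound n p hp v k
      _ = ENNReal.ofReal ((1+p)^(n-1) * (1/2)^k) := by
          have hA : (1 + ENNReal.ofReal p) = ENNReal.ofReal (1+p) := by
            rw [ENNReal.ofReal_add (by norm_num) hp0, ENNReal.ofReal_one]
          have hB : (2⁻¹ : ℝ≥0∞) = ENNReal.ofReal (1/2) := by
            rw [ENNReal.ofReal_div_of_pos (by norm_num), ENNReal.ofReal_one,
              ENNReal.ofReal_ofNat, one_div]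
          rw [hA, hB, ← ENNReal.ofReal_pow (by linarith), ← ENNReal.ofReal_pow (by norm_num),
            ← ENNReal.ofReal_mul (by positivity)]
  have hiUnion_bound : ∀ b : Bool, erdosRenyi n p hp (⋃ u, ⋃ v, D u v b)
      ≤ (n:ℝ≥0∞) * ((n:ℝ≥0∞) * ENNReal.ofReal ((1 - (if b then p else 1-p)^2)^(n-2))) := by
    intro b
    calc erdosRenyi n p hp (⋃ u, ⋃ v, D u v b)
        ≤ ∑' u : Fin n, erdosRenyi n p hp (⋃ v, D u v b) := measure_iUnion_le _
      _ ≤ ∑' u : Fin n, ∑' v : Fin n, erdosRenyi n p hp (D u v b) :=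
          ENNReal.tsum_le_tsum fun u => measure_iUnion_le _
      _ ≤ ∑' u : Fin n, ∑' v : Fin n, ENNReal.ofReal ((1 - (if b then p else 1-p)^2)^(n-2)) :=
          ENNReal.tsum_le_tsum fun u => ENNReal.tsum_le_tsum fun v => hDbound u v b
      _ = (n:ℝ≥0∞) * ((n:ℝ≥0∞) * ENNReal.ofReal ((1 - (if b then p else 1-p)^2)^(n-2))) := by
          rw [tsum_const_fin]
          rw [tsum_const_fin]
  have hbadle : erdosRenyi n p hp Gᶜ ≤ ENNReal.ofReal ε := by
    have hnn1 : (0:ℝ) ≤ 1 - p^2 := by nlinarith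
    have hnn2 : (0:ℝ) ≤ 1 - (1-p)^2 := by nlinarith
    calc erdosRenyi n p hp Gᶜ
        ≤ erdosRenyi n p hp ((⋃ u, ⋃ v, D u v true) ∪ (⋃ u, ⋃ v, D u v false) ∪ (⋃ v, Dg v)) :=
          measure_mono hsub
      _ ≤ erdosRenyi n p hp ((⋃ u, ⋃ v, D u v true) ∪ (⋃ u, ⋃ v, D u v false))
            + erdosRenyi n p hp (⋃ v, Dg v) := measure_union_le _ _
      _ ≤ (erdosRenyi n p hp (⋃ u, ⋃ v, D u v true) + erdosRenyi n p hp (⋃ u, ⋃ v, D u v false))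
            + erdosRenyi n p hp (⋃ v, Dg v) := by
          gcongr
          exact measure_union_le _ _
      _ ≤ ((n:ℝ≥0∞) * ((n:ℝ≥0∞) * ENNReal.ofReal ((1 - p^2)^(n-2)))
            + (n:ℝ≥0∞) * ((n:ℝ≥0∞) * ENNReal.ofReal ((1 - (1-p)^2)^(n-2))))
            + (n:ℝ≥0∞) * ENNReal.ofReal ((1+p)^(n-1) * (1/2)^k) := by
          gcongr
          · simpa using hiUnion_bound true
          · simpa using hiUnion_bound false
          · calc erdosRenyi n p hp (⋃ v, Dg v)
                ≤ ∑' v : Fin n, erdosRenyi n p hp (Dg v) := measure_iUnion_le _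
              _ ≤ ∑' v : Fin n, ENNReal.ofReal ((1+p)^(n-1) * (1/2)^k) :=
                  ENNReal.tsum_le_tsum hDgbound
              _ = (n:ℝ≥0∞) * ENNReal.ofReal ((1+p)^(n-1) * (1/2)^k) := tsum_const_fin _ _
      _ = ENNReal.ofReal ((n:ℝ)^2 * (1 - p^2)^(n-2) + (n:ℝ)^2 * (1-(1-p)^2)^(n-2)
            + n * ((1+p)^(n-1) * (1/2)^k)) := by
          rw [ENNReal.ofReal_add (by positivity) (by positivity),
            ENNReal.ofReal_add (by positivity) (by positivity),
            ofReal_nsq_mul n _ (pow_nonneg hnn1 _), ofReal_nsq_mul n _ (pow_nonneg hnn2 _),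
            ofReal_n_mul n _ (by positivity)]
      _ ≤ ENNReal.ofReal ε := ENNReal.ofReal_le_ofReal (hnum n hn p h1 h2 k hk1)
  have hmeas : MeasurableSet G := (Set.to_countable G).measurableSet
  have hcompl : erdosRenyi n p hp G = 1 - erdosRenyi n p hp Gᶜ := by
    rw [← prob_compl_eq_one_sub hmeas.compl, compl_compl]
  rw [ge_iff_le, hcompl]
  exact tsub_le_tsub_left hbadle 1
end

section
/- There exists an infinite family of diameter-2-critical graphs G on n vertices with m edges satisfying ∑_v d_v² ≥ (10/9 − o(1))·n·m, where o(1) → 0 as n → ∞. In particular, the conjecture that every diameter-2-critical graph satisfies ∑_v d_v² ≤ n·m is false. -/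
open scoped Classical

/-- A graph is diameter-2-critical if it has diameter 2 and deleting any edge strictly
increases the diameter. -/
def IsDiamTwoCritical {V : Type*} (G : SimpleGraph V) : Prop :=
  G.ediam = 2 ∧ ∀ e ∈ G.edgeSet, 2 < (G.deleteEdges {e}).ediam

namespace CHCex

open SimpleGraph Finset

lemma edist_le_two_iff {V : Type*} (G : SimpleGraph V) (x y : V) :
    G.edist x y ≤ 2 ↔ x = y ∨ G.Adj x y ∨ ∃ w, G.Adj x w ∧ G.Adj w y := by
  constructor
  · intro h
    have hne : G.edist x y ≠ ⊤ := by
      intro ht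
      rw [ht] at h
      exact absurd h (by simp)
    obtain ⟨p, hp⟩ := (SimpleGraph.reachable_of_edist_ne_top hne).exists_walk_length_eq_edist
    have hlen : p.length ≤ 2 := by
      have : (p.length : ℕ∞) ≤ 2 := hp ▸ h
      exact_mod_cast this
    cases p with
    | nil => exact Or.inl rfl
    | cons h1 q =>
      cases q with
      | nil => exact Or.inr (Or.inl h1)
      | cons h2 r =>
        cases r with
        | nil => exact Or.inr (Or.inr ⟨_, h1, h2⟩)
        | cons h3 t => simp [SimpleGraph.Walk.length_cons] at hlen
  · rintro (rfl | hadj | ⟨w, h1, h2⟩)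
    · simp [SimpleGraph.edist_self]
    · have := SimpleGraph.edist_eq_one_iff_adj.mpr hadj
      rw [this]; norm_num
    · have := SimpleGraph.edist_le (SimpleGraph.Walk.cons h1 (SimpleGraph.Walk.cons h2 SimpleGraph.Walk.nil))
      simpa using this

def rel (s a b : ℕ) : Prop :=
  (a < s ∧ b < 2*s ∧ a ≠ b) ∨ (b < s ∧ a < 2*s ∧ a ≠ b)
  ∨ (a < s ∧ b = 2*s + a) ∨ (b < s ∧ a = 2*s + b)
  ∨ (s ≤ a ∧ a < 2*s ∧ b = 3*s) ∨ (s ≤ b ∧ b < 2*s ∧ a = 3*s)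
  ∨ (2*s ≤ a ∧ a ≤ 3*s ∧ b = 3*s+1) ∨ (2*s ≤ b ∧ b ≤ 3*s ∧ a = 3*s+1)

lemma rel_symm {s a b : ℕ} (h : rel s a b) : rel s b a := by
  unfold rel at h ⊢
  rcases h with h|h|h|h|h|h|h|h
  · exact Or.inr (Or.inl ⟨h.1, h.2.1, h.2.2.symm⟩)
  · exact Or.inl ⟨h.1, h.2.1, h.2.2.symm⟩
  · exact Or.inr (Or.inr (Or.inr (Or.inl h)))
  · exact Or.inr (Or.inr (Or.inl h))
  · exact Or.inr (Or.inr (Or.inr (Or.inr (Or.inr (Or.inl h)))))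
  · exact Or.inr (Or.inr (Or.inr (Or.inr (Or.inl h))))
  · exact Or.inr (Or.inr (Or.inr (Or.inr (Or.inr (Or.inr (Or.inr h))))))
  · exact Or.inr (Or.inr (Or.inr (Or.inr (Or.inr (Or.inr (Or.inl h))))))

def cex (s : ℕ) : SimpleGraph (Fin (3*s+2)) where
  Adj u v := rel s u.val v.val
  symm := by constructor; intro u v h; exact rel_symm h
  loopless := by constructor; intro v h; unfold rel at h; omega

@[simp] lemma cex_adj {s : ℕ} {u v : Fin (3*s+2)} :
    (cex s).Adj u v ↔ rel s u.val v.val := Iff.rfl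

lemma diam_core (s : ℕ) (hs : 1 ≤ s) (a b : ℕ) (ha : a < 3*s+2) (hb : b < 3*s+2)
    (hab : a < b) :
    rel s a b ∨ ∃ c, c < 3*s+2 ∧ rel s a c ∧ rel s c b := by
  by_cases h1 : b < 2*s
  · by_cases h2 : a < s
    · left; unfold rel; omega
    · exact Or.inr ⟨0, by omega, by unfold rel; omega, by unfold rel; omega⟩
  · by_cases h3 : b < 3*s
    · by_cases h4 : a < 2*s
      · by_cases h5 : a = b - 2*s
        · left; unfold rel; omega
        · exact Or.inr ⟨b - 2*s, by omega, by unfold rel; omega, by unfold rel; omega⟩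
      · exact Or.inr ⟨3*s+1, by omega, by unfold rel; omega, by unfold rel; omega⟩
    · by_cases h6 : b = 3*s
      · by_cases h7 : a < s
        · exact Or.inr ⟨s, by omega, by unfold rel; omega, by unfold rel; omega⟩
        · by_cases h8 : a < 2*s
          · left; unfold rel; omega
          · exact Or.inr ⟨3*s+1, by omega, by unfold rel; omega, by unfold rel; omega⟩
      · by_cases h9 : a < s
        · exact Or.inr ⟨2*s+a, by omega, by unfold rel; omega, by unfold rel; omega⟩
        · by_cases h10 : a < 2*s
          · exact Or.inr ⟨3*s, by omega, by unfold rel; omega, by unfold rel; omega⟩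
          · left; unfold rel; omega

lemma diam_le (s : ℕ) (hs : 1 ≤ s) (u v : Fin (3*s+2)) : (cex s).edist u v ≤ 2 := by
  rw [edist_le_two_iff]
  rcases lt_trichotomy u.val v.val with h | h | h
  · rcases diam_core s hs u.val v.val u.isLt v.isLt h with hr | ⟨c, hc, h1, h2⟩
    · exact Or.inr (Or.inl hr)
    · exact Or.inr (Or.inr ⟨⟨c, hc⟩, h1, h2⟩)
  · exact Or.inl (Fin.ext h)
  · rcases diam_core s hs v.val u.val v.isLt u.isLt h with hr | ⟨c, hc, h1, h2⟩
    · exact Or.inr (Or.inl (rel_symm hr))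
    · exact Or.inr (Or.inr ⟨⟨c, hc⟩, rel_symm h2, rel_symm h1⟩)

lemma ediam_eq (s : ℕ) (hs : 1 ≤ s) : (cex s).ediam = 2 := by
  apply le_antisymm
  · rw [SimpleGraph.ediam_le_iff]
    intro u v
    exact diam_le s hs u v
  · have hlt : s < 3*s+2 := by omega
    have hlt2 : 3*s+1 < 3*s+2 := by omega
    have hne : (⟨s, hlt⟩ : Fin (3*s+2)) ≠ ⟨3*s+1, hlt2⟩ := by
      rw [Fin.ne_iff_vne]; simp; omega
    have hnadj : ¬ (cex s).Adj ⟨s, hlt⟩ ⟨3*s+1, hlt2⟩ := by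
      rw [cex_adj]
      show ¬ rel s s (3*s+1)
      unfold rel; omega
    have h2 : 2 ≤ (cex s).edist ⟨s, hlt⟩ ⟨3*s+1, hlt2⟩ := by
      by_contra hc
      push_neg at hc
      have htop : (cex s).edist ⟨s, hlt⟩ ⟨3*s+1, hlt2⟩ ≠ ⊤ := ne_top_of_lt hc
      lift (cex s).edist ⟨s, hlt⟩ ⟨3*s+1, hlt2⟩ to ℕ using htop with d hd
      have hd2 : d < 2 := by exact_mod_cast hc
      interval_cases d
      · exact hne ((SimpleGraph.edist_eq_zero_iff).mp hd.symm)
      · exact hnadj ((SimpleGraph.edist_eq_one_iff_adj).mp hd.symm)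
    exact h2.trans SimpleGraph.edist_le_ediam
lemma two_lt_ediam_of_pair {V : Type*} (G : SimpleGraph V) (p q : V) (h1 : p ≠ q)
    (h2 : ¬ G.Adj p q) (h3 : ∀ w, ¬(G.Adj p w ∧ G.Adj w q)) : 2 < G.ediam := by
  have hn : ¬ G.edist p q ≤ 2 := by
    rw [edist_le_two_iff]
    rintro (h | h | ⟨w, hw⟩)
    exacts [h1 h, h2 h, h3 w hw]
  exact lt_of_lt_of_le (not_le.mp hn) SimpleGraph.edist_le_ediam

lemma del_adj {s : ℕ} {u v x y : Fin (3*s+2)} :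
    ((cex s).deleteEdges {s(u,v)}).Adj x y ↔
      rel s x.val y.val ∧
        ¬((x.val = u.val ∧ y.val = v.val) ∨ (x.val = v.val ∧ y.val = u.val)) := by
  rw [SimpleGraph.deleteEdges_adj, cex_adj, Set.mem_singleton_iff, Sym2.eq_iff]
  simp only [Fin.ext_iff]

lemma crit_core (s : ℕ) (hs : 1 ≤ s) (u v : Fin (3*s+2)) (he : (cex s).Adj u v)
    (hlt : u.val < v.val) : 2 < ((cex s).deleteEdges {s(u,v)}).ediam := by
  have hrel : rel s u.val v.val := he
  have hcase : (u.val < s ∧ s ≤ v.val ∧ v.val < 2*s) ∨ (u.val < s ∧ v.val < s)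
      ∨ (u.val < s ∧ v.val = 2*s + u.val) ∨ (s ≤ u.val ∧ u.val < 2*s ∧ v.val = 3*s)
      ∨ (2*s ≤ u.val ∧ u.val < 3*s ∧ v.val = 3*s+1) ∨ (u.val = 3*s ∧ v.val = 3*s+1) := by
    unfold rel at hrel; omega
  rcases hcase with hc | hc | hc | hc | hc | hc
  · -- S-B edge (x_a, u_b): stretched pair (v, y_a)
    apply two_lt_ediam_of_pair _ v ⟨2*s+u.val, by omega⟩
    · rw [Fin.ne_iff_vne]; simp; omega
    · rw [del_adj]; rintro ⟨hr, -⟩; unfold rel at hr; simp at hr; omega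
    · intro w hw
      obtain ⟨hw1, hw2⟩ := hw
      rw [del_adj] at hw1 hw2
      obtain ⟨hr1, he1⟩ := hw1
      obtain ⟨hr2, he2⟩ := hw2
      simp at hr2 he1 he2
      unfold rel at hr1 hr2; omega
  · -- S-S edge (x_a, x_b): stretched pair (u, y_b)
    apply two_lt_ediam_of_pair _ u ⟨2*s+v.val, by omega⟩
    · rw [Fin.ne_iff_vne]; simp; omega
    · rw [del_adj]; rintro ⟨hr, -⟩; unfold rel at hr; simp at hr; omega
    · intro w hw
      obtain ⟨hw1, hw2⟩ := hw
      rw [del_adj] at hw1 hw2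
      obtain ⟨hr1, he1⟩ := hw1
      obtain ⟨hr2, he2⟩ := hw2
      simp at hr2 he1 he2
      unfold rel at hr1 hr2; omega
  · -- pendant edge (x_a, y_a): stretched pair (u, v)
    apply two_lt_ediam_of_pair _ u v
    · rw [Fin.ne_iff_vne]; omega
    · rw [del_adj]; rintro ⟨-, hne⟩; exact hne (Or.inl ⟨rfl, rfl⟩)
    · intro w hw
      obtain ⟨hw1, hw2⟩ := hw
      rw [del_adj] at hw1 hw2
      obtain ⟨hr1, he1⟩ := hw1
      obtain ⟨hr2, he2⟩ := hw2
      unfold rel at hr1 hr2; omega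
  · -- B-y* edge: stretched pair (u, h)
    apply two_lt_ediam_of_pair _ u ⟨3*s+1, by omega⟩
    · rw [Fin.ne_iff_vne]; simp; omega
    · rw [del_adj]; rintro ⟨hr, -⟩; unfold rel at hr; simp at hr; omega
    · intro w hw
      obtain ⟨hw1, hw2⟩ := hw
      rw [del_adj] at hw1 hw2
      obtain ⟨hr1, he1⟩ := hw1
      obtain ⟨hr2, he2⟩ := hw2
      simp at hr2 he1 he2
      unfold rel at hr1 hr2; omega
  · -- pendant-hub edge: stretched pair (u, v)
    apply two_lt_ediam_of_pair _ u v
    · rw [Fin.ne_iff_vne]; omega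
    · rw [del_adj]; rintro ⟨-, hne⟩; exact hne (Or.inl ⟨rfl, rfl⟩)
    · intro w hw
      obtain ⟨hw1, hw2⟩ := hw
      rw [del_adj] at hw1 hw2
      obtain ⟨hr1, he1⟩ := hw1
      obtain ⟨hr2, he2⟩ := hw2
      unfold rel at hr1 hr2; omega
  · -- y*-hub edge: stretched pair (u, v)
    apply two_lt_ediam_of_pair _ u v
    · rw [Fin.ne_iff_vne]; omega
    · rw [del_adj]; rintro ⟨-, hne⟩; exact hne (Or.inl ⟨rfl, rfl⟩)
    · intro w hw
      obtain ⟨hw1, hw2⟩ := hw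
      rw [del_adj] at hw1 hw2
      obtain ⟨hr1, he1⟩ := hw1
      obtain ⟨hr2, he2⟩ := hw2
      unfold rel at hr1 hr2; omega

lemma crit (s : ℕ) (hs : 1 ≤ s) :
    ∀ e ∈ (cex s).edgeSet, 2 < ((cex s).deleteEdges {e}).ediam := by
  intro e
  induction e using Sym2.ind with
  | _ u v =>
    intro he
    rw [SimpleGraph.mem_edgeSet] at he
    have hne : u.val ≠ v.val := by
      have h := he; rw [cex_adj] at h; unfold rel at h; omega
    rcases hne.lt_or_gt with h | h
    · exact crit_core s hs u v he h
    · rw [Sym2.eq_swap]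
      exact crit_core s hs v u he.symm h

lemma card_filter_fin {n : ℕ} (Q : ℕ → Prop) :
    (univ.filter (fun v : Fin n => Q v.val)).card = ((range n).filter Q).card := by
  refine Finset.card_bij (fun v _ => v.val) ?_ ?_ ?_
  · intro v hv
    simp only [mem_filter, mem_univ, true_and] at hv
    simp only [mem_filter, mem_range]
    exact ⟨v.isLt, hv⟩
  · intro x _ y _ hxy
    exact Fin.ext hxy
  · intro i hi
    simp only [mem_filter, mem_range] at hi
    exact ⟨⟨i, hi.1⟩, by simp [hi.2], rfl⟩

/-- degree profile -/
def D (s i : ℕ) : ℕ := if i < s then 2*s else if i < 2*s then s+1 else if i < 3*s then 2 else s+1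

lemma degree_eq (s : ℕ) (hs : 1 ≤ s) (v : Fin (3*s+2)) : (cex s).degree v = D s v.val := by
  have h1 : (cex s).degree v = ((range (3*s+2)).filter (fun i => rel s v.val i)).card := by
    rw [show (cex s).degree v = ((cex s).neighborFinset v).card from rfl]
    rw [show (cex s).neighborFinset v
          = univ.filter (fun w : Fin (3*s+2) => rel s v.val w.val) from by
      ext w; simp [SimpleGraph.mem_neighborFinset]]
    exact card_filter_fin _
  rw [h1]
  by_cases hv1 : v.val < s
  · have hset : (range (3*s+2)).filter (fun i => rel s v.val i)
        = ((range (2*s)).erase v.val) ∪ {2*s + v.val} := by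
      ext i
      simp only [mem_filter, mem_range, mem_union, mem_erase, mem_singleton]
      unfold rel
      omega
    have hd : Disjoint ((range (2*s)).erase v.val) ({2*s + v.val} : Finset ℕ) := by
      simp only [Finset.disjoint_singleton_right, mem_erase, mem_range]
      omega
    rw [hset, card_union_of_disjoint hd, card_erase_of_mem (mem_range.mpr (by omega)),
      card_range, card_singleton, D, if_pos hv1]
    omega
  · by_cases hv2 : v.val < 2*s
    · have hset : (range (3*s+2)).filter (fun i => rel s v.val i)
          = range s ∪ {3*s} := by
        ext i
        simp only [mem_filter, mem_range, mem_union, mem_singleton]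
        unfold rel
        omega
      have hd : Disjoint (range s) ({3*s} : Finset ℕ) := by
        simp only [Finset.disjoint_singleton_right, mem_range]
        omega
      rw [hset, card_union_of_disjoint hd, card_range, card_singleton, D,
        if_neg hv1, if_pos hv2]
    · by_cases hv3 : v.val < 3*s
      · have hset : (range (3*s+2)).filter (fun i => rel s v.val i)
            = insert (v.val - 2*s) {3*s+1} := by
          ext i
          simp only [mem_filter, mem_range, mem_insert, mem_singleton]
          unfold rel
          omega
        rw [hset, card_insert_of_notMem (by simp; omega), card_singleton, D,
          if_neg hv1, if_neg hv2, if_pos hv3]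
      · by_cases hv4 : v.val = 3*s
        · have hset : (range (3*s+2)).filter (fun i => rel s v.val i)
              = Ico s (2*s) ∪ {3*s+1} := by
            ext i
            simp only [mem_filter, mem_range, mem_union, mem_Ico, mem_singleton]
            unfold rel
            omega
          have hd : Disjoint (Ico s (2*s)) ({3*s+1} : Finset ℕ) := by
            simp only [Finset.disjoint_singleton_right, mem_Ico]
            omega
          rw [hset, card_union_of_disjoint hd, Nat.card_Ico, card_singleton, D,
            if_neg hv1, if_neg hv2, if_neg hv3]
          omega
        · have hv5 : v.val = 3*s+1 := by have := v.isLt; omega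
          have hset : (range (3*s+2)).filter (fun i => rel s v.val i)
              = Ico (2*s) (3*s+1) := by
            ext i
            simp only [mem_filter, mem_range, mem_Ico]
            unfold rel
            omega
          rw [hset, Nat.card_Ico, D, if_neg hv1, if_neg hv2, if_neg hv3]
          omega

lemma sum_D_gen (s : ℕ) (hs : 1 ≤ s) (f : ℕ → ℕ) :
    ∑ i ∈ range (3*s+2), f (D s i)
      = s * f (2*s) + s * f (s+1) + s * f 2 + 2 * f (s+1) := by
  rw [show 3*s+2 = (3*s+1)+1 from rfl, sum_range_succ,
    show 3*s+1 = (3*s)+1 from rfl, sum_range_succ]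
  have e1 : ∑ i ∈ range (3*s), f (D s i) = s * f (2*s) + s * f (s+1) + s * f 2 := by
    rw [range_eq_Ico,
      ← Finset.sum_Ico_consecutive _ (Nat.zero_le s) (by omega : s ≤ 3*s),
      ← Finset.sum_Ico_consecutive _ (by omega : s ≤ 2*s) (by omega : 2*s ≤ 3*s)]
    have c1 : ∑ i ∈ Ico 0 s, f (D s i) = s * f (2*s) := by
      have hcong : ∀ i ∈ Ico 0 s, f (D s i) = f (2*s) := by
        intro i hi
        rw [mem_Ico] at hi
        rw [show D s i = 2*s from by unfold D; rw [if_pos (by omega)]]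
      rw [Finset.sum_congr rfl hcong, Finset.sum_const, Nat.card_Ico, smul_eq_mul,
        Nat.sub_zero]
    have c2 : ∑ i ∈ Ico s (2*s), f (D s i) = s * f (s+1) := by
      have hcong : ∀ i ∈ Ico s (2*s), f (D s i) = f (s+1) := by
        intro i hi
        rw [mem_Ico] at hi
        rw [show D s i = s+1 from by unfold D; rw [if_neg (by omega), if_pos (by omega)]]
      rw [Finset.sum_congr rfl hcong, Finset.sum_const, Nat.card_Ico, smul_eq_mul]
      have h2 : 2*s - s = s := by omega
      rw [h2]
    have c3 : ∑ i ∈ Ico (2*s) (3*s), f (D s i) = s * f 2 := by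
      have hcong : ∀ i ∈ Ico (2*s) (3*s), f (D s i) = f 2 := by
        intro i hi
        rw [mem_Ico] at hi
        rw [show D s i = 2 from by
          unfold D; rw [if_neg (by omega), if_neg (by omega), if_pos (by omega)]]
      rw [Finset.sum_congr rfl hcong, Finset.sum_const, Nat.card_Ico, smul_eq_mul]
      have h3 : 3*s - 2*s = s := by omega
      rw [h3]
    rw [c1, c2, c3]
    omega
  rw [e1]
  have d1 : D s (3*s) = s+1 := by
    unfold D; rw [if_neg (by omega), if_neg (by omega), if_neg (by omega)]
  have d2 : D s (3*s+1) = s+1 := by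
    unfold D; rw [if_neg (by omega), if_neg (by omega), if_neg (by omega)]
  rw [d1, d2]
  ring

lemma sum_degree (s : ℕ) (hs : 1 ≤ s) :
    ∑ v : Fin (3*s+2), (cex s).degree v = (3*s+2)*(s+1) := by
  have h1 : ∑ v : Fin (3*s+2), (cex s).degree v
      = ∑ v : Fin (3*s+2), (fun i => D s i) v.val :=
    Finset.sum_congr rfl fun v _ => degree_eq s hs v
  rw [h1, Fin.sum_univ_eq_sum_range (fun i => D s i) (3*s+2)]
  have := sum_D_gen s hs (fun x => x)
  rw [this]
  ring

lemma card_edges (s : ℕ) (hs : 1 ≤ s) :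
    2 * (cex s).edgeFinset.card = (3*s+2)*(s+1) := by
  rw [← SimpleGraph.sum_degrees_eq_twice_card_edges]
  exact sum_degree s hs

lemma sum_deg_sq (s : ℕ) (hs : 1 ≤ s) :
    ∑ v : Fin (3*s+2), ((cex s).degree v)^2 = 5*s^3+4*s^2+9*s+2 := by
  have h1 : ∑ v : Fin (3*s+2), ((cex s).degree v)^2
      = ∑ v : Fin (3*s+2), (fun i => (D s i)^2) v.val :=
    Finset.sum_congr rfl fun v _ => by rw [degree_eq s hs v]
  rw [h1, Fin.sum_univ_eq_sum_range (fun i => (D s i)^2) (3*s+2)]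
  have := sum_D_gen s hs (fun x => x^2)
  rw [this]
  ring

lemma sum_deg_sq_real (s : ℕ) (hs : 1 ≤ s) :
    ∑ v : Fin (3*s+2), (((cex s).degree v : ℝ))^2
      = 5*(s:ℝ)^3+4*(s:ℝ)^2+9*(s:ℝ)+2 := by
  have h0 : ∑ v : Fin (3*s+2), (((cex s).degree v : ℝ))^2
      = ((∑ v : Fin (3*s+2), ((cex s).degree v)^2 : ℕ) : ℝ) := by
    push_cast
    rfl
  rw [h0, sum_deg_sq s hs]
  push_cast
  ring

lemma key_ineq (X ε : ℝ) (hX1 : 1 ≤ X) (hε : 0 < ε) (hεs : 2 ≤ ε * X) :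
    (10/9 - ε) * (3*X+2) * ((3*X+2)*(X+1)/2) ≤ 5*X^3+4*X^2+9*X+2 := by
  have h1 : 0 ≤ ε * (21*X^2+16*X+4) := by
    apply mul_nonneg hε.le
    nlinarith [sq_nonneg X]
  have h2 : 0 ≤ (ε*X - 2) * X^2 := by
    apply mul_nonneg (by linarith) (sq_nonneg X)
  have h3 : 0 ≤ (X - 1) * X^2 := by
    apply mul_nonneg (by linarith) (sq_nonneg X)
  nlinarith [h1, h2, h3, hX1, hε.le, sq_nonneg X]

end CHCex

theorem caccetta_haggkvist_diam_two_false :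
    (∀ ε : ℝ, 0 < ε → ∀ N : ℕ, ∃ n : ℕ, N ≤ n ∧ ∃ G : SimpleGraph (Fin n),
      IsDiamTwoCritical G ∧
        (10 / 9 - ε) * n * G.edgeFinset.card ≤ ∑ v : Fin n, ((G.degree v : ℝ) ^ 2)) ∧
    ¬ (∀ (n : ℕ) (G : SimpleGraph (Fin n)), IsDiamTwoCritical G →
        ∑ v : Fin n, ((G.degree v : ℝ) ^ 2) ≤ n * G.edgeFinset.card) := by
  have main : ∀ s : ℕ, 1 ≤ s → IsDiamTwoCritical (CHCex.cex s) := fun s hs =>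
    ⟨CHCex.ediam_eq s hs, CHCex.crit s hs⟩
  constructor
  · intro ε hε N
    set s : ℕ := max (max N 1) ⌈2/ε⌉₊ with hsdef
    have hs1 : 1 ≤ s := le_trans (le_max_right N 1) (le_max_left _ _)
    have hsN : N ≤ s := le_trans (le_max_left N 1) (le_max_left _ _)
    refine ⟨3*s+2, by omega, CHCex.cex s, main s hs1, ?_⟩
    have hm := CHCex.card_edges s hs1
    rw [CHCex.sum_deg_sq_real s hs1]
    have hmR : 2 * (((CHCex.cex s).edgeFinset.card : ℝ))
        = (3*(s:ℝ)+2)*((s:ℝ)+1) := by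
      exact_mod_cast hm
    have hX1 : (1:ℝ) ≤ (s:ℝ) := by exact_mod_cast hs1
    have hεs : (2:ℝ) ≤ ε * (s:ℝ) := by
      have h1 : (2/ε) ≤ (⌈2/ε⌉₊ : ℝ) := Nat.le_ceil _
      have h2 : ((⌈2/ε⌉₊ : ℕ):ℝ) ≤ (s:ℝ) := by
        exact_mod_cast le_max_right (max N 1) ⌈2/ε⌉₊
      have h3 := le_trans h1 h2
      rw [div_le_iff₀ hε] at h3
      linarith
    have hcast : ((3*s+2 : ℕ) : ℝ) = 3*(s:ℝ)+2 := by push_cast; ring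
    rw [hcast]
    have hE : (((CHCex.cex s).edgeFinset.card : ℕ) : ℝ)
        = (3*(s:ℝ)+2)*((s:ℝ)+1)/2 := by linarith
    rw [hE]
    exact CHCex.key_ineq (s:ℝ) ε hX1 hε hεs
  · intro hall
    have h := hall (3*13+2) (CHCex.cex 13) (main 13 (by norm_num))
    have hm := CHCex.card_edges 13 (by norm_num)
    have hcard : (CHCex.cex 13).edgeFinset.card = 287 := by omega
    rw [CHCex.sum_deg_sq_real 13 (by norm_num), hcard] at h
    norm_num at h
end

section
/- Let G be a diameter-critical graph of diameter k ≥ 3 with n vertices and m edges. Then ∑_v d_v² ≤ n·m; equivalently, the average edge-degree of G is at most n. -/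
open scoped Classical

namespace CHHD

open SimpleGraph

variable {V : Type*} (G : SimpleGraph V) (k : ℕ)

/-- Witness property: every walk from `x` to `y` of length at most `k` uses the edge `s(u,c)`. -/
def Wit (u c x y : V) : Prop :=
  ∀ W : G.Walk x y, W.length ≤ k → s(u, c) ∈ W.edges

/-- A "distance-2 claim": `z` is a vertex behind `u` on a witness path for the edge `uc`. -/
def SC (u c z : V) : Prop :=
  G.Adj u c ∧ G.Adj z u ∧ ¬ G.Adj z c ∧ z ≠ c ∧
    ∃ (x y : V) (Wa : G.Walk x z) (W2 : G.Walk c y),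
      s(u, c) ∉ Wa.edges ∧ s(u, c) ∉ W2.edges ∧
      Wa.length + 2 + W2.length ≤ k ∧ Wit G k u c x y

/-- A "distance-3 claim". -/
def SD (u c z : V) : Prop :=
  G.Adj u c ∧ ¬ G.Adj z u ∧ z ≠ u ∧ ¬ G.Adj z c ∧ z ≠ c ∧
    (∃ σ : V, G.Adj z σ ∧ G.Adj σ u) ∧
    ∃ (x y : V) (Wa : G.Walk x z) (W2 : G.Walk c y),
      s(u, c) ∉ Wa.edges ∧ s(u, c) ∉ W2.edges ∧
      Wa.length + 3 + W2.length ≤ k ∧ Wit G k u c x y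

variable {G k}

lemma Wit.contra {u c x y : V} (hw : Wit G k u c x y) (W : G.Walk x y)
    (hW : W.length ≤ k) (he : s(u, c) ∉ W.edges) : False :=
  he (hw W hW)

lemma sym2_ne {a b u c : V} (h1 : ¬(a = u ∧ b = c)) (h2 : ¬(a = c ∧ b = u)) :
    s(a, b) ≠ s(u, c) := by
  rw [Ne, Sym2.eq_iff]; tauto

/-- From an `SC` claim, the common neighbour of `z` and `c` is unique (it is `u`). -/
lemma SC.unique_mid {u c z : V} (h : SC G k u c z) {m : V}
    (h1 : G.Adj z m) (h2 : G.Adj m c) : m = u := by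
  obtain ⟨huc, hzu, hzc, hzc', x, y, Wa, W2, ha, hb, hlen, hwit⟩ := h
  by_contra hmu
  have hznu : z ≠ u := fun h => G.irrefl (h ▸ hzu)
  refine hwit.contra (Wa.append ((Walk.cons h1 (Walk.cons h2 W2)))) ?_ ?_
  · simp only [Walk.length_append, Walk.length_cons]; omega
  · simp only [Walk.edges_append, Walk.edges_cons, List.mem_append, List.mem_cons]
    push_neg
    refine ⟨ha, ?_, ?_, hb⟩
    · exact sym2_ne (fun h => hznu h.1.symm) (fun h => hzc' h.2.symm)
    · exact sym2_ne (fun h => hmu h.1.symm) (fun h => G.irrefl (h.1 ▸ huc))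

/-- From an `SD` claim, `z` and `c` have no common neighbour. -/
lemma SD.no_mid {u c z : V} (h : SD G k u c z) {m : V}
    (h1 : G.Adj z m) (h2 : G.Adj m c) : False := by
  obtain ⟨huc, hzu, hzu', hzc, hzc', -, x, y, Wa, W2, ha, hb, hlen, hwit⟩ := h
  refine hwit.contra (Wa.append ((Walk.cons h1 (Walk.cons h2 W2)))) ?_ ?_
  · simp only [Walk.length_append, Walk.length_cons]; omega
  · simp only [Walk.edges_append, Walk.edges_cons, List.mem_append, List.mem_cons]
    push_neg
    refine ⟨ha, ?_, ?_, hb⟩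
    · exact sym2_ne (fun h => hzu' h.1.symm) (fun h => hzc' h.2.symm)
    · exact sym2_ne (fun h => hzu (h.1.symm ▸ h1)) (fun h => G.irrefl (h.1 ▸ huc))

/-- From an `SD` claim, a vertex `q` adjacent to `c` at distance two from `z` must be `u`. -/
lemma SD.unique_q {u c z : V} (h : SD G k u c z) {q m : V}
    (hqc : G.Adj q c) (h1 : G.Adj z m) (h2 : G.Adj m q) : q = u := by
  obtain ⟨huc, hzu, hzu', hzc, hzc', -, x, y, Wa, W2, ha, hb, hlen, hwit⟩ := h
  by_contra hqu
  refine hwit.contra (Wa.append ((Walk.cons h1 (Walk.cons h2 (Walk.cons hqc W2))))) ?_ ?_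
  · simp only [Walk.length_append, Walk.length_cons]; omega
  · simp only [Walk.edges_append, Walk.edges_cons, List.mem_append, List.mem_cons]
    push_neg
    refine ⟨ha, ?_, ?_, ?_, hb⟩
    · exact sym2_ne (fun h => hzu' h.1.symm) (fun h => hzc' h.2.symm)
    · exact sym2_ne (fun h => G.irrefl (h.2 ▸ hqc)) (fun h => hqu h.1.symm)
    · exact sym2_ne (fun h => hqu h.1.symm) (fun h => G.irrefl (h.1 ▸ huc))

/-- validity: the `z` of an `SC` claim is not adjacent to (and differs from) any apex `w`. -/
lemma SC.valid {u c z w : V} (h : SC G k u c z) (hw1 : G.Adj u w) (hw2 : G.Adj c w) :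
    ¬ G.Adj w z ∧ w ≠ z := by
  obtain ⟨huc, hzu, hzc, hzc', x, y, Wa, W2, ha, hb, hlen, hwit⟩ := h
  have hwu : w ≠ u := fun h => G.irrefl (h ▸ hw1)
  have hne : w ≠ z := by rintro rfl; exact hzc hw2.symm
  refine ⟨fun hadj => ?_, hne⟩
  refine hwit.contra (Wa.append ((Walk.cons hadj.symm (Walk.cons hw2.symm W2)))) ?_ ?_
  · simp only [Walk.length_append, Walk.length_cons]; omega
  · simp only [Walk.edges_append, Walk.edges_cons, List.mem_append, List.mem_cons]
    push_neg
    refine ⟨ha, ?_, ?_, hb⟩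
    · exact sym2_ne (fun h => G.irrefl (h.2 ▸ hw2)) (fun h => hzc' h.2.symm)
    · exact sym2_ne (fun h => hwu h.1.symm) (fun h => G.irrefl (h.1 ▸ huc))

/-- validity for `SD` claims. -/
lemma SD.valid {u c z w : V} (h : SD G k u c z) (hw1 : G.Adj u w) (hw2 : G.Adj c w) :
    ¬ G.Adj w z ∧ w ≠ z := by
  obtain ⟨huc, hzu, hzu', hzc, hzc', -, x, y, Wa, W2, ha, hb, hlen, hwit⟩ := h
  have hwu : w ≠ u := fun h => G.irrefl (h ▸ hw1)
  have hne : w ≠ z := by rintro rfl; exact hzc hw2.symm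
  refine ⟨fun hadj => ?_, hne⟩
  refine hwit.contra (Wa.append ((Walk.cons hadj.symm (Walk.cons hw2.symm W2)))) ?_ ?_
  · simp only [Walk.length_append, Walk.length_cons]; omega
  · simp only [Walk.edges_append, Walk.edges_cons, List.mem_append, List.mem_cons]
    push_neg
    refine ⟨ha, ?_, ?_, hb⟩
    · exact sym2_ne (fun h => G.irrefl (h.2 ▸ hw2)) (fun h => hzc' h.2.symm)
    · exact sym2_ne (fun h => hwu h.1.symm) (fun h => G.irrefl (h.1 ▸ huc))

/-- An `SC` and an `SD` claim can never coexist at the same `(c, z)`. -/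
lemma SC.not_SD {u u' c z : V} (h : SC G k u c z) (h' : SD G k u' c z) : False :=
  h'.no_mid h.2.1 h.1


/-- Symmetry of the witness property. -/
lemma Wit.symm {u c x y : V} (h : Wit G k u c x y) : Wit G k c u y x := by
  intro W hW
  have h2 := h W.reverse (by rwa [SimpleGraph.Walk.length_reverse])
  rw [SimpleGraph.Walk.edges_reverse, List.mem_reverse] at h2
  rwa [Sym2.eq_swap]

/-- Split a walk with no duplicate edges at an edge it contains. -/
lemma split {u v p q : V} (P : G.Walk p q) (hP : P.edges.Nodup) (he : s(u, v) ∈ P.edges) :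
    (∃ (P₁ : G.Walk p u) (P₂ : G.Walk v q), P₁.length + 1 + P₂.length = P.length ∧
      s(u, v) ∉ P₁.edges ∧ s(u, v) ∉ P₂.edges) ∨
    (∃ (P₁ : G.Walk p v) (P₂ : G.Walk u q), P₁.length + 1 + P₂.length = P.length ∧
      s(u, v) ∉ P₁.edges ∧ s(u, v) ∉ P₂.edges) := by
  induction P with
  | nil => simp at he
  | @cons a b q' hadj P' ih =>
    rw [SimpleGraph.Walk.edges_cons, List.nodup_cons] at hP
    by_cases heq : s(u, v) = s(a, b)
    · rw [Sym2.eq_iff] at heq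
      rcases heq with ⟨rfl, rfl⟩ | ⟨rfl, rfl⟩
      · left
        exact ⟨Walk.nil, P', by simp; omega, by simp, hP.1⟩
      · right
        exact ⟨Walk.nil, P', by simp; omega, by simp, fun hx => hP.1 (by rwa [Sym2.eq_swap] at hx)⟩
    · have hmem : s(u, v) ∈ P'.edges := by
        rcases (by simpa using he : s(u,v) = s(a,b) ∨ s(u,v) ∈ P'.edges) with h | h
        · exact absurd h heq
        · exact h
      rcases ih hP.2 hmem with ⟨P₁, P₂, h1, h2, h3⟩ | ⟨P₁, P₂, h1, h2, h3⟩
      · left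
        refine ⟨Walk.cons hadj P₁, P₂, by simp [Walk.length_cons]; omega, ?_, h3⟩
        simp only [Walk.edges_cons, List.mem_cons]
        rintro (h | h)
        · exact heq h
        · exact h2 h
      · right
        refine ⟨Walk.cons hadj P₁, P₂, by simp [Walk.length_cons]; omega, ?_, h3⟩
        simp only [Walk.edges_cons, List.mem_cons]
        rintro (h | h)
        · exact heq h
        · exact h2 h

/-- Produce an `SC` claim from a witness package (the `τ` construction). -/
lemma half {uu vv x y : V} (huv : G.Adj uu vv) (P₁ : G.Walk x uu) (P₂ : G.Walk vv y)
    (he₁ : s(uu, vv) ∉ P₁.edges) (he₂ : s(uu, vv) ∉ P₂.edges)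
    (hlen : P₁.length + 1 + P₂.length ≤ k) (hwit : Wit G k uu vv x y)
    (hb : P₂.length ≠ 0) : ∃ z, SC G k vv uu z := by
  cases P₂ with
  | nil => simp at hb
  | @cons _ τ _ ha P₂' =>
    have hP2e : s(uu, vv) ∉ P₂'.edges := fun h => he₂ (by simp [Walk.edges_cons, h])
    rw [Walk.length_cons] at hlen
    have hτvv : τ ≠ vv := fun h => G.irrefl (h ▸ ha)
    have hτuu : τ ≠ uu := by
      rintro rfl
      refine hwit.contra (P₁.append P₂') ?_ ?_
      · rw [Walk.length_append]; omega
      · simp only [Walk.edges_append, List.mem_append]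
        rintro (h | h)
        · exact he₁ h
        · exact hP2e h
    have hnadj : ¬ G.Adj uu τ := by
      intro hadj2
      refine hwit.contra (P₁.append (Walk.cons hadj2 P₂')) ?_ ?_
      · simp only [Walk.length_append, Walk.length_cons]; omega
      · simp only [Walk.edges_append, Walk.edges_cons, List.mem_append, List.mem_cons]
        push_neg
        refine ⟨he₁, ?_, hP2e⟩
        exact sym2_ne (fun h => hτvv h.2.symm) (fun h => hτuu h.1.symm)
    refine ⟨τ, huv.symm, ha.symm, fun h => hnadj h.symm, hτuu, y, x,
      P₂'.reverse, P₁.reverse, ?_, ?_, ?_, hwit.symm⟩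
    · rw [Sym2.eq_swap (a := vv)]
      rw [Walk.edges_reverse, List.mem_reverse]; exact hP2e
    · rw [Sym2.eq_swap (a := vv)]
      rw [Walk.edges_reverse, List.mem_reverse]; exact he₁
    · rw [Walk.length_reverse, Walk.length_reverse]; omega

/-- Produce an `SD` claim from a witness package (the `τ'` construction);
this needs an apex `w` and that the second part has length at least two. -/
lemma half2 {uu vv w x y : V} (huv : G.Adj uu vv) (hw1 : G.Adj uu w) (hw2 : G.Adj vv w)
    (P₁ : G.Walk x uu) (P₂ : G.Walk vv y)
    (he₁ : s(uu, vv) ∉ P₁.edges) (he₂ : s(uu, vv) ∉ P₂.edges)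
    (hlen : P₁.length + 1 + P₂.length ≤ k) (hwit : Wit G k uu vv x y)
    (hb : 2 ≤ P₂.length) : ∃ z, SD G k vv uu z := by
  cases P₂ with
  | nil => simp at hb
  | @cons _ τ _ ha P₂' =>
    cases P₂' with
    | nil => simp [Walk.length_cons] at hb
    | @cons _ τ' _ ha' P₂'' =>
      have hP2e : s(uu, vv) ∉ P₂''.edges := fun h =>
        he₂ (by simp [Walk.edges_cons, h])
      rw [Walk.length_cons, Walk.length_cons] at hlen
      have huuvv : uu ≠ vv := G.ne_of_adj huv
      have hwvv : w ≠ vv := fun h => G.irrefl (h ▸ hw2)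
      have hwuu : w ≠ uu := fun h => G.irrefl (h ▸ hw1)
      have hτ'uu : τ' ≠ uu := by
        rintro rfl
        refine hwit.contra (P₁.append P₂'') ?_ ?_
        · rw [Walk.length_append]; omega
        · simp only [Walk.edges_append, List.mem_append]
          rintro (h | h)
          · exact he₁ h
          · exact hP2e h
      have hτ'vv : τ' ≠ vv := by
        rintro rfl
        refine hwit.contra (P₁.append (Walk.cons hw1 (Walk.cons hw2.symm P₂''))) ?_ ?_
        · simp only [Walk.length_append, Walk.length_cons]; omega
        · simp only [Walk.edges_append, Walk.edges_cons, List.mem_append, List.mem_cons]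
          push_neg
          refine ⟨he₁, ?_, ?_, hP2e⟩
          · exact sym2_ne (fun h => hwvv h.2.symm) (fun h => hwuu h.1.symm)
          · exact sym2_ne (fun h => hwuu h.1.symm) (fun h => huuvv h.1)
      have hnadjvv : ¬ G.Adj vv τ' := by
        intro hadj2
        refine hwit.contra
          (P₁.append (Walk.cons hw1 (Walk.cons hw2.symm (Walk.cons hadj2 P₂'')))) ?_ ?_
        · simp only [Walk.length_append, Walk.length_cons]; omega
        · simp only [Walk.edges_append, Walk.edges_cons, List.mem_append, List.mem_cons]
          push_neg
          refine ⟨he₁, ?_, ?_, ?_, hP2e⟩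
          · exact sym2_ne (fun h => hwvv h.2.symm) (fun h => hwuu h.1.symm)
          · exact sym2_ne (fun h => hwuu h.1.symm) (fun h => huuvv h.1)
          · exact sym2_ne (fun h => huuvv h.1) (fun h => hτ'uu h.1.symm)
      have hnadjuu : ¬ G.Adj uu τ' := by
        intro hadj2
        refine hwit.contra (P₁.append (Walk.cons hadj2 P₂'')) ?_ ?_
        · simp only [Walk.length_append, Walk.length_cons]; omega
        · simp only [Walk.edges_append, Walk.edges_cons, List.mem_append, List.mem_cons]
          push_neg
          refine ⟨he₁, ?_, hP2e⟩
          exact sym2_ne (fun h => hτ'vv h.2.symm) (fun h => hτ'uu h.1.symm)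
      refine ⟨τ', huv.symm, fun h => hnadjvv h.symm, hτ'vv, fun h => hnadjuu h.symm, hτ'uu,
        ⟨τ, ha'.symm, ha.symm⟩, y, x, P₂''.reverse, P₁.reverse, ?_, ?_, ?_, hwit.symm⟩
      · rw [Sym2.eq_swap (a := vv)]
        rw [Walk.edges_reverse, List.mem_reverse]; exact hP2e
      · rw [Sym2.eq_swap (a := vv)]
        rw [Walk.edges_reverse, List.mem_reverse]; exact he₁
      · rw [Walk.length_reverse, Walk.length_reverse]; omega


variable (G k)

/-- `z` is a valid stamp attached at endpoint `c` of the edge `e`. -/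
def Sl (e : Sym2 V) (c z : V) : Prop :=
  ∃ u', e = s(u', c) ∧ (SC G k u' c z ∨ SD G k u' c z)

/-- Each critical edge carries two distinct attached stamps. -/
def Q (e : Sym2 V) : Prop :=
  ∃ p₁ p₂ : V × V, Sl G k e p₁.1 p₁.2 ∧ Sl G k e p₂.1 p₂.2 ∧ p₁ ≠ p₂

variable {G k}

/-- The two-slot existence lemma, from a witness package. -/
lemma pair_of_package {uu vv w x y : V} (huv : G.Adj uu vv)
    (hw1 : G.Adj uu w) (hw2 : G.Adj vv w)
    (P₁ : G.Walk x uu) (P₂ : G.Walk vv y)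
    (he₁ : s(uu, vv) ∉ P₁.edges) (he₂ : s(uu, vv) ∉ P₂.edges)
    (hlen : P₁.length + 1 + P₂.length ≤ k) (hwit : Wit G k uu vv x y)
    (hk : 3 ≤ k) : Q G k s(uu, vv) := by
  have hss : s(uu, vv) = s(vv, uu) := Sym2.eq_swap
  have hrev₁ : s(vv, uu) ∉ P₂.reverse.edges := by
    rw [Walk.edges_reverse, List.mem_reverse, ← hss]; exact he₂
  have hrev₂ : s(vv, uu) ∉ P₁.reverse.edges := by
    rw [Walk.edges_reverse, List.mem_reverse, ← hss]; exact he₁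
  have hrevlen : P₂.reverse.length + 1 + P₁.reverse.length ≤ k := by
    rw [Walk.length_reverse, Walk.length_reverse]; omega
  have hrevwit : Wit G k vv uu y x := hwit.symm
  by_cases hb : P₂.length = 0
  · -- y = vv ; the `a`-side is long, use σ and σ' on the reversed package
    have hyvv : vv = y := (Walk.eq_of_length_eq_zero (by omega : P₂.length = 0)).symm ▸ rfl
    have hlong : k < P₁.length + 2 := by
      by_contra hsh
      push_neg at hsh
      refine hwit.contra (P₁.append (Walk.cons hw1 (Walk.cons hw2.symm P₂))) ?_ ?_
      · simp only [Walk.length_append, Walk.length_cons]; omega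
      · simp only [Walk.edges_append, Walk.edges_cons, List.mem_append, List.mem_cons]
        push_neg
        refine ⟨he₁, ?_, ?_, he₂⟩
        · exact sym2_ne (fun h => (fun hh => G.irrefl (hh ▸ hw2)) h.2.symm)
            (fun h => (fun hh => G.irrefl (hh ▸ hw1)) h.1.symm)
        · exact sym2_ne (fun h => (fun hh => G.irrefl (hh ▸ hw1)) h.1.symm)
            (fun h => (G.ne_of_adj huv) h.1)
    obtain ⟨z₁, hz₁⟩ := half huv.symm P₂.reverse P₁.reverse hrev₁ hrev₂ hrevlen hrevwit
      (by rw [Walk.length_reverse]; omega)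
    obtain ⟨z₂, hz₂⟩ := half2 huv.symm hw2 hw1 P₂.reverse P₁.reverse hrev₁ hrev₂ hrevlen
      hrevwit (by rw [Walk.length_reverse]; omega)
    refine ⟨(vv, z₁), (vv, z₂), ⟨uu, rfl, Or.inl hz₁⟩, ⟨uu, rfl, Or.inr hz₂⟩, ?_⟩
    simp only [Prod.mk.injEq, ne_eq, not_and]
    intro _ hz
    exact hz₁.not_SD (hz ▸ hz₂)
  · by_cases ha : P₁.length = 0
    · -- x = uu ; the `b`-side is long, use τ and τ' directly
      have hlong : k < P₂.length + 2 := by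
        by_contra hsh
        push_neg at hsh
        refine hwit.contra (P₁.append (Walk.cons hw1 (Walk.cons hw2.symm P₂))) ?_ ?_
        · simp only [Walk.length_append, Walk.length_cons]; omega
        · simp only [Walk.edges_append, Walk.edges_cons, List.mem_append, List.mem_cons]
          push_neg
          refine ⟨he₁, ?_, ?_, he₂⟩
          · exact sym2_ne (fun h => (fun hh => G.irrefl (hh ▸ hw2)) h.2.symm)
              (fun h => (fun hh => G.irrefl (hh ▸ hw1)) h.1.symm)
          · exact sym2_ne (fun h => (fun hh => G.irrefl (hh ▸ hw1)) h.1.symm)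
              (fun h => (G.ne_of_adj huv) h.1)
      obtain ⟨z₁, hz₁⟩ := half huv P₁ P₂ he₁ he₂ hlen hwit hb
      obtain ⟨z₂, hz₂⟩ := half2 huv hw1 hw2 P₁ P₂ he₁ he₂ hlen hwit (by omega)
      refine ⟨(uu, z₁), (uu, z₂), ⟨vv, hss, Or.inl hz₁⟩, ⟨vv, hss, Or.inr hz₂⟩, ?_⟩
      simp only [Prod.mk.injEq, ne_eq, not_and]
      intro _ hz
      exact hz₁.not_SD (hz ▸ hz₂)
    · -- generic case : τ directly and σ from the reversed package
      obtain ⟨z₁, hz₁⟩ := half huv P₁ P₂ he₁ he₂ hlen hwit hb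
      obtain ⟨z₂, hz₂⟩ := half huv.symm P₂.reverse P₁.reverse hrev₁ hrev₂ hrevlen hrevwit
        (by rw [Walk.length_reverse]; omega)
      refine ⟨(uu, z₁), (vv, z₂), ⟨vv, hss, Or.inl hz₁⟩, ⟨uu, rfl, Or.inl hz₂⟩, ?_⟩
      simp only [Prod.mk.injEq, ne_eq, not_and]
      intro h
      exact absurd h (G.ne_of_adj huv)

/-- Every edge having an apex satisfies `Q`, in a diameter-critical graph. -/
lemma edge_Q (hk : 3 ≤ k) (hdiam : G.ediam = k)
    (hcrit : ∀ e ∈ G.edgeSet, G.ediam < (G.deleteEdges {e}).ediam)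
    {u v w : V} (huv : G.Adj u v) (hw1 : G.Adj u w) (hw2 : G.Adj v w) :
    Q G k s(u, v) := by
  have he : s(u, v) ∈ G.edgeSet := huv
  have hgt : (k : ℕ∞) < (G.deleteEdges {s(u, v)}).ediam := hdiam ▸ hcrit _ he
  rw [SimpleGraph.ediam, lt_iSup_iff] at hgt
  obtain ⟨x, hgt⟩ := hgt
  rw [SimpleGraph.eccent, lt_iSup_iff] at hgt
  obtain ⟨y, hgt⟩ := hgt
  -- witness property
  have hwit : Wit G k u v x y := by
    intro W hW
    by_contra hmem
    have hW' := (W.toDeleteEdges {s(u, v)} (by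
      intro e' he'
      simp only [Set.mem_singleton_iff]
      rintro rfl
      exact hmem he')).edist_le
    rw [Walk.length_transfer] at hW'
    exact absurd (hW'.trans (by exact_mod_cast hW)) (not_le_of_gt hgt)
  -- a short walk exists in G
  have hle : G.edist x y ≤ (k : ℕ∞) := hdiam ▸ G.edist_le_ediam
  have hne : G.edist x y ≠ ⊤ := by
    intro h
    rw [h, top_le_iff] at hle
    exact ENat.coe_ne_top k hle
  obtain ⟨W₀, hW₀⟩ := G.exists_walk_of_edist_ne_top hne
  have hW₀k : W₀.length ≤ k := by
    rw [← hW₀] at hle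
    exact_mod_cast hle
  set P := W₀.bypass with hPdef
  have hPk : P.length ≤ k := (Walk.length_bypass_le _).trans hW₀k
  have hPpath : P.IsPath := Walk.bypass_isPath _
  have hmem : s(u, v) ∈ P.edges := hwit P hPk
  rcases split P hPpath.edges_nodup hmem with ⟨P₁, P₂, hl, h1, h2⟩ | ⟨P₁, P₂, hl, h1, h2⟩
  · exact pair_of_package huv hw1 hw2 P₁ P₂ h1 h2 (by omega) hwit hk
  · have hwit' : Wit G k v u x y := by
      intro W hW
      rw [Sym2.eq_swap (a := v)]
      exact hwit W hW
    have hQ := pair_of_package huv.symm hw2 hw1 P₁ P₂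
      (by rwa [Sym2.eq_swap (a := v)]) (by rwa [Sym2.eq_swap (a := v)]) (by omega) hwit' hk
    rwa [Sym2.eq_swap (a := v)] at hQ

/-- seat uniqueness -/
lemma seat_unique {c z u₁ u₂ : V}
    (h₁ : SC G k u₁ c z ∨ SD G k u₁ c z) (h₂ : SC G k u₂ c z ∨ SD G k u₂ c z) : u₁ = u₂ := by
  rcases h₁ with h₁ | h₁ <;> rcases h₂ with h₂ | h₂
  · exact (h₁.unique_mid h₂.2.1 h₂.1).symm
  · exact absurd (h₁.not_SD h₂) id
  · exact absurd (h₂.not_SD h₁) id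
  · obtain ⟨σ, hσ1, hσ2⟩ := h₂.2.2.2.2.2.1
    exact (h₁.unique_q h₂.1 hσ1 hσ2).symm


variable (G k)

/-- Chosen pair of slots for an edge (junk value if `Q` fails; `w` serves as inhabitant). -/
noncomputable def pick (e : Sym2 V) (w : V) : (V × V) × (V × V) :=
  if h : Q G k e then ⟨h.choose, h.choose_spec.choose⟩ else ((w, w), (w, w))

lemma pick_spec {e : Sym2 V} (w : V) (h : Q G k e) :
    Sl G k e (pick G k e w).1.1 (pick G k e w).1.2 ∧
    Sl G k e (pick G k e w).2.1 (pick G k e w).2.2 ∧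
    (pick G k e w).1 ≠ (pick G k e w).2 := by
  rw [pick, dif_pos h]
  exact ⟨h.choose_spec.choose_spec.1, h.choose_spec.choose_spec.2.1,
    h.choose_spec.choose_spec.2.2⟩

variable {G k}

/-- unpack an `Sl` at an explicit edge `s(u,v)`. -/
lemma Sl.unpack {u v c z : V} (h : Sl G k s(u, v) c z) :
    ∃ u', s(u, v) = s(u', c) ∧ (u' = u ∧ c = v ∨ u' = v ∧ c = u) ∧
      (SC G k u' c z ∨ SD G k u' c z) := by
  obtain ⟨u', he, hcl⟩ := h
  refine ⟨u', he, ?_, hcl⟩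
  rw [Sym2.eq_iff] at he
  tauto

lemma claim_not_adj₁ {u' c z : V} (h : SC G k u' c z ∨ SD G k u' c z) : ¬ G.Adj c z := by
  rcases h with h | h
  · exact fun hx => h.2.2.1 hx.symm
  · exact fun hx => h.2.2.2.1 hx.symm

lemma claim_valid {u' c z w : V} (h : SC G k u' c z ∨ SD G k u' c z)
    (hw1 : G.Adj u' w) (hw2 : G.Adj c w) : ¬ G.Adj w z := by
  rcases h with h | h
  · exact (h.valid hw1 hw2).1
  · exact (h.valid hw1 hw2).1

end CHHD


open CHHD in
theorem caccetta_haggkvist_higher_diameter {V : Type*} [Fintype V] (G : SimpleGraph V)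
    (k : ℕ) (hk : 3 ≤ k) (hdiam : G.ediam = k)
    (hcrit : ∀ e ∈ G.edgeSet, G.ediam < (G.deleteEdges {e}).ediam)
    (n m : ℕ) (hn : n = Fintype.card V) (hm : m = G.edgeFinset.card) :
    ∑ v : V, (G.degree v) ^ 2 ≤ n * m := by
  classical
  letI : LinearOrder V := LinearOrder.lift' (Fintype.equivFin V) (Fintype.equivFin V).injective
  set B : Finset (V × V) := Finset.univ.filter (fun p : V × V => G.Adj p.1 p.2) with hB
  set Dt : Finset ((_ : V × V) × V) :=
    B.sigma (fun p => Finset.univ.filter fun w => G.Adj p.1 w ∧ G.Adj p.2 w) with hDt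
  set St : Finset ((_ : V × V) × V) :=
    B.sigma (fun p => Finset.univ.filter fun z => ¬ G.Adj p.1 z ∧ ¬ G.Adj p.2 z) with hSt
  -- the injection
  set F : ((_ : V × V) × V) → ((_ : V × V) × V) := fun t =>
    if t.1.1 ≤ t.1.2
      then ⟨((pick G k s(t.1.1, t.1.2) t.2).1.1, t.2), (pick G k s(t.1.1, t.1.2) t.2).1.2⟩
      else ⟨((pick G k s(t.1.1, t.1.2) t.2).2.1, t.2), (pick G k s(t.1.1, t.1.2) t.2).2.2⟩
    with hF
  have memDt : ∀ t ∈ Dt, G.Adj t.1.1 t.1.2 ∧ G.Adj t.1.1 t.2 ∧ G.Adj t.1.2 t.2 := by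
    intro t ht
    rw [hDt, Finset.mem_sigma, hB, Finset.mem_filter] at ht
    obtain ⟨⟨-, h1⟩, h2⟩ := ht
    rw [Finset.mem_filter] at h2
    exact ⟨h1, h2.2.1, h2.2.2⟩
  have hQall : ∀ t ∈ Dt, Q G k s(t.1.1, t.1.2) := by
    intro t ht
    obtain ⟨h1, h2, h3⟩ := memDt t ht
    exact edge_Q hk hdiam hcrit h1 h2 h3
  -- the chosen slot of a designation satisfies `Sl` and belongs to `St`
  have keyF : ∀ t ∈ Dt, Sl G k s(t.1.1, t.1.2) (F t).1.1 (F t).2 ∧ (F t).1.2 = t.2 := by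
    intro t ht
    obtain ⟨hsl1, hsl2, -⟩ := pick_spec G k t.2 (hQall t ht)
    simp only [hF]
    by_cases hc : t.1.1 ≤ t.1.2
    · rw [if_pos hc]; exact ⟨hsl1, rfl⟩
    · rw [if_neg hc]; exact ⟨hsl2, rfl⟩
  have hmaps : ∀ t ∈ Dt, F t ∈ St := by
    intro t ht
    obtain ⟨h1, h2, h3⟩ := memDt t ht
    obtain ⟨hsl, hw⟩ := keyF t ht
    obtain ⟨u', he, hcase, hcl⟩ := hsl.unpack
    rw [hSt, Finset.mem_sigma, hB, Finset.mem_filter, Finset.mem_filter]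
    have hadj_cw : G.Adj (F t).1.1 t.2 := by
      rcases hcase with ⟨-, hcv⟩ | ⟨-, hcv⟩
      · rw [hcv]; exact h3
      · rw [hcv]; exact h2
    have hadj_uw : G.Adj u' t.2 := by
      rcases hcase with ⟨hu, -⟩ | ⟨hu, -⟩
      · rw [hu]; exact h2
      · rw [hu]; exact h3
    refine ⟨⟨Finset.mem_univ _, ?_⟩, Finset.mem_univ _, ?_, ?_⟩
    · rw [hw]; exact hadj_cw
    · exact claim_not_adj₁ hcl
    · rw [hw]; exact claim_valid hcl hadj_uw hadj_cw
  have hinj : Set.InjOn F ↑Dt := by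
    intro t₁ ht₁ t₂ ht₂ heq
    obtain ⟨ha1, -, -⟩ := memDt t₁ (by exact_mod_cast ht₁)
    obtain ⟨ha2, -, -⟩ := memDt t₂ (by exact_mod_cast ht₂)
    obtain ⟨hsl1, hw1⟩ := keyF t₁ (by exact_mod_cast ht₁)
    obtain ⟨hsl2, hw2⟩ := keyF t₂ (by exact_mod_cast ht₂)
    -- same apex
    have hwe : t₁.2 = t₂.2 := by rw [← hw1, ← hw2, heq]
    obtain ⟨u₁', he1, hc1, hcl1⟩ := hsl1.unpack
    obtain ⟨u₂', he2, hc2, hcl2⟩ := hsl2.unpack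
    have hcz1 : (F t₁).1.1 = (F t₂).1.1 := by rw [heq]
    have hcz2 : (F t₁).2 = (F t₂).2 := by rw [heq]
    have huu : u₁' = u₂' := by
      apply seat_unique hcl1
      rw [hcz1, hcz2]
      exact hcl2
    have hedge : s(t₁.1.1, t₁.1.2) = s(t₂.1.1, t₂.1.2) := by
      rw [he1, he2, huu, hcz1]
    rw [Sym2.eq_iff] at hedge
    rcases hedge with ⟨hx, hy⟩ | ⟨hx, hy⟩
    · -- same ordered pair
      have h' : t₁.1 = t₂.1 := Prod.ext hx hy
      exact Sigma.ext h' (heq_of_eq hwe)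
    · -- swapped pair : contradiction with the two slots being distinct
      exfalso
      have hne12 : t₁.1.1 ≠ t₁.1.2 := G.ne_of_adj ha1
      have hpick : pick G k s(t₁.1.1, t₁.1.2) t₁.2 = pick G k s(t₂.1.1, t₂.1.2) t₂.2 := by
        rw [← hx, ← hy, hwe, Sym2.eq_swap]
      obtain ⟨-, -, hnep⟩ := pick_spec G k t₁.2 (hQall t₁ (by exact_mod_cast ht₁))
      set p := pick G k s(t₁.1.1, t₁.1.2) t₁.2 with hp
      simp only [hF] at heq
      by_cases hc1' : t₁.1.1 ≤ t₁.1.2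
      · have hc2' : ¬ t₂.1.1 ≤ t₂.1.2 := by
          rw [← hx, ← hy]
          intro hcon
          exact hne12 (le_antisymm hc1' hcon)
        rw [if_pos hc1', if_neg hc2', ← hpick, ← hp] at heq
        apply hnep
        have e1 := congrArg (fun q => q.1.1) heq
        have e2 := congrArg (fun q => q.2) heq
        simp only at e1 e2
        exact Prod.ext e1 e2
      · have hc2' : t₂.1.1 ≤ t₂.1.2 := by
          rw [← hx, ← hy]
          exact le_of_not_ge hc1'
        rw [if_neg hc1', if_pos hc2', ← hpick, ← hp] at heq
        apply hnep
        have e1 := congrArg (fun q => q.1.1) heq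
        have e2 := congrArg (fun q => q.2) heq
        simp only at e1 e2
        exact (Prod.ext e1.symm e2.symm)
  have hcard : Dt.card ≤ St.card := Finset.card_le_card_of_injOn F hmaps hinj
  -- counting
  have hDtcard : Dt.card = ∑ p ∈ B, (Finset.univ.filter fun w => G.Adj p.1 w ∧ G.Adj p.2 w).card :=
    Finset.card_sigma _ _
  have hStcard : St.card = ∑ p ∈ B,
      (Finset.univ.filter fun z => ¬ G.Adj p.1 z ∧ ¬ G.Adj p.2 z).card :=
    Finset.card_sigma _ _
  -- per-pair identity
  have hpair : ∀ p : V × V,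
      G.degree p.1 + G.degree p.2 +
        (Finset.univ.filter fun z => ¬ G.Adj p.1 z ∧ ¬ G.Adj p.2 z).card =
      Fintype.card V + (Finset.univ.filter fun w => G.Adj p.1 w ∧ G.Adj p.2 w).card := by
    intro p
    have hd1 : G.degree p.1 = ∑ z : V, if G.Adj p.1 z then 1 else 0 := by
      rw [← SimpleGraph.card_neighborFinset_eq_degree, SimpleGraph.neighborFinset_eq_filter,
        Finset.card_filter]
    have hd2 : G.degree p.2 = ∑ z : V, if G.Adj p.2 z then 1 else 0 := by
      rw [← SimpleGraph.card_neighborFinset_eq_degree, SimpleGraph.neighborFinset_eq_filter,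
        Finset.card_filter]
    have hcV : Fintype.card V = ∑ _z : V, 1 := by simp
    rw [hd1, hd2, Finset.card_filter, Finset.card_filter, hcV,
      ← Finset.sum_add_distrib, ← Finset.sum_add_distrib, ← Finset.sum_add_distrib]
    apply Finset.sum_congr rfl
    intro z _
    by_cases h1 : G.Adj p.1 z <;> by_cases h2 : G.Adj p.2 z <;> simp [h1, h2]
  have hsum : (∑ p ∈ B, (G.degree p.1 + G.degree p.2)) + St.card
      = Fintype.card V * B.card + Dt.card := by
    rw [hStcard, hDtcard, ← Finset.sum_add_distrib]
    rw [show Fintype.card V * B.card = ∑ _p ∈ B, Fintype.card V by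
      rw [Finset.sum_const, smul_eq_mul, mul_comm], ← Finset.sum_add_distrib]
    exact Finset.sum_congr rfl fun p _ => hpair p
  have hineq : (∑ p ∈ B, (G.degree p.1 + G.degree p.2)) ≤ Fintype.card V * B.card := by omega
  -- identify the sums
  have hBsum : ∀ f : V → ℕ, (∑ p ∈ B, f p.1) = ∑ v : V, (G.degree v) * f v := by
    intro f
    rw [hB, Finset.sum_filter, ← Finset.univ_product_univ, Finset.sum_product]
    dsimp only
    apply Finset.sum_congr rfl
    intro u _
    rw [← Finset.sum_filter, Finset.sum_const, ← SimpleGraph.neighborFinset_eq_filter,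
      SimpleGraph.card_neighborFinset_eq_degree, smul_eq_mul, mul_comm]
  have hBsum2 : (∑ p ∈ B, G.degree p.2) = ∑ v : V, (G.degree v) * G.degree v := by
    rw [hB, Finset.sum_filter, ← Finset.univ_product_univ, Finset.sum_product]
    dsimp only
    rw [Finset.sum_comm]
    apply Finset.sum_congr rfl
    intro v _
    rw [← Finset.sum_filter, Finset.sum_const_nat (m := G.degree v) (fun _ _ => rfl)]
    congr 1
    have hfe : Finset.filter (fun u => G.Adj u v) Finset.univ
        = Finset.filter (G.Adj v) Finset.univ :=
      Finset.filter_congr (fun x _ => by rw [G.adj_comm])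
    rw [hfe, ← SimpleGraph.neighborFinset_eq_filter, SimpleGraph.card_neighborFinset_eq_degree]
  have hBcard : B.card = 2 * m := by
    have := hBsum (fun _ => 1)
    rw [Finset.card_eq_sum_ones]
    rw [this]
    simp only [mul_one]
    rw [hm]
    exact G.sum_degrees_eq_twice_card_edges
  have hsplit : (∑ p ∈ B, (G.degree p.1 + G.degree p.2))
      = 2 * ∑ v : V, (G.degree v) ^ 2 := by
    rw [Finset.sum_add_distrib, hBsum (fun v => G.degree v), hBsum2]
    simp_rw [pow_two]
    omega
  rw [hsplit, hBcard] at hineq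
  rw [show Fintype.card V * (2 * m) = 2 * (Fintype.card V * m) from by ring] at hineq
  rw [← hn] at hineq
  omega
end

section
/- For k ≥ 2 and positive integers a, b, c, the graph formed by parts V₀,…,V_k with |V₀|=a, |V₁|=…=|V_{k−1}|=b, |V_k|=c, complete bipartite graphs between V₀,V₁ and between V_{k−1},V_k, and b vertex-disjoint paths from V₁ to V_{k−1} each meeting every Vᵢ (1 ≤ i ≤ k−1) in exactly one vertex, is a diameter-k-critical graph. -/
open scoped Classical

/-- Construction: parts `V₀, V₁, …, V_{k-1}, V_k` of sizes `a, b, …, b, c`, complete bipartite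
graphs between `V₀, V₁` and between `V_{k-1}, V_k`, and `b` vertex-disjoint paths from `V₁` to
`V_{k-1}`, each with exactly one vertex in every intermediate part.  The vertex `(j, i)` in the
middle component represents the `j`-th path's vertex in part `V_{i+1}`. -/
def constrK (k a b c : ℕ) : SimpleGraph (Fin a ⊕ ((Fin b × Fin (k - 1)) ⊕ Fin c)) where
  Adj x y :=
    match x, y with
    | .inl _, .inr (.inl (_, i)) => i.val = 0
    | .inr (.inl (_, i)), .inl _ => i.val = 0
    | .inr (.inl (j, i)), .inr (.inl (j', i')) =>
        j = j' ∧ (i.val + 1 = i'.val ∨ i'.val + 1 = i.val)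
    | .inr (.inl (_, i)), .inr (.inr _) => i.val = k - 2
    | .inr (.inr _), .inr (.inl (_, i)) => i.val = k - 2
    | _, _ => False
  symm := by
    constructor
    rintro (x | (⟨j, i⟩ | x)) (y | (⟨j', i'⟩ | y)) h <;> simp_all <;> tauto
  loopless := by
    constructor
    rintro (x | (⟨j, i⟩ | x)) h <;> simp_all

namespace ConstrKAux

open SimpleGraph

variable {k a b c : ℕ}

private lemma pot_le_edist {V : Type*} {G : SimpleGraph V} {f : V → ℤ}
    (hf : ∀ ⦃u v⦄, G.Adj u v → f v ≤ f u + 1) (u v : V) (n : ℕ)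
    (h : (n : ℤ) ≤ f v - f u) : (n : ℕ∞) ≤ G.edist u v := by
  have key : ∀ {x y : V} (w : G.Walk x y), f y - f x ≤ w.length := by
    intro x y w
    induction w with
    | nil => simp
    | cons h' p ih =>
      rw [SimpleGraph.Walk.length_cons]
      have := hf h'
      push_cast
      linarith
  rw [SimpleGraph.edist_eq_sInf]
  refine le_sInf ?_
  rintro x ⟨w, rfl⟩
  have h3 : n ≤ w.length := by exact_mod_cast le_trans h (key w)
  exact Nat.cast_le.mpr h3

private lemma adj_inl_mid (x : Fin a) (j : Fin b) (i : Fin (k-1)) (h : i.val = 0) :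
    (constrK k a b c).Adj (.inl x) (.inr (.inl (j, i))) := h

private lemma adj_mid_succ (j : Fin b) (i i' : Fin (k-1)) (h : i.val + 1 = i'.val) :
    (constrK k a b c).Adj (.inr (.inl (j, i))) (.inr (.inl (j, i'))) := ⟨rfl, Or.inl h⟩

private lemma adj_mid_inr (j : Fin b) (i : Fin (k-1)) (z : Fin c) (h : i.val = k - 2) :
    (constrK k a b c).Adj (.inr (.inl (j, i))) (.inr (.inr z)) := h

private lemma edist_mid_mid (j : Fin b) :
    ∀ (d : ℕ) (m n : Fin (k-1)), n.val = m.val + d →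
      (constrK k a b c).edist (.inr (.inl (j, m))) (.inr (.inl (j, n))) ≤ (d : ℕ∞) := by
  intro d
  induction d with
  | zero =>
    intro m n h
    have : m = n := Fin.ext (by omega)
    subst this
    simp [SimpleGraph.edist_self]
  | succ d ih =>
    intro m n h
    have hp : m.val + d < k - 1 := by have := n.isLt; omega
    have h1 := ih m ⟨m.val + d, hp⟩ rfl
    have h2 : (constrK k a b c).Adj (.inr (.inl (j, ⟨m.val + d, hp⟩))) (.inr (.inl (j, n))) :=
      adj_mid_succ j _ n (by simp; omega)
    calc (constrK k a b c).edist (.inr (.inl (j, m))) (.inr (.inl (j, n)))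
        ≤ _ + _ := SimpleGraph.edist_triangle (v := .inr (.inl (j, ⟨m.val + d, hp⟩)))
      _ ≤ (d : ℕ∞) + 1 := add_le_add h1 (SimpleGraph.edist_eq_one_iff_adj.mpr h2).le
      _ = ((d + 1 : ℕ) : ℕ∞) := by push_cast; ring

private lemma edist_inl_mid (hk : 2 ≤ k) (x : Fin a) (j : Fin b) (i : Fin (k-1)) :
    (constrK k a b c).edist (.inl x) (.inr (.inl (j, i))) ≤ ((i.val + 1 : ℕ) : ℕ∞) := by
  have h0 : (0:ℕ) < k - 1 := by omega
  have h1 : (constrK k a b c).Adj (.inl x) (.inr (.inl (j, ⟨0, h0⟩))) := adj_inl_mid x j _ rfl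
  have h2 := edist_mid_mid (a := a) (c := c) j i.val ⟨0, h0⟩ i (by simp)
  calc (constrK k a b c).edist (.inl x) (.inr (.inl (j, i)))
      ≤ _ + _ := SimpleGraph.edist_triangle (v := .inr (.inl (j, ⟨0, h0⟩)))
    _ ≤ 1 + (i.val : ℕ∞) := add_le_add (SimpleGraph.edist_eq_one_iff_adj.mpr h1).le h2
    _ = ((i.val + 1 : ℕ) : ℕ∞) := by push_cast; ring

private lemma edist_mid_inl (hk : 2 ≤ k) (x : Fin a) (j : Fin b) (i : Fin (k-1)) :
    (constrK k a b c).edist (.inr (.inl (j, i))) (.inl x) ≤ ((i.val + 1 : ℕ) : ℕ∞) := by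
  rw [SimpleGraph.edist_comm]; exact edist_inl_mid hk x j i

private lemma edist_mid_inr (hk : 2 ≤ k) (z : Fin c) (j : Fin b) (i : Fin (k-1)) :
    (constrK k a b c).edist (.inr (.inl (j, i))) (.inr (.inr z)) ≤ ((k - 1 - i.val : ℕ) : ℕ∞) := by
  have hl : k - 2 < k - 1 := by omega
  have hi := i.isLt
  have h1 := edist_mid_mid (a := a) (c := c) j (k - 2 - i.val) i ⟨k-2, hl⟩ (by simp; omega)
  have h2 : (constrK k a b c).Adj (.inr (.inl (j, ⟨k-2, hl⟩))) (.inr (.inr z)) :=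
    adj_mid_inr j _ z rfl
  calc (constrK k a b c).edist (.inr (.inl (j, i))) (.inr (.inr z))
      ≤ _ + _ := SimpleGraph.edist_triangle (v := .inr (.inl (j, ⟨k-2, hl⟩)))
    _ ≤ ((k - 2 - i.val : ℕ) : ℕ∞) + 1 :=
        add_le_add h1 (SimpleGraph.edist_eq_one_iff_adj.mpr h2).le
    _ = ((k - 1 - i.val : ℕ) : ℕ∞) := by
        rw [show (1 : ℕ∞) = ((1:ℕ) : ℕ∞) from rfl, ← Nat.cast_add]
        congr 1
        omega

private lemma edist_inr_mid (hk : 2 ≤ k) (z : Fin c) (j : Fin b) (i : Fin (k-1)) :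
    (constrK k a b c).edist (.inr (.inr z)) (.inr (.inl (j, i))) ≤ ((k - 1 - i.val : ℕ) : ℕ∞) := by
  rw [SimpleGraph.edist_comm]; exact edist_mid_inr hk z j i

private lemma ediam_le (hk : 2 ≤ k) (ha : 1 ≤ a) (hb : 1 ≤ b) (hc : 1 ≤ c) :
    (constrK k a b c).ediam ≤ (k : ℕ∞) := by
  have h0 : (0:ℕ) < k - 1 := by omega
  have hl : k - 2 < k - 1 := by omega
  refine SimpleGraph.ediam_le_of_edist_le ?_
  have cast_le : ∀ (m n : ℕ), m ≤ n → ((m:ℕ)+(n:ℕ) ≤ 2*n) → True := fun _ _ _ _ => trivial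
  rintro (x | (⟨j, i⟩ | z)) (y | (⟨j', i'⟩ | z'))
  · -- inl inl
    refine le_trans (SimpleGraph.edist_triangle (v := .inr (.inl (⟨0, hb⟩, ⟨0, h0⟩)))) ?_
    refine le_trans (add_le_add (edist_inl_mid hk x _ _) (edist_mid_inl hk y _ _)) ?_
    rw [← Nat.cast_add]
    exact Nat.cast_le.mpr (by show 0 + 1 + (0 + 1) ≤ k; omega)
  · -- inl mid
    refine le_trans (edist_inl_mid hk x j' i') (Nat.cast_le.mpr ?_)
    have := i'.isLt; omega
  · -- inl inr
    refine le_trans (SimpleGraph.edist_triangle (v := .inr (.inl (⟨0, hb⟩, ⟨k-2, hl⟩)))) ?_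
    refine le_trans (add_le_add (edist_inl_mid hk x _ _) (edist_mid_inr hk z' _ _)) ?_
    rw [← Nat.cast_add]
    exact Nat.cast_le.mpr (by show (k - 2) + 1 + (k - 1 - (k - 2)) ≤ k; omega)
  · -- mid inl
    refine le_trans (edist_mid_inl hk y j i) (Nat.cast_le.mpr ?_)
    have := i.isLt; omega
  · -- mid mid
    have hi := i.isLt
    have hi' := i'.isLt
    by_cases hcase : i.val + i'.val + 2 ≤ k
    · refine le_trans (SimpleGraph.edist_triangle (v := .inl ⟨0, ha⟩)) ?_
      refine le_trans (add_le_add (edist_mid_inl hk _ j i) (edist_inl_mid hk _ j' i')) ?_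
      rw [← Nat.cast_add]
      exact Nat.cast_le.mpr (by omega)
    · refine le_trans (SimpleGraph.edist_triangle (v := .inr (.inr ⟨0, hc⟩))) ?_
      refine le_trans (add_le_add (edist_mid_inr hk _ j i) (edist_inr_mid hk _ j' i')) ?_
      rw [← Nat.cast_add]
      exact Nat.cast_le.mpr (by omega)
  · -- mid inr
    refine le_trans (edist_mid_inr hk z' j i) (Nat.cast_le.mpr ?_)
    omega
  · -- inr inl
    refine le_trans (SimpleGraph.edist_triangle (v := .inr (.inl (⟨0, hb⟩, ⟨k-2, hl⟩)))) ?_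
    refine le_trans (add_le_add (edist_inr_mid hk z _ _) (edist_mid_inl hk y _ _)) ?_
    rw [← Nat.cast_add]
    exact Nat.cast_le.mpr (by show (k - 1 - (k - 2)) + ((k - 2) + 1) ≤ k; omega)
  · -- inr mid
    refine le_trans (edist_inr_mid hk z j' i') (Nat.cast_le.mpr ?_)
    omega
  · -- inr inr
    refine le_trans (SimpleGraph.edist_triangle (v := .inr (.inl (⟨0, hb⟩, ⟨k-2, hl⟩)))) ?_
    refine le_trans (add_le_add (edist_inr_mid hk z _ _) (edist_mid_inr hk z' _ _)) ?_
    rw [← Nat.cast_add]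
    exact Nat.cast_le.mpr (by show (k - 1 - (k - 2)) + (k - 1 - (k - 2)) ≤ k; omega)

private lemma k_le_ediam (hk : 2 ≤ k) (ha : 1 ≤ a) (hc : 1 ≤ c) :
    (k : ℕ∞) ≤ (constrK k a b c).ediam := by
  set f : (Fin a ⊕ ((Fin b × Fin (k - 1)) ⊕ Fin c)) → ℤ := fun v =>
    match v with
    | .inl _ => 0
    | .inr (.inl (_, m)) => (m.val : ℤ) + 1
    | .inr (.inr _) => (k : ℤ) with hf_def
  have hf : ∀ ⦃u v⦄, (constrK k a b c).Adj u v → f v ≤ f u + 1 := by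
    rintro (x | (⟨j, i⟩ | z)) (y | (⟨j', i'⟩ | z')) hadj
    · exact hadj.elim
    · have : i'.val = 0 := hadj
      simp [f, this]
    · exact hadj.elim
    · have : i.val = 0 := hadj
      simp [f, this]
    · obtain ⟨-, h2⟩ := hadj
      simp only [f]
      omega
    · have : i.val = k - 2 := hadj
      have := i.isLt
      simp only [f]
      omega
    · exact hadj.elim
    · have : i'.val = k - 2 := hadj
      have := i'.isLt
      simp only [f]
      omega
    · exact hadj.elim
  have := pot_le_edist hf (.inl ⟨0, ha⟩) (.inr (.inr ⟨0, hc⟩)) k (by simp [f])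
  exact le_trans this SimpleGraph.edist_le_ediam

private lemma critA (hk : 2 ≤ k) (x : Fin a) (j : Fin b) (h0 : 0 < k - 1) :
    (k : ℕ∞) < ((constrK k a b c).deleteEdges
      {s(.inl x, .inr (.inl (j, ⟨0, h0⟩)))}).ediam := by
  set G' := (constrK k a b c).deleteEdges
      {s(.inl x, .inr (.inl (j, ⟨0, h0⟩)))} with hG'
  set f : (Fin a ⊕ ((Fin b × Fin (k - 1)) ⊕ Fin c)) → ℤ := fun v =>
    match v with
    | .inl x' => if x' = x then 0 else 2
    | .inr (.inl (j', m)) => if j' = j then (m.val : ℤ) + 3 else (m.val : ℤ) + 1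
    | .inr (.inr _) => (k : ℤ) with hf_def
  have hf : ∀ ⦃u v⦄, G'.Adj u v → f v ≤ f u + 1 := by
    intro u v huv
    rw [hG', SimpleGraph.deleteEdges_adj, Set.mem_singleton_iff] at huv
    obtain ⟨hadj, hne⟩ := huv
    match u, v with
    | .inl x', .inl y' => exact hadj.elim
    | .inl x', .inr (.inl (j'', m')) =>
      have hm : m'.val = 0 := hadj
      have hm' : m' = ⟨0, h0⟩ := Fin.ext hm
      by_cases hj : j'' = j
      · subst hj; subst hm'
        have hx : x' ≠ x := fun h => hne (by rw [h])
        simp only [f, if_neg hx, if_pos rfl]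
        omega
      · simp only [f, if_neg hj, hm]
        by_cases hx : x' = x <;> simp [hx] <;> omega
    | .inr (.inl (j'', m')), .inl x' =>
      simp only [f]
      by_cases hx : x' = x <;> by_cases hj : j'' = j <;> simp [hx, hj] <;> omega
    | .inr (.inl (j₁, m)), .inr (.inl (j₂, m')) =>
      obtain ⟨hj12, hd⟩ := hadj
      subst hj12
      simp only [f]
      by_cases hj : j₁ = j <;> simp [hj] <;> omega
    | .inr (.inl (j₁, m)), .inr (.inr z') =>
      have hm : m.val = k - 2 := hadj
      have := m.isLt
      simp only [f]
      by_cases hj : j₁ = j <;> simp [hj] <;> omega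
    | .inr (.inr z), .inr (.inl (j₁, m')) =>
      have hm : m'.val = k - 2 := hadj
      have := m'.isLt
      simp only [f]
      by_cases hj : j₁ = j <;> simp [hj, hm] <;> omega
    | .inr (.inr z), .inr (.inr z') => exact hadj.elim
    | .inl x', .inr (.inr z') => exact hadj.elim
    | .inr (.inr z'), .inl x' => exact hadj.elim
  have hl : k - 2 < k - 1 := by omega
  have key := pot_le_edist hf (.inl x) (.inr (.inl (j, ⟨k - 2, hl⟩))) (k + 1) (by
    simp only [f, if_pos rfl]
    push_cast
    omega)
  calc (k : ℕ∞) < ((k + 1 : ℕ) : ℕ∞) := by exact_mod_cast Nat.lt_succ_self k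
    _ ≤ _ := le_trans key SimpleGraph.edist_le_ediam

private lemma critB (hk : 2 ≤ k) (ha : 1 ≤ a) (j : Fin b) (i i' : Fin (k-1))
    (hii : i.val + 1 = i'.val) :
    (k : ℕ∞) < ((constrK k a b c).deleteEdges
      {s(.inr (.inl (j, i)), .inr (.inl (j, i')))}).ediam := by
  set G' := (constrK k a b c).deleteEdges
      {s(.inr (.inl (j, i)), .inr (.inl (j, i')))} with hG'
  set f : (Fin a ⊕ ((Fin b × Fin (k - 1)) ⊕ Fin c)) → ℤ := fun v =>
    match v with
    | .inl _ => 0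
    | .inr (.inl (j', m)) =>
        if j' = j ∧ i.val + 1 ≤ m.val then 2 * (k : ℤ) - 1 - m.val else (m.val : ℤ) + 1
    | .inr (.inr _) => (k : ℤ) with hf_def
  have hi' := i'.isLt
  have hf : ∀ ⦃u v⦄, G'.Adj u v → f v ≤ f u + 1 := by
    intro u v huv
    rw [hG', SimpleGraph.deleteEdges_adj, Set.mem_singleton_iff] at huv
    obtain ⟨hadj, hne⟩ := huv
    match u, v with
    | .inl x', .inl y' => exact hadj.elim
    | .inl x', .inr (.inl (j'', m')) =>
      have hm : m'.val = 0 := hadj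
      have hc : ¬ (j'' = j ∧ i.val + 1 ≤ m'.val) := by omega
      simp only [f, if_neg hc]
      omega
    | .inr (.inl (j'', m')), .inl x' =>
      have := m'.isLt
      simp only [f]
      by_cases hc : j'' = j ∧ i.val + 1 ≤ m'.val <;> simp [hc] <;> omega
    | .inr (.inl (j₁, m)), .inr (.inl (j₂, m')) =>
      obtain ⟨hj12, hd⟩ := hadj
      subst hj12
      by_cases hj : j₁ = j
      · by_cases hu : i.val + 1 ≤ m.val <;> by_cases hv : i.val + 1 ≤ m'.val
        · have c1 : j₁ = j ∧ i.val + 1 ≤ m.val := ⟨hj, hu⟩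
          have c2 : j₁ = j ∧ i.val + 1 ≤ m'.val := ⟨hj, hv⟩
          simp only [f]
          rw [if_pos c1, if_pos c2]
          omega
        · -- u in branch, v out: forces m = i', m' = i : deleted edge (swapped)
          exfalso
          have hm : m = i' := Fin.ext (by omega)
          have hm' : m' = i := Fin.ext (by omega)
          subst hm; subst hm'
          exact hne (by rw [hj]; exact Sym2.eq_swap)
        · -- u out, v in: forces m = i, m' = i' : deleted edge
          exfalso
          have hm : m = i := Fin.ext (by omega)
          have hm' : m' = i' := Fin.ext (by omega)
          subst hm; subst hm'
          exact hne (by rw [hj])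
        · have c1 : ¬ (j₁ = j ∧ i.val + 1 ≤ m.val) := fun h => hu h.2
          have c2 : ¬ (j₁ = j ∧ i.val + 1 ≤ m'.val) := fun h => hv h.2
          simp only [f]
          rw [if_neg c1, if_neg c2]
          omega
      · have h1 : ¬ (j₁ = j ∧ i.val + 1 ≤ m.val) := fun h => hj h.1
        have h2 : ¬ (j₁ = j ∧ i.val + 1 ≤ m'.val) := fun h => hj h.1
        simp only [f]
        rw [if_neg h1, if_neg h2]
        omega
    | .inr (.inl (j₁, m)), .inr (.inr z') =>
      have hm : m.val = k - 2 := hadj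
      simp only [f]
      by_cases hc : j₁ = j ∧ i.val + 1 ≤ m.val <;> simp [hc] <;> omega
    | .inr (.inr z), .inr (.inl (j₁, m')) =>
      have hm : m'.val = k - 2 := hadj
      simp only [f]
      by_cases hc : j₁ = j ∧ i.val + 1 ≤ m'.val <;> simp [hc] <;> omega
    | .inr (.inr z), .inr (.inr z') => exact hadj.elim
    | .inl x', .inr (.inr z') => exact hadj.elim
    | .inr (.inr z'), .inl x' => exact hadj.elim
  have key := pot_le_edist hf (.inl ⟨0, ha⟩) (.inr (.inl (j, i'))) (k + 1) (by
    simp only [f]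
    rw [if_pos (⟨trivial, by omega⟩ : True ∧ i.val + 1 ≤ i'.val)]
    push_cast
    omega)
  calc (k : ℕ∞) < ((k + 1 : ℕ) : ℕ∞) := by exact_mod_cast Nat.lt_succ_self k
    _ ≤ _ := le_trans key SimpleGraph.edist_le_ediam

private lemma critC (hk : 2 ≤ k) (z : Fin c) (j : Fin b) (hl : k - 2 < k - 1) :
    (k : ℕ∞) < ((constrK k a b c).deleteEdges
      {s(.inr (.inl (j, ⟨k - 2, hl⟩)), .inr (.inr z))}).ediam := by
  set G' := (constrK k a b c).deleteEdges
      {s(.inr (.inl (j, ⟨k - 2, hl⟩)), .inr (.inr z))} with hG'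
  set f : (Fin a ⊕ ((Fin b × Fin (k - 1)) ⊕ Fin c)) → ℤ := fun v =>
    match v with
    | .inl _ => (k : ℤ)
    | .inr (.inl (j', m)) => if j' = j then (k : ℤ) + 1 - m.val else (k : ℤ) - 1 - m.val
    | .inr (.inr z') => if z' = z then 0 else 2 with hf_def
  have hf : ∀ ⦃u v⦄, G'.Adj u v → f v ≤ f u + 1 := by
    intro u v huv
    rw [hG', SimpleGraph.deleteEdges_adj, Set.mem_singleton_iff] at huv
    obtain ⟨hadj, hne⟩ := huv
    match u, v with
    | .inl x', .inl y' => exact hadj.elim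
    | .inl x', .inr (.inl (j'', m')) =>
      have hm : m'.val = 0 := hadj
      simp only [f]
      by_cases hj : j'' = j <;> simp [hj, hm] <;> omega
    | .inr (.inl (j'', m')), .inl x' =>
      have hm : m'.val = 0 := hadj
      have := m'.isLt
      simp only [f]
      by_cases hj : j'' = j <;> simp [hj, hm] <;> omega
    | .inr (.inl (j₁, m)), .inr (.inl (j₂, m')) =>
      obtain ⟨hj12, hd⟩ := hadj
      subst hj12
      simp only [f]
      by_cases hj : j₁ = j <;> simp [hj] <;> omega
    | .inr (.inl (j₁, m)), .inr (.inr z') =>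
      have hm : m.val = k - 2 := hadj
      have := m.isLt
      simp only [f]
      by_cases hj : j₁ = j <;> by_cases hz : z' = z <;> simp [hj, hz, hm] <;> omega
    | .inr (.inr z'), .inr (.inl (j₁, m')) =>
      have hm : m'.val = k - 2 := hadj
      have := m'.isLt
      by_cases hz : z' = z
      · by_cases hj : j₁ = j
        · exfalso
          subst hz; subst hj
          have hm' : m' = ⟨k - 2, hl⟩ := Fin.ext hm
          subst hm'
          exact hne (Sym2.eq_swap)
        · simp only [f, if_neg hj, if_pos hz]
          omega
      · simp only [f]
        by_cases hj : j₁ = j <;> simp [hj, hz, hm] <;> omega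
    | .inr (.inr z₁), .inr (.inr z₂) => exact hadj.elim
    | .inl x', .inr (.inr z') => exact hadj.elim
    | .inr (.inr z'), .inl x' => exact hadj.elim
  have h0 : 0 < k - 1 := by omega
  have key := pot_le_edist hf (.inr (.inr z)) (.inr (.inl (j, ⟨0, h0⟩))) (k + 1) (by
    simp only [f, if_pos rfl]
    push_cast
    omega)
  calc (k : ℕ∞) < ((k + 1 : ℕ) : ℕ∞) := by exact_mod_cast Nat.lt_succ_self k
    _ ≤ _ := le_trans key SimpleGraph.edist_le_ediam

end ConstrKAux

theorem constrK_diam_k_critical (k a b c : ℕ) (hk : 2 ≤ k)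
    (ha : 1 ≤ a) (hb : 1 ≤ b) (hc : 1 ≤ c) :
    (constrK k a b c).ediam = k ∧
      ∀ e ∈ (constrK k a b c).edgeSet,
        (k : ℕ∞) < ((constrK k a b c).deleteEdges {e}).ediam := by
  constructor
  · exact le_antisymm (ConstrKAux.ediam_le hk ha hb hc) (ConstrKAux.k_le_ediam hk ha hc)
  · intro e he
    revert he
    refine Sym2.ind (fun u v => ?_) e
    intro he
    rw [SimpleGraph.mem_edgeSet] at he
    match u, v, he with
    | .inl x, .inr (.inl (j, i)), he =>
      have hi : i = ⟨0, by omega⟩ := Fin.ext he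
      subst hi
      exact ConstrKAux.critA hk x j (by omega)
    | .inr (.inl (j, i)), .inl x, he =>
      have hi : i = ⟨0, by omega⟩ := Fin.ext he
      subst hi
      rw [Sym2.eq_swap]
      exact ConstrKAux.critA hk x j (by omega)
    | .inr (.inl (j, i)), .inr (.inl (j', i')), he =>
      obtain ⟨rfl, hd⟩ := he
      rcases hd with hd | hd
      · exact ConstrKAux.critB hk ha j i i' hd
      · rw [Sym2.eq_swap]
        exact ConstrKAux.critB hk ha j i' i hd
    | .inr (.inl (j, i)), .inr (.inr z), he =>
      have hi : i = ⟨k - 2, by omega⟩ := Fin.ext he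
      subst hi
      exact ConstrKAux.critC hk z j (by omega)
    | .inr (.inr z), .inr (.inl (j, i)), he =>
      have hi : i = ⟨k - 2, by omega⟩ := Fin.ext he
      subst hi
      rw [Sym2.eq_swap]
      exact ConstrKAux.critC hk z j (by omega)
    | .inl x, .inl y, he => exact he.elim
    | .inl x, .inr (.inr z), he => exact he.elim
    | .inr (.inr z), .inl x, he => exact he.elim
    | .inr (.inr z), .inr (.inr z'), he => exact he.elim
end

section
/- For each fixed k ≥ 3, there exists an infinite family of diameter-k-critical graphs on n vertices with m edges such that ∑_v d_v² ≥ (1 − o(1))·n·m as n → ∞. -/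
open scoped Classical

/-- A graph is diameter-`k`-critical if it has diameter `k` and deleting any edge strictly
increases the diameter. -/
def IsDiamKCritical {V : Type*} (G : SimpleGraph V) (k : ℕ) : Prop :=
  G.ediam = k ∧ ∀ e ∈ G.edgeSet, (k : ℕ∞) < (G.deleteEdges {e}).ediam

namespace BroomAux

open SimpleGraph

/-- The "broom": a path `0 - 1 - ⋯ - (k-1)` together with all vertices of index `≥ k`
attached as leaves to the hub `k-1`. -/
def broom (n k : ℕ) : SimpleGraph (Fin n) where
  Adj u v := u ≠ v ∧ ((u.val + 1 = v.val ∧ v.val ≤ k - 1) ∨ (v.val + 1 = u.val ∧ u.val ≤ k - 1)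
    ∨ (u.val = k - 1 ∧ k ≤ v.val) ∨ (v.val = k - 1 ∧ k ≤ u.val))
  symm := by
    constructor; intro u v ⟨h1, h2⟩
    exact ⟨h1.symm, by tauto⟩
  loopless := by constructor; intro u h; exact h.1 rfl

lemma adj_val {n k : ℕ} {a b : Fin n} (h : (broom n k).Adj a b) :
    a.val ≠ b.val ∧ ((a.val + 1 = b.val ∧ b.val ≤ k - 1) ∨ (b.val + 1 = a.val ∧ a.val ≤ k - 1)
    ∨ (a.val = k - 1 ∧ k ≤ b.val) ∨ (b.val = k - 1 ∧ k ≤ a.val)) := by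
  obtain ⟨h1, h2⟩ := h
  exact ⟨fun hh => h1 (Fin.ext hh), h2⟩

lemma adj_of_val {n k : ℕ} {a b : Fin n} (hne : a.val ≠ b.val)
    (h : (a.val + 1 = b.val ∧ b.val ≤ k - 1) ∨ (b.val + 1 = a.val ∧ a.val ≤ k - 1)
    ∨ (a.val = k - 1 ∧ k ≤ b.val) ∨ (b.val = k - 1 ∧ k ≤ a.val)) : (broom n k).Adj a b :=
  ⟨fun hh => hne (by rw [hh]), h⟩

lemma walk_phi {n k : ℕ} : ∀ {u v : Fin n} (w : (broom n k).Walk u v),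
    min v.val k ≤ min u.val k + w.length := by
  intro u v w
  induction w with
  | nil => simp
  | cons h p ih =>
    have h2 := (adj_val h).2
    have h1 := (adj_val h).1
    simp only [SimpleGraph.Walk.length_cons]
    omega

lemma edist_path {n k : ℕ} (hn : k ≤ n) :
    ∀ (d : ℕ) (i j : Fin n), j.val ≤ k - 1 → i.val ≤ j.val → j.val - i.val ≤ d →
      (broom n k).edist i j ≤ (d : ℕ∞) := by
  intro d
  induction d with
  | zero =>
    intro i j _ h1 h2
    have : i = j := Fin.ext (by omega)
    subst this
    simp
  | succ d ih =>
    intro i j hj h1 h2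
    by_cases hij : i = j
    · subst hij; simp
    · have hlt : i.val < j.val := lt_of_le_of_ne h1 (fun hh => hij (Fin.ext hh))
      set i' : Fin n := ⟨i.val + 1, by omega⟩ with hi'
      have hiv : i'.val = i.val + 1 := rfl
      have hadj : (broom n k).Adj i i' := adj_of_val (by omega) (by left; omega)
      have e1 : (broom n k).edist i i' ≤ 1 := by
        have := SimpleGraph.edist_le (SimpleGraph.Walk.cons hadj SimpleGraph.Walk.nil)
        simpa using this
      have e2 : (broom n k).edist i' j ≤ (d : ℕ∞) := ih i' j hj (by omega) (by omega)
      calc (broom n k).edist i j ≤ (broom n k).edist i i' + (broom n k).edist i' j :=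
            SimpleGraph.edist_triangle
        _ ≤ 1 + (d : ℕ∞) := add_le_add e1 e2
        _ = ((d + 1 : ℕ) : ℕ∞) := by push_cast; ring
  
lemma edist_all {n k : ℕ} (hk : 3 ≤ k) (hn : k + 1 ≤ n) (u v : Fin n) :
    (broom n k).edist u v ≤ (k : ℕ∞) := by
  set hub : Fin n := ⟨k - 1, by omega⟩ with hhub
  have hhubval : hub.val = k - 1 := rfl
  have hto_hub : ∀ u : Fin n, u.val ≤ k - 1 → (broom n k).edist u hub ≤ ((k - 1 : ℕ) : ℕ∞) :=
    fun u hu => edist_path (by omega) (k - 1) u hub (by omega) (by omega) (by omega)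
  have hleaf : ∀ v : Fin n, k ≤ v.val → (broom n k).edist hub v ≤ 1 := by
    intro v hv
    have hadj : (broom n k).Adj hub v := adj_of_val (by omega) (by right; right; left; omega)
    have := SimpleGraph.edist_le (SimpleGraph.Walk.cons hadj SimpleGraph.Walk.nil)
    simpa using this
  rcases le_or_gt u.val (k - 1) with hu | hu
  · rcases le_or_gt v.val (k - 1) with hv | hv
    · rcases le_total u.val v.val with h | h
      · exact edist_path (by omega) k u v hv h (by omega)
      · rw [SimpleGraph.edist_comm]
        exact edist_path (by omega) k v u hu h (by omega)
    · calc (broom n k).edist u v ≤ (broom n k).edist u hub + (broom n k).edist hub v :=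
            SimpleGraph.edist_triangle
        _ ≤ ((k - 1 : ℕ) : ℕ∞) + 1 := add_le_add (hto_hub u hu) (hleaf v (by omega))
        _ = ((k - 1 + 1 : ℕ) : ℕ∞) := by push_cast; ring
        _ = (k : ℕ∞) := by congr 1; omega
  · rcases le_or_gt v.val (k - 1) with hv | hv
    · rw [SimpleGraph.edist_comm]
      calc (broom n k).edist v u ≤ (broom n k).edist v hub + (broom n k).edist hub u :=
            SimpleGraph.edist_triangle
        _ ≤ ((k - 1 : ℕ) : ℕ∞) + 1 := add_le_add (hto_hub v hv) (hleaf u (by omega))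
        _ = ((k - 1 + 1 : ℕ) : ℕ∞) := by push_cast; ring
        _ = (k : ℕ∞) := by congr 1; omega
    · calc (broom n k).edist u v ≤ (broom n k).edist u hub + (broom n k).edist hub v :=
            SimpleGraph.edist_triangle
        _ ≤ 1 + 1 := by
            refine add_le_add ?_ (hleaf v (by omega))
            rw [SimpleGraph.edist_comm]
            exact hleaf u (by omega)
        _ = ((2 : ℕ) : ℕ∞) := by norm_num
        _ ≤ (k : ℕ∞) := Nat.cast_le.mpr (by omega)
  
lemma ediam_eq {n k : ℕ} (hk : 3 ≤ k) (hn : k + 1 ≤ n) : (broom n k).ediam = (k : ℕ∞) := by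
  apply le_antisymm
  · exact SimpleGraph.ediam_le_of_edist_le (edist_all hk hn)
  · set v0 : Fin n := ⟨0, by omega⟩
    set vk : Fin n := ⟨k, by omega⟩
    have hlb : (k : ℕ∞) ≤ (broom n k).edist v0 vk := by
      by_cases htop : (broom n k).edist v0 vk = ⊤
      · rw [htop]; exact le_top
      · obtain ⟨w, hw⟩ := SimpleGraph.exists_walk_of_edist_ne_top htop
        have := walk_phi w
        have hlen : k ≤ w.length := by have hv0 : v0.val = 0 := rfl; have hvk : vk.val = k := rfl; omega
        rw [← hw]
        exact_mod_cast Nat.cast_le.mpr hlen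
    exact le_trans hlb SimpleGraph.edist_le_ediam

lemma walk_closed {n : ℕ} {G' : SimpleGraph (Fin n)} (S : Fin n → Prop)
    (hS : ∀ u v, G'.Adj u v → (S u ↔ S v)) :
    ∀ {a b : Fin n}, G'.Walk a b → S a → S b := by
  intro a b w
  induction w with
  | nil => exact id
  | cons h p ih => intro ha; exact ih ((hS _ _ h).mp ha)

lemma not_reachable {n : ℕ} {G' : SimpleGraph (Fin n)} (S : Fin n → Prop)
    (hS : ∀ u v, G'.Adj u v → (S u ↔ S v)) {a b : Fin n} (ha : S a) (hb : ¬ S b) :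
    ¬ G'.Reachable a b := by
  rintro ⟨w⟩
  exact hb (walk_closed S hS w ha)

lemma crit_aux {n k : ℕ} (hk : 3 ≤ k) {a b : Fin n} (hadj : (broom n k).Adj a b)
    (hab : a.val < b.val) : ¬ ((broom n k).deleteEdges {s(a, b)}).Reachable a b := by
  have h2 := (adj_val hadj).2
  have key : ∀ u v : Fin n, ((broom n k).deleteEdges {s(a, b)}).Adj u v →
      ¬ (u = a ∧ v = b) ∧ ¬ (u = b ∧ v = a) ∧ (u.val ≠ v.val ∧
      ((u.val + 1 = v.val ∧ v.val ≤ k - 1) ∨ (v.val + 1 = u.val ∧ u.val ≤ k - 1)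
      ∨ (u.val = k - 1 ∧ k ≤ v.val) ∨ (v.val = k - 1 ∧ k ≤ u.val))) := by
    intro u v huv
    rw [SimpleGraph.deleteEdges_adj] at huv
    obtain ⟨hG, hne⟩ := huv
    simp only [Set.mem_singleton_iff] at hne
    refine ⟨?_, ?_, adj_val hG⟩
    · rintro ⟨rfl, rfl⟩; exact hne rfl
    · rintro ⟨rfl, rfl⟩; exact hne (Sym2.eq_swap)
  rcases h2 with ⟨h3, h4⟩ | ⟨h3, h4⟩ | ⟨h3, h4⟩ | ⟨h3, h4⟩
  · -- path edge: a + 1 = b, b ≤ k - 1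
    apply not_reachable (fun v => v.val < b.val) ?_ hab (lt_irrefl b.val)
    intro u v huv
    obtain ⟨hne1, hne2, hval, hdisj⟩ := key u v huv
    have hne1' : ¬ (u.val = a.val ∧ v.val = b.val) := fun ⟨x1, x2⟩ => hne1 ⟨Fin.ext x1, Fin.ext x2⟩
    have hne2' : ¬ (u.val = b.val ∧ v.val = a.val) := fun ⟨x1, x2⟩ => hne2 ⟨Fin.ext x1, Fin.ext x2⟩
    omega
  · omega
  · -- leaf edge: a = hub, k ≤ b
    intro hr
    refine not_reachable (fun v => v.val = b.val) ?_ rfl (by omega) hr.symm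
    intro u v huv
    obtain ⟨hne1, hne2, hval, hdisj⟩ := key u v huv
    have hne1' : ¬ (u.val = a.val ∧ v.val = b.val) := fun ⟨x1, x2⟩ => hne1 ⟨Fin.ext x1, Fin.ext x2⟩
    have hne2' : ¬ (u.val = b.val ∧ v.val = a.val) := fun ⟨x1, x2⟩ => hne2 ⟨Fin.ext x1, Fin.ext x2⟩
    omega
  · omega

lemma crit {n k : ℕ} (hk : 3 ≤ k) :
    ∀ e ∈ (broom n k).edgeSet, (k : ℕ∞) < ((broom n k).deleteEdges {e}).ediam := by
  intro e he
  induction e using Sym2.ind with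
  | _ a b =>
    rw [SimpleGraph.mem_edgeSet] at he
    have hne := (adj_val he).1
    have hnr : ¬ ((broom n k).deleteEdges {s(a, b)}).Reachable a b := by
      rcases lt_or_gt_of_ne hne with h | h
      · exact crit_aux hk he h
      · intro hr
        have := crit_aux hk he.symm h
        rw [Sym2.eq_swap] at this
        exact this hr.symm
    have htop : ((broom n k).deleteEdges {s(a, b)}).edist a b = ⊤ :=
      SimpleGraph.edist_eq_top_of_not_reachable hnr
    have : (⊤ : ℕ∞) ≤ ((broom n k).deleteEdges {s(a, b)}).ediam :=
      htop ▸ SimpleGraph.edist_le_ediam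
    have heq : ((broom n k).deleteEdges {s(a, b)}).ediam = ⊤ := top_le_iff.mp this
    rw [heq]
    exact lt_of_lt_of_le (ENat.coe_lt_top k) le_rfl

lemma deg_hub {n k : ℕ} (hk : 3 ≤ k) (hn : k + 1 ≤ n) :
    n - k ≤ (broom n k).degree (⟨k - 1, by omega⟩ : Fin n) := by
  have hmem : ∀ i : Fin (n - k),
      (⟨k + i.val, by omega⟩ : Fin n) ∈ (broom n k).neighborFinset (⟨k - 1, by omega⟩ : Fin n) := by
    intro i
    rw [SimpleGraph.mem_neighborFinset]
    refine adj_of_val ?_ (Or.inr (Or.inr (Or.inl ⟨rfl, Nat.le_add_right _ _⟩)))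
    show k - 1 ≠ k + i.val
    omega
  have hinj : Function.Injective
      (fun i : Fin (n - k) => (⟨(⟨k + i.val, by omega⟩ : Fin n), hmem i⟩ :
        (broom n k).neighborFinset (⟨k - 1, by omega⟩ : Fin n))) := by
    intro i j hij
    simp only [Subtype.mk.injEq, Fin.mk.injEq] at hij
    exact Fin.ext (by omega)
  have := Fintype.card_le_of_injective _ hinj
  rwa [Fintype.card_coe, Fintype.card_fin] at this

lemma card_edges {n k : ℕ} (hk : 3 ≤ k) (hn : k + 1 ≤ n) :
    (broom n k).edgeFinset.card ≤ n := by
  have := Finset.card_le_card_of_injOn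
    (f := fun e => Sym2.lift ⟨fun a b : Fin n => max a.val b.val, fun a b => max_comm _ _⟩ e)
    (s := (broom n k).edgeFinset) (t := Finset.range n) ?_ ?_
  · rwa [Finset.card_range] at this

  · intro e he
    induction e using Sym2.ind with
    | _ a b =>
      simp only [Sym2.lift_mk, Finset.mem_coe, Finset.mem_range]
      have := a.isLt; have := b.isLt; omega
  · intro e1 he1 e2 he2 hfe
    induction e1 using Sym2.ind with
    | _ a b =>
      induction e2 using Sym2.ind with
      | _ c d =>
        simp only [Finset.mem_coe, SimpleGraph.mem_edgeFinset, SimpleGraph.mem_edgeSet] at he1 he2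
        simp only [Sym2.lift_mk] at hfe
        have h1 := adj_val he1
        have h2 := adj_val he2
        have hcases : (a.val = c.val ∧ b.val = d.val) ∨ (a.val = d.val ∧ b.val = c.val) := by
          omega
        rcases hcases with ⟨x1, x2⟩ | ⟨x1, x2⟩
        · rw [Fin.ext x1, Fin.ext x2]
        · rw [Fin.ext x1, Fin.ext x2, Sym2.eq_swap]

end BroomAux

theorem caccetta_haggkvist_higher_diameter_tight (k : ℕ) (hk : 3 ≤ k) :
    ∀ ε : ℝ, 0 < ε → ∀ N : ℕ, ∃ n : ℕ, N ≤ n ∧ ∃ G : SimpleGraph (Fin n),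
      IsDiamKCritical G k ∧
        (1 - ε) * n * G.edgeFinset.card ≤ ∑ v : Fin n, ((G.degree v : ℝ) ^ 2) := by
  intro ε hε N
  refine ⟨N + k + 1 + Nat.ceil (2 * k / ε), by omega, BroomAux.broom _ k, ?_, ?_⟩
  · set n := N + k + 1 + Nat.ceil (2 * k / ε) with hn
    exact ⟨BroomAux.ediam_eq hk (by omega), BroomAux.crit hk⟩
  · set n := N + k + 1 + Nat.ceil (2 * k / ε) with hn
    have hkn : k + 1 ≤ n := by omega
    set G := BroomAux.broom n k with hG
    set hub : Fin n := ⟨k - 1, by omega⟩ with hhub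
    have hRHSnn : (0 : ℝ) ≤ ∑ v : Fin n, ((G.degree v : ℝ) ^ 2) :=
      Finset.sum_nonneg fun v _ => sq_nonneg _
    by_cases hε1 : 1 - ε ≤ 0
    · calc (1 - ε) * n * G.edgeFinset.card = (1 - ε) * (n * G.edgeFinset.card) := by ring
        _ ≤ 0 := mul_nonpos_of_nonpos_of_nonneg hε1 (by positivity)
        _ ≤ _ := hRHSnn
    · push_neg at hε1
      have hsingle : ((G.degree hub : ℝ)) ^ 2 ≤ ∑ v : Fin n, ((G.degree v : ℝ) ^ 2) :=
        Finset.single_le_sum (f := fun v => ((G.degree v : ℝ) ^ 2))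
          (fun v _ => sq_nonneg _) (Finset.mem_univ hub)
      have hdeg : ((n : ℝ) - k) ≤ (G.degree hub : ℝ) := by
        have := BroomAux.deg_hub hk hkn (n := n)
        have h2 : ((n - k : ℕ) : ℝ) ≤ (G.degree hub : ℝ) := Nat.cast_le.mpr this
        rwa [Nat.cast_sub (by omega)] at h2
      have hm : (G.edgeFinset.card : ℝ) ≤ n := Nat.cast_le.mpr (BroomAux.card_edges hk hkn)
      have hceil : 2 * (k : ℝ) / ε ≤ (Nat.ceil (2 * (k : ℝ) / ε) : ℝ) := Nat.le_ceil _
      have hcn : (Nat.ceil (2 * (k : ℝ) / ε) : ℝ) ≤ (n : ℝ) := by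
        have : Nat.ceil (2 * (k : ℝ) / ε) ≤ n := by omega
        exact_mod_cast this
      have hεn : 2 * (k : ℝ) ≤ ε * n := by
        have h1 : 2 * (k : ℝ) / ε ≤ (n : ℝ) := le_trans hceil hcn
        calc 2 * (k : ℝ) = (2 * (k : ℝ) / ε) * ε := by field_simp
          _ ≤ (n : ℝ) * ε := mul_le_mul_of_nonneg_right h1 (le_of_lt hε)
          _ = ε * n := by ring
      have hkr : (k : ℝ) ≤ n := by exact_mod_cast (by omega : k ≤ n)
      have hmnn : (0 : ℝ) ≤ (G.edgeFinset.card : ℝ) := Nat.cast_nonneg _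
      have hnnn : (0 : ℝ) ≤ (n : ℝ) := Nat.cast_nonneg _
      have hknn : (0 : ℝ) ≤ (k : ℝ) := Nat.cast_nonneg _
      nlinarith [sq_nonneg ((n : ℝ) - k), mul_le_mul_of_nonneg_left hm
        (le_of_lt (mul_pos (by linarith : (0:ℝ) < 1 - ε) (Nat.cast_pos.mpr (by omega) : (0:ℝ) < (n:ℝ)))),
        sq_nonneg ((G.degree hub : ℝ))]
end

section
/- In a diameter-2-critical graph, every triangle T has at least two feet, and every foot of T is adjacent to exactly one vertex of T. Here, a vertex v ∉ T is a foot of T if there exist vertices x, y ∈ T such that v is adjacent to x, the path v–x–y has length 2, d(v,y)=2, and deleting the edge xy makes the distance between v and y exceed 2. -/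
open scoped Classical

/-- `v` is a foot of the triangle `T`: `v ∉ T` and there are `x, y ∈ T` with `v–x–y` a path of
length 2 such that `d(v,y) = 2` and deleting the edge `xy` raises the distance from `v` to `y`
above 2. -/
def IsFoot {V : Type*} (G : SimpleGraph V) (T : Finset V) (v : V) : Prop :=
  v ∉ T ∧ ∃ x ∈ T, ∃ y ∈ T, G.Adj v x ∧ G.Adj x y ∧ G.dist v y = 2 ∧
    2 < (G.deleteEdges {s(x, y)}).edist v y

section Aux

variable {V : Type*} {G : SimpleGraph V}

private lemma edist_le_two_of_walk {u w m : V} (h1 : G.Adj u m) (h2 : G.Adj m w) :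
    G.edist u w ≤ 2 := by
  have := SimpleGraph.edist_le (SimpleGraph.Walk.cons h1 (SimpleGraph.Walk.cons h2
    SimpleGraph.Walk.nil))
  simpa using this

private lemma adj_del {u w x₀ y₀ : V} (h : G.Adj u w)
    (h1 : u = x₀ → w ≠ y₀) (h2 : u = y₀ → w ≠ x₀) :
    (G.deleteEdges {s(x₀, y₀)}).Adj u w := by
  rw [SimpleGraph.deleteEdges_adj]
  refine ⟨h, ?_⟩
  rw [Set.mem_singleton_iff, Sym2.eq_iff]
  rintro (⟨e1, e2⟩ | ⟨e1, e2⟩)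
  exacts [h1 e1 e2, h2 e1 e2]

private lemma foot_not_adj (T : Finset V)
    (htri : ∀ a ∈ T, ∀ b ∈ T, a ≠ b → G.Adj a b)
    {v x₀ y₀ : V} (hv : v ∉ T) (hx₀ : x₀ ∈ T) (hy₀ : y₀ ∈ T)
    (hd : G.dist v y₀ = 2)
    (hcrit : 2 < (G.deleteEdges {s(x₀, y₀)}).edist v y₀) :
    ∀ u ∈ T, u ≠ x₀ → ¬ G.Adj v u := by
  intro u hu hux hadj
  by_cases huy : u = y₀
  · subst huy
    have : G.dist v u = 1 := SimpleGraph.dist_eq_one_iff_adj.mpr hadj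
    omega
  · have h1 : (G.deleteEdges {s(x₀, y₀)}).Adj v u :=
      adj_del hadj (fun e _ => hv (by rw [e]; exact hx₀)) (fun e _ => hv (by rw [e]; exact hy₀))
    have h2 : (G.deleteEdges {s(x₀, y₀)}).Adj u y₀ :=
      adj_del (htri u hu y₀ hy₀ huy) (fun e _ => hux e) (fun e _ => huy e)
    exact absurd (edist_le_two_of_walk h1 h2) (not_le.mpr hcrit)

private lemma mk_foot (T : Finset V)
    (htri : ∀ a ∈ T, ∀ b ∈ T, a ≠ b → G.Adj a b)
    {x₀ y₀ z₀ v : V} (hx₀ : x₀ ∈ T) (hy₀ : y₀ ∈ T) (hz₀ : z₀ ∈ T)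
    (hxy : G.Adj x₀ y₀) (hxz : G.Adj x₀ z₀) (hyz : G.Adj y₀ z₀)
    (hvx : G.Adj v x₀) (hd : G.edist v y₀ = 2)
    (h2 : 2 < (G.deleteEdges {s(x₀, y₀)}).edist v y₀) :
    IsFoot G T v ∧ ¬ G.Adj v z₀ ∧ G.Adj v x₀ := by
  have hvy : v ≠ y₀ := by
    rintro rfl
    rw [SimpleGraph.edist_self] at hd
    exact absurd hd (by norm_num)
  have hvT : v ∉ T := by
    intro hvT
    have : G.edist v y₀ = 1 := SimpleGraph.edist_eq_one_iff_adj.mpr (htri v hvT y₀ hy₀ hvy)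
    rw [this] at hd
    exact absurd hd (by norm_num)
  have hdist : G.dist v y₀ = 2 := by
    rw [SimpleGraph.dist, hd]
    rfl
  refine ⟨⟨hvT, x₀, hx₀, y₀, hy₀, hvx, hxy, hdist, h2⟩, ?_, hvx⟩
  intro hvz
  have h1 : (G.deleteEdges {s(x₀, y₀)}).Adj v z₀ :=
    adj_del hvz (fun e _ => hvx.ne e) (fun e _ => hvy e)
  have h1' : (G.deleteEdges {s(x₀, y₀)}).Adj z₀ y₀ :=
    adj_del hyz.symm (fun e _ => hxz.ne e.symm) (fun e _ => hyz.ne e.symm)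
  exact absurd (edist_le_two_of_walk h1 h1') (not_le.mpr h2)

private lemma foot_of_edge (hG : IsDiamTwoCritical G) (T : Finset V)
    (htri : ∀ a ∈ T, ∀ b ∈ T, a ≠ b → G.Adj a b)
    {x₀ y₀ z₀ : V} (hx₀ : x₀ ∈ T) (hy₀ : y₀ ∈ T) (hz₀ : z₀ ∈ T)
    (hxy : G.Adj x₀ y₀) (hxz : G.Adj x₀ z₀) (hyz : G.Adj y₀ z₀) :
    ∃ v, IsFoot G T v ∧ ¬ G.Adj v z₀ ∧ (G.Adj v x₀ ∨ G.Adj v y₀) := by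
  have he : s(x₀, y₀) ∈ G.edgeSet := hxy
  have hbig := hG.2 _ he
  rw [SimpleGraph.ediam, lt_iSup_iff] at hbig
  obtain ⟨a, hbig⟩ := hbig
  rw [SimpleGraph.eccent, lt_iSup_iff] at hbig
  obtain ⟨b, hbig⟩ := hbig
  -- `hbig : 2 < (G.deleteEdges {s(x₀, y₀)}).edist a b`
  have hab : a ≠ b := by
    rintro rfl
    rw [SimpleGraph.edist_self] at hbig
    exact absurd hbig (by norm_num)
  have hle : G.edist a b ≤ 2 := hG.1 ▸ SimpleGraph.edist_le_ediam
  have hne0 : G.edist a b ≠ 0 := SimpleGraph.edist_eq_zero_iff.ne.mpr hab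
  have hnetop : G.edist a b ≠ ⊤ := by
    intro h
    rw [h] at hle
    exact absurd hle (by norm_num)
  -- the distance is 1 or 2
  lift G.edist a b to ℕ using hnetop with k hk
  have hk2 : k ≤ 2 := by exact_mod_cast hle
  have hk1 : 1 ≤ k := Nat.one_le_iff_ne_zero.mpr (by exact_mod_cast hne0)
  interval_cases k
  · -- distance 1 : the pair is exactly the edge x₀y₀, contradiction via z₀
    have hadjab : G.Adj a b := SimpleGraph.edist_eq_one_iff_adj.mp (by exact_mod_cast hk.symm)
    by_cases hs : s(a, b) = s(x₀, y₀)
    · rw [Sym2.eq_iff] at hs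
      have adj1 : (G.deleteEdges {s(x₀, y₀)}).Adj x₀ z₀ :=
        adj_del hxz (fun _ e => hyz.ne' e) (fun e _ => hxy.ne e)
      have adj2 : (G.deleteEdges {s(x₀, y₀)}).Adj z₀ y₀ :=
        adj_del hyz.symm (fun e _ => hxz.ne' e) (fun e _ => hyz.ne' e)
      have hwalk : (G.deleteEdges {s(x₀, y₀)}).edist a b ≤ 2 := by
        rcases hs with ⟨rfl, rfl⟩ | ⟨rfl, rfl⟩
        · exact edist_le_two_of_walk adj1 adj2
        · exact edist_le_two_of_walk adj2.symm adj1.symm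
      exact absurd hwalk (not_le.mpr hbig)
    · have hadj' : (G.deleteEdges {s(x₀, y₀)}).Adj a b := by
        rw [SimpleGraph.deleteEdges_adj]
        exact ⟨hadjab, by rwa [Set.mem_singleton_iff]⟩
      have := SimpleGraph.edist_eq_one_iff_adj.mpr hadj'
      rw [this] at hbig
      exact absurd hbig (by norm_num)
  · -- distance 2 : extract a middle vertex
    have hk' : G.edist a b = 2 := by exact_mod_cast hk.symm
    obtain ⟨p, hp⟩ := SimpleGraph.exists_walk_of_edist_eq_coe (k := 2) (by exact_mod_cast hk')
    cases p with
    | nil => simp at hp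
    | @cons _ m _ h q =>
      rw [SimpleGraph.Walk.length_cons] at hp
      have hq1 : q.length = 1 := by omega
      have hmb : G.Adj m b := q.adj_of_length_eq_one hq1
      by_cases hs1 : s(a, m) = s(x₀, y₀)
      · rw [Sym2.eq_iff] at hs1
        rcases hs1 with ⟨rfl, rfl⟩ | ⟨rfl, rfl⟩
        · -- a = x₀, m = y₀, foot is b (adjacent to the vertex playing y₀'s role)
          have := mk_foot (G := G) T htri hy₀ hx₀ hz₀ hxy.symm hyz hxz hmb.symm
            (by rw [SimpleGraph.edist_comm]; exact hk')
            (by rw [Sym2.eq_swap, SimpleGraph.edist_comm]; exact hbig)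
          exact ⟨b, this.1, this.2.1, Or.inr this.2.2⟩
        · -- a = y₀, m = x₀
          have := mk_foot (G := G) T htri hx₀ hy₀ hz₀ hxy hxz hyz hmb.symm
            (by rw [SimpleGraph.edist_comm]; exact hk')
            (by rw [SimpleGraph.edist_comm]; exact hbig)
          exact ⟨b, this.1, this.2.1, Or.inl this.2.2⟩
      · by_cases hs2 : s(m, b) = s(x₀, y₀)
        · rw [Sym2.eq_iff] at hs2
          rcases hs2 with ⟨rfl, rfl⟩ | ⟨rfl, rfl⟩
          · -- m = x₀, b = y₀, foot is a
            have := mk_foot (G := G) T htri hx₀ hy₀ hz₀ hxy hxz hyz h hk' hbig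
            exact ⟨a, this.1, this.2.1, Or.inl this.2.2⟩
          · -- m = y₀, b = x₀, foot is a
            have := mk_foot (G := G) T htri hy₀ hx₀ hz₀ hxy.symm hyz hxz h hk'
              (by rw [Sym2.eq_swap]; exact hbig)
            exact ⟨a, this.1, this.2.1, Or.inr this.2.2⟩
        · -- neither edge of the walk is x₀y₀, contradiction
          have h1 : (G.deleteEdges {s(x₀, y₀)}).Adj a m := by
            rw [SimpleGraph.deleteEdges_adj]
            exact ⟨h, by rwa [Set.mem_singleton_iff]⟩
          have h2 : (G.deleteEdges {s(x₀, y₀)}).Adj m b := by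
            rw [SimpleGraph.deleteEdges_adj]
            exact ⟨hmb, by rwa [Set.mem_singleton_iff]⟩
          exact absurd (edist_le_two_of_walk h1 h2) (not_le.mpr hbig)

end Aux

theorem triangle_has_two_feet {V : Type*} (G : SimpleGraph V) (hG : IsDiamTwoCritical G)
    (x y z : V) (hxy : G.Adj x y) (hyz : G.Adj y z) (hxz : G.Adj x z) :
    (∃ v w : V, v ≠ w ∧ IsFoot G {x, y, z} v ∧ IsFoot G {x, y, z} w) ∧
      ∀ v : V, IsFoot G {x, y, z} v →
        (({x, y, z} : Finset V).filter fun u => G.Adj v u).card = 1 := by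
  set T : Finset V := {x, y, z} with hT
  have hxT : x ∈ T := by simp [hT]
  have hyT : y ∈ T := by simp [hT]
  have hzT : z ∈ T := by simp [hT]
  have htri : ∀ a ∈ T, ∀ b ∈ T, a ≠ b → G.Adj a b := by
    intro a ha b hb hne
    rw [hT, Finset.mem_insert, Finset.mem_insert, Finset.mem_singleton] at ha
    rw [hT, Finset.mem_insert, Finset.mem_insert, Finset.mem_singleton] at hb
    rcases ha with rfl | rfl | rfl <;> rcases hb with rfl | rfl | rfl <;>
      first
        | exact absurd rfl hne
        | exact hxy | exact hxz | exact hyz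
        | exact hxy.symm | exact hxz.symm | exact hyz.symm
  constructor
  · obtain ⟨v₁, hf₁, hnz₁, hor₁⟩ := foot_of_edge hG T htri hxT hyT hzT hxy hxz hyz
    obtain ⟨v₂, hf₂, hnx₂, _⟩ := foot_of_edge hG T htri hyT hzT hxT hyz hxy.symm hxz.symm
    obtain ⟨v₃, hf₃, hny₃, _⟩ := foot_of_edge hG T htri hxT hzT hyT hxz hxy hyz.symm
    by_cases h12 : v₁ = v₂
    · subst h12
      have hady : G.Adj v₁ y := hor₁.resolve_left hnx₂
      have : v₁ ≠ v₃ := by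
        rintro rfl
        exact hny₃ hady
      exact ⟨v₁, v₃, this, hf₁, hf₃⟩
    · exact ⟨v₁, v₂, h12, hf₁, hf₂⟩
  · rintro v ⟨hvT, x', hx', y', hy', hvx', hx'y', hdist, hedist⟩
    have hna := foot_not_adj T htri hvT hx' hy' hdist hedist
    have hfilter : T.filter (fun u => G.Adj v u) = {x'} := by
      apply Finset.eq_singleton_iff_unique_mem.mpr
      constructor
      · rw [Finset.mem_filter]
        exact ⟨hx', hvx'⟩
      · intro u hu
        rw [Finset.mem_filter] at hu
        by_contra hne
        exact hna u hu.1 hne hu.2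
    rw [hfilter]
    exact Finset.card_singleton _
end

section
/- In a diameter-2-critical graph, for distinct triangles T and T', the families F(T) and F(T') are disjoint, where F(T) is the set of triples {v,y,z} with y,z ∈ T adjacent, v a foot of T not adjacent to y or z. -/
open scoped Classical

/-- `T` is (the vertex set of) a triangle of `G`. -/
def IsTriangle {V : Type*} (G : SimpleGraph V) (T : Finset V) : Prop :=
  T.card = 3 ∧ ∀ x ∈ T, ∀ y ∈ T, x ≠ y → G.Adj x y

/-- The family `F(T)` of triples `{v, y, z}` with `y, z ∈ T` adjacent, `v` a foot of `T`
adjacent to neither `y` nor `z`. -/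
def footFamily {V : Type*} (G : SimpleGraph V) (T : Finset V) : Set (Finset V) :=
  {s | ∃ v y z : V, s = {v, y, z} ∧ y ∈ T ∧ z ∈ T ∧ G.Adj y z ∧ IsFoot G T v ∧
    ¬ G.Adj v y ∧ ¬ G.Adj v z}

theorem footFamilies_disjoint {V : Type*} (G : SimpleGraph V) (hG : IsDiamTwoCritical G)
    (T T' : Finset V) (hT : IsTriangle G T) (hT' : IsTriangle G T') (hne : T ≠ T') :
    Disjoint (footFamily G T) (footFamily G T') := by
  rw [Set.disjoint_left]
  rintro s ⟨v, y, z, rfl, hyT, hzT, hyz, ⟨hvT, x, hxT, y0, hy0T, hvx, hxy0, hdist, hedist⟩,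
    hvy, hvz⟩
  rintro ⟨v', y', z', hs, hy'T, hz'T, hy'z',
    ⟨hv'T, x', hx'T, y0', hy0'T, hvx', hxy0', hdist', hedist'⟩, hv'y', hv'z'⟩
  apply hne
  -- basic distinctness
  have hvy' : v ≠ y := fun h => hvT (h ▸ hyT)
  have hvz' : v ≠ z := fun h => hvT (h ▸ hzT)
  have hyzne : y ≠ z := hyz.ne
  have hv'y'ne : v' ≠ y' := fun h => hv'T (h ▸ hy'T)
  have hv'z'ne : v' ≠ z' := fun h => hv'T (h ▸ hz'T)
  -- v' = v
  have hv'mem : v' ∈ ({v, y, z} : Finset V) := by rw [hs]; simp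
  have hzmem : z ∈ ({v', y', z'} : Finset V) := by rw [← hs]; simp
  have hymem : y ∈ ({v', y', z'} : Finset V) := by rw [← hs]; simp
  simp only [Finset.mem_insert, Finset.mem_singleton] at hv'mem hzmem hymem
  have hvv' : v = v' := by
    rcases hv'mem with h | h | h
    · exact h.symm
    · -- v' = y : then z ∈ {y', z'}, but ¬Adj v' y', ¬Adj v' z', contradicting Adj y z
      exfalso
      have hz_ne : z ≠ v' := fun hh => hyzne (h.symm.trans hh.symm)
      rcases hzmem with h2 | h2 | h2
      · exact hz_ne h2
      · exact hv'y' (h ▸ h2 ▸ hyz)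
      · exact hv'z' (h ▸ h2 ▸ hyz)
    · -- v' = z
      exfalso
      have hy_ne : y ≠ v' := fun hh => hyzne (hh.trans h)
      rcases hymem with h2 | h2 | h2
      · exact hy_ne h2
      · exact hv'y' (h ▸ h2 ▸ hyz.symm)
      · exact hv'z' (h ▸ h2 ▸ hyz.symm)
  subst hvv'
  -- y, z ∈ T'
  have hyT' : y ∈ T' := by
    rcases hymem with h | h | h
    · exact absurd h.symm hvy'
    · exact h ▸ hy'T
    · exact h ▸ hz'T
  have hzT' : z ∈ T' := by
    rcases hzmem with h | h | h
    · exact absurd h.symm hvz'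
    · exact h ▸ hy'T
    · exact h ▸ hz'T
  -- x ≠ y, x ≠ z, so T = {x, y, z}
  have hxy : x ≠ y := fun h => hvy (h ▸ hvx)
  have hxz : x ≠ z := fun h => hvz (h ▸ hvx)
  have hTcard : ({x, y, z} : Finset V).card = 3 := by
    rw [Finset.card_insert_of_notMem (by simp [hxy, hxz]),
      Finset.card_insert_of_notMem (by simp [hyzne]), Finset.card_singleton]
  have hTeq : T = {x, y, z} := by
    refine (Finset.eq_of_subset_of_card_le ?_ ?_).symm
    · intro a ha
      simp only [Finset.mem_insert, Finset.mem_singleton] at ha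
      rcases ha with rfl | rfl | rfl <;> assumption
    · rw [hT.1, hTcard]
  -- y0 ∈ {y, z}
  have hy0yz : y0 = y ∨ y0 = z := by
    have := hTeq ▸ hy0T
    simp only [Finset.mem_insert, Finset.mem_singleton] at this
    rcases this with h | h | h
    · exact absurd h hxy0.ne'
    · exact Or.inl h
    · exact Or.inr h
  have hvy0 : ¬ G.Adj v y0 := by rcases hy0yz with rfl | rfl <;> assumption
  have hy0T' : y0 ∈ T' := by rcases hy0yz with rfl | rfl <;> assumption
  have hvy0ne : v ≠ y0 := by
    intro h
    rw [← h, SimpleGraph.dist_self] at hdist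
    exact two_ne_zero hdist.symm
  have hx'y0 : x' ≠ y0 := fun h => hvy0 (h ▸ hvx')
  have hvxne : v ≠ x := fun h => hvT (h ▸ hxT)
  -- x' = x
  have hxx' : x' = x := by
    by_contra hxn
    have hadj1 : (G.deleteEdges {s(x, y0)}).Adj v x' := by
      rw [SimpleGraph.deleteEdges_adj]
      refine ⟨hvx', ?_⟩
      simp only [Set.mem_singleton_iff, Sym2.eq_iff]
      rintro (⟨rfl, rfl⟩ | ⟨rfl, rfl⟩)
      · exact hvxne rfl
      · exact hvy0ne rfl
    have hadj2 : (G.deleteEdges {s(x, y0)}).Adj x' y0 := by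
      rw [SimpleGraph.deleteEdges_adj]
      refine ⟨hT'.2 x' hx'T y0 hy0T' hx'y0, ?_⟩
      simp only [Set.mem_singleton_iff, Sym2.eq_iff]
      rintro (⟨rfl, -⟩ | ⟨rfl, rfl⟩)
      · exact hxn rfl
      · exact hx'y0 rfl
    have hw : (G.deleteEdges {s(x, y0)}).edist v y0 ≤ 2 := by
      have := SimpleGraph.edist_le (SimpleGraph.Walk.cons hadj1
        (SimpleGraph.Walk.cons hadj2 SimpleGraph.Walk.nil))
      simpa using this
    exact absurd hw (not_le.mpr hedist)
  -- conclude T' = {x, y, z} = T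
  have hT'eq : T' = {x, y, z} := by
    refine (Finset.eq_of_subset_of_card_le ?_ ?_).symm
    · intro a ha
      simp only [Finset.mem_insert, Finset.mem_singleton] at ha
      rcases ha with rfl | rfl | rfl
      · exact hxx' ▸ hx'T
      · exact hyT'
      · exact hzT'
    · rw [hT'.1, hTcard]
  rw [hTeq, hT'eq]
end

section
/- Let G be a diameter-k-critical graph. For every edge e of G, there exists a path P of length ⌈k/3⌉ such that e lies on P, and deleting e increases the distance between the endpoints of P above ⌈k/3⌉. -/
namespace SimpleGraph
namespace Walk

variable {V : Type*} {G : SimpleGraph V}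

/-- Take the first `n` edges of a walk. -/
def takeW {u v : V} : (p : G.Walk u v) → (n : ℕ) → G.Walk u (p.getVert n)
  | .nil, _ => .nil
  | .cons _ _, 0 => .nil
  | .cons h q, n + 1 => .cons h (q.takeW n)

/-- Drop the first `n` edges of a walk. -/
def dropW {u v : V} : (p : G.Walk u v) → (n : ℕ) → G.Walk (p.getVert n) v
  | .nil, _ => .nil
  | .cons h q, 0 => .cons h q
  | .cons _ q, n + 1 => q.dropW n

theorem takeW_append_dropW {u v : V} (p : G.Walk u v) (n : ℕ) :
    (p.takeW n).append (p.dropW n) = p := by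
  induction p generalizing n with
  | nil => cases n <;> rfl
  | cons h q ih =>
    cases n with
    | zero => rfl
    | succ n => simp only [takeW, dropW, cons_append, ih]; exact congrArg (cons h) (ih n)

theorem length_takeW {u v : V} (p : G.Walk u v) (n : ℕ) (hn : n ≤ p.length) :
    (p.takeW n).length = n := by
  induction p generalizing n with
  | nil => simp at hn; simp [hn, takeW]
  | cons h q ih =>
    cases n with
    | zero => rfl
    | succ n => simpa [takeW] using ih n (by simpa using hn)

theorem length_dropW {u v : V} (p : G.Walk u v) (n : ℕ) :
    (p.dropW n).length = p.length - n := by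
  induction p generalizing n with
  | nil => cases n <;> simp [dropW]
  | cons h q ih =>
    cases n with
    | zero => rfl
    | succ n => simpa [dropW] using ih n

theorem edges_takeW_subset {u v : V} (p : G.Walk u v) (n : ℕ) :
    (p.takeW n).edges ⊆ p.edges := by
  conv_rhs => rw [← takeW_append_dropW p n]
  rw [edges_append]
  exact List.subset_append_left _ _

theorem edges_dropW_subset {u v : V} (p : G.Walk u v) (n : ℕ) :
    (p.dropW n).edges ⊆ p.edges := by
  conv_rhs => rw [← takeW_append_dropW p n]
  rw [edges_append]
  exact List.subset_append_right _ _

theorem edge_mem_of_length_one {u v : V} {p : G.Walk u v} (h : p.length = 1) :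
    s(u, v) ∈ p.edges := by
  cases p with
  | nil => simp at h
  | cons h' q =>
    cases q with
    | nil => simp
    | cons h'' q' => simp at h

theorem exists_split_at_edge {u v : V} {e : Sym2 V} {p : G.Walk u v} (he : e ∈ p.edges) :
    ∃ (x y : V) (hxy : G.Adj x y) (p₁ : G.Walk u x) (p₂ : G.Walk y v),
      p = p₁.append (.cons hxy p₂) ∧ e = s(x, y) := by
  induction p with
  | nil => simp at he
  | cons h q ih =>
    rw [edges_cons, List.mem_cons] at he
    rcases he with he | he
    · exact ⟨_, _, h, .nil, q, by simp, he⟩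
    · obtain ⟨x, y, hxy, p₁, p₂, rfl, he'⟩ := ih he
      exact ⟨x, y, hxy, .cons h p₁, p₂, by rw [cons_append], he'⟩

end Walk

variable {V : Type*} {G : SimpleGraph V}

lemma edist_deleteEdges_le {e : Sym2 V} {u v : V} (p : G.Walk u v) (hp : e ∉ p.edges) :
    (G.deleteEdges {e}).edist u v ≤ p.length := by
  have hP : ∀ e' ∈ p.edges, e' ∉ ({e} : Set (Sym2 V)) := by
    intro e' he' hmem
    rw [Set.mem_singleton_iff] at hmem
    exact hp (hmem ▸ he')
  have := Walk.edist_le (p.toDeleteEdges {e} hP)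
  simpa [Walk.toDeleteEdges] using this

end SimpleGraph


open SimpleGraph Walk

open scoped Classical

theorem exists_short_associated_path {V : Type*} (G : SimpleGraph V) (k : ℕ) (hk : 2 ≤ k)
    (hG : IsDiamKCritical G k) :
    ∀ e ∈ G.edgeSet, ∃ (x y : V) (P : G.Walk x y), P.IsPath ∧ P.length = (k + 2) / 3 ∧
      e ∈ P.edges ∧ (((k + 2) / 3 : ℕ) : ℕ∞) < (G.deleteEdges {e}).edist x y := by
  obtain ⟨hdiam, hcrit⟩ := hG
  intro e he
  set ℓ := (k + 2) / 3 with hℓdef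
  have hℓ1 : 1 ≤ ℓ := by omega
  have h3ℓ : 3 * ℓ ≤ k + 2 := by omega
  have h2ℓ : 2 * ℓ ≤ k + 1 := by omega
  set G' := G.deleteEdges {e} with hG'def
  have hlt : (k : ℕ∞) < G'.ediam := hcrit e he
  obtain ⟨a, b, hab⟩ : ∃ a b, (k : ℕ∞) < G'.edist a b := by
    by_contra h
    push_neg at h
    exact absurd (SimpleGraph.ediam_le_of_edist_le fun u v => h u v) (not_le.mpr hlt)
  have habG : G.edist a b ≠ ⊤ := by
    have h1 : G.edist a b ≤ (k : ℕ∞) := hdiam ▸ SimpleGraph.edist_le_ediam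
    exact ne_top_of_le_ne_top (ENat.coe_ne_top k) h1
  obtain ⟨P, hPpath, hPlen⟩ := (SimpleGraph.reachable_of_edist_ne_top habG).exists_path_of_dist
  set L := P.length with hLdef
  have hLk : L ≤ k := by
    have h1 : G.edist a b ≤ (k : ℕ∞) := hdiam ▸ SimpleGraph.edist_le_ediam
    have h2 : (L : ℕ∞) = G.edist a b := by
      rw [hPlen]
      exact ENat.coe_toNat habG
    exact_mod_cast h2 ▸ h1
  have heP : e ∈ P.edges := by
    by_contra hne
    have h1 : G'.edist a b ≤ (L : ℕ∞) := edist_deleteEdges_le P hne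
    have h2 : (k : ℕ∞) < (L : ℕ∞) := lt_of_lt_of_le hab h1
    exact absurd (by exact_mod_cast h2) (not_lt.mpr hLk)
  obtain ⟨u, v, huv, P₁, P₂, hsplit, heq⟩ := Walk.exists_split_at_edge heP
  set p := P₁.length with hpdef
  set q := P₂.length with hqdef
  have hpq : p + 1 + q = L := by
    rw [hLdef, hsplit]
    simp [Walk.length_append]
    omega
  have hePedges : P.edges = P₁.edges ++ e :: P₂.edges := by
    rw [hsplit, Walk.edges_append, Walk.edges_cons, heq]
  have he₁₂ : e ∉ P₁.edges ∧ e ∉ P₂.edges := by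
    have hnodup : P.edges.Nodup := hPpath.isTrail.edges_nodup
    rw [hePedges] at hnodup
    obtain ⟨-, hnd2, hdisj⟩ := List.nodup_append'.mp hnodup
    exact ⟨fun hm => hdisj hm List.mem_cons_self, (List.nodup_cons.mp hnd2).1⟩
  have hd1 : G'.edist a u ≤ (p : ℕ∞) := edist_deleteEdges_le P₁ he₁₂.1
  have hd2 : G'.edist v b ≤ (q : ℕ∞) := edist_deleteEdges_le P₂ he₁₂.2
  by_cases hcase : ℓ ≤ L
  · -- extract a segment of length ℓ containing e from P
    set s := min p (ℓ - 1) with hsdef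
    set t := ℓ - 1 - s with htdef
    have hsp : s ≤ p := by omega
    have htq : t ≤ q := by omega
    have hst : s + 1 + t = ℓ := by omega
    have hA1 : (P₁.takeW (p - s)).append (P₁.dropW (p - s)) = P₁ := Walk.takeW_append_dropW _ _
    have hB1 : (P₂.takeW t).append (P₂.dropW t) = P₂ := Walk.takeW_append_dropW _ _
    have hlenA : (P₁.takeW (p - s)).length = p - s := Walk.length_takeW _ _ (by omega)
    have hlenS₁ : (P₁.dropW (p - s)).length = s := by rw [Walk.length_dropW]; omega
    have hlenS₂ : (P₂.takeW t).length = t := Walk.length_takeW _ _ (by omega)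
    have hlenB : (P₂.dropW t).length = q - t := Walk.length_dropW _ _
    have hPdec : P = (P₁.takeW (p - s)).append
        (((P₁.dropW (p - s)).append (Walk.cons huv (P₂.takeW t))).append (P₂.dropW t)) := by
      conv_lhs => rw [hsplit, ← hA1, ← hB1]
      simp only [Walk.cons_append, ← Walk.append_assoc]
    refine ⟨_, _, (P₁.dropW (p - s)).append (Walk.cons huv (P₂.takeW t)), ?_, ?_, ?_, ?_⟩
    · have h1 := hPdec ▸ hPpath
      exact h1.of_append_right.of_append_left
    · simp only [Walk.length_append, Walk.length_cons, hlenS₁, hlenS₂]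
      omega
    · simp [Walk.edges_append, Walk.edges_cons, heq]
    · by_contra hcon
      push_neg at hcon
      have hAe : e ∉ (P₁.takeW (p - s)).edges := fun hm => he₁₂.1 (Walk.edges_takeW_subset _ _ hm)
      have hBe : e ∉ (P₂.dropW t).edges := fun hm => he₁₂.2 (Walk.edges_dropW_subset _ _ hm)
      have h1 : G'.edist a (P₁.getVert (p - s)) ≤ ((p - s : ℕ) : ℕ∞) := by
        have h0 := edist_deleteEdges_le (P₁.takeW (p - s)) hAe
        rwa [hlenA] at h0
      have h2 : G'.edist (P₂.getVert t) b ≤ ((q - t : ℕ) : ℕ∞) := by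
        have h0 := edist_deleteEdges_le (P₂.dropW t) hBe
        rwa [hlenB] at h0
      have htri : G'.edist a b ≤ G'.edist a (P₁.getVert (p - s)) +
          G'.edist (P₁.getVert (p - s)) (P₂.getVert t) + G'.edist (P₂.getVert t) b :=
        le_trans (SimpleGraph.edist_triangle (v := P₂.getVert t))
          (add_le_add (SimpleGraph.edist_triangle (v := P₁.getVert (p - s))) le_rfl)
      have h3 : G'.edist a b ≤ (((p - s) + ℓ + (q - t) : ℕ) : ℕ∞) := by
        refine le_trans htri ?_
        push_cast
        exact add_le_add (add_le_add h1 hcon) h2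
      have h4 : (p - s) + ℓ + (q - t) = L := by omega
      rw [h4] at h3
      have h5 : (k : ℕ∞) < (L : ℕ∞) := lt_of_lt_of_le hab h3
      exact absurd (by exact_mod_cast h5) (not_lt.mpr hLk)
  · -- short case: L < ℓ; build a fresh path of length ℓ through e
    have hLℓ : L ≤ ℓ := by omega
    have huv2 : ((2 * ℓ : ℕ) : ℕ∞) ≤ G'.edist u v := by
      rcases eq_or_ne (G'.edist u v) ⊤ with h | h
      · rw [h]; exact le_top
      · obtain ⟨m, hm⟩ : ∃ m : ℕ, G'.edist u v = (m : ℕ∞) := ⟨_, (ENat.coe_toNat h).symm⟩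
        have htri : G'.edist a b ≤ (p : ℕ∞) + (m : ℕ∞) + (q : ℕ∞) :=
          le_trans (le_trans (SimpleGraph.edist_triangle (v := v))
            (add_le_add (SimpleGraph.edist_triangle (v := u)) le_rfl))
            (add_le_add (add_le_add hd1 hm.le) hd2)
        have h2 : (k : ℕ∞) < ((p + m + q : ℕ) : ℕ∞) := by
          refine lt_of_lt_of_le hab ?_
          push_cast
          exact htri
        have h3 : k < p + m + q := by exact_mod_cast h2
        rw [hm]
        exact_mod_cast (by omega : 2 * ℓ ≤ m)
    obtain ⟨z, hz⟩ : ∃ z, ((ℓ : ℕ) : ℕ∞) ≤ G.edist u z := by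
      by_contra hno
      push_neg at hno
      have hbound : ∀ x y : V, G.edist x y ≤ ((2 * ℓ - 2 : ℕ) : ℕ∞) := by
        intro x y
        have hb : ∀ c : V, G.edist u c ≤ ((ℓ - 1 : ℕ) : ℕ∞) := by
          intro c
          have h1 := hno c
          obtain ⟨m, hm⟩ : ∃ m : ℕ, G.edist u c = (m : ℕ∞) :=
            ⟨_, (ENat.coe_toNat (ne_top_of_lt h1)).symm⟩
          rw [hm] at h1 ⊢
          have : m < ℓ := by exact_mod_cast h1
          exact_mod_cast (by omega : m ≤ ℓ - 1)
        calc G.edist x y ≤ G.edist x u + G.edist u y := SimpleGraph.edist_triangle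
          _ ≤ ((ℓ - 1 : ℕ) : ℕ∞) + ((ℓ - 1 : ℕ) : ℕ∞) := by
              refine add_le_add ?_ (hb y)
              rw [SimpleGraph.edist_comm]
              exact hb x
          _ = ((2 * ℓ - 2 : ℕ) : ℕ∞) := by
              rw [← Nat.cast_add]
              congr 1
              omega
      have h1 : G.ediam ≤ ((2 * ℓ - 2 : ℕ) : ℕ∞) := SimpleGraph.ediam_le_of_edist_le hbound
      rw [hdiam] at h1
      have h2 : k ≤ 2 * ℓ - 2 := by exact_mod_cast h1
      omega
    have hzt : G.edist u z ≠ ⊤ := by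
      have h1 : G.edist u z ≤ (k : ℕ∞) := hdiam ▸ SimpleGraph.edist_le_ediam
      exact ne_top_of_le_ne_top (ENat.coe_ne_top k) h1
    obtain ⟨w, S, hSpath, hSlen, hwdist⟩ : ∃ (w : V) (S : G.Walk u w), S.IsPath ∧
        S.length = ℓ ∧ G.edist u w = ((ℓ : ℕ) : ℕ∞) := by
      obtain ⟨R, hRpath, hRlen⟩ := (SimpleGraph.reachable_of_edist_ne_top hzt).exists_path_of_dist
      have hRcast : ((R.length : ℕ) : ℕ∞) = G.edist u z := by
        rw [hRlen]
        exact ENat.coe_toNat hzt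
      have hRℓ : ℓ ≤ R.length := by
        have h1 : ((ℓ : ℕ) : ℕ∞) ≤ (R.length : ℕ∞) := hRcast ▸ hz
        exact_mod_cast h1
      refine ⟨R.getVert ℓ, R.takeW ℓ, ?_, Walk.length_takeW _ _ hRℓ, ?_⟩
      · have h1 : ((R.takeW ℓ).append (R.dropW ℓ)).IsPath := by
          rw [Walk.takeW_append_dropW]; exact hRpath
        exact h1.of_append_left
      · apply le_antisymm
        · have h1 := Walk.edist_le (R.takeW ℓ)
          rwa [Walk.length_takeW _ _ hRℓ] at h1
        · by_contra hcon
          push_neg at hcon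
          obtain ⟨m, hm⟩ : ∃ m : ℕ, G.edist u (R.getVert ℓ) = (m : ℕ∞) :=
            ⟨_, (ENat.coe_toNat (ne_top_of_lt hcon)).symm⟩
          have hmℓ : m < ℓ := by
            rw [hm] at hcon
            exact_mod_cast hcon
          have h2 : G.edist (R.getVert ℓ) z ≤ ((R.length - ℓ : ℕ) : ℕ∞) := by
            have h3 := Walk.edist_le (R.dropW ℓ)
            rwa [Walk.length_dropW] at h3
          have h4 : ((R.length : ℕ) : ℕ∞) ≤ (m : ℕ∞) + ((R.length - ℓ : ℕ) : ℕ∞) := by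
            rw [hRcast]
            exact le_trans SimpleGraph.edist_triangle (add_le_add hm.le h2)
          have h5 : R.length ≤ m + (R.length - ℓ) := by exact_mod_cast h4
          omega
    by_cases heS : e ∈ S.edges
    · refine ⟨u, w, S, hSpath, hSlen, heS, ?_⟩
      obtain ⟨u', v', h', T₁, T₂, hsp2, heq2⟩ := Walk.exists_split_at_edge heS
      have hT : T₁.length + 1 + T₂.length = ℓ := by
        have h0 : (T₁.append (Walk.cons h' T₂)).length = S.length := by rw [← hsp2]
        rw [Walk.length_append, Walk.length_cons] at h0
        omega
      have hTe : e ∉ T₁.edges ∧ e ∉ T₂.edges := by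
        have hnodup : S.edges.Nodup := hSpath.isTrail.edges_nodup
        rw [hsp2, Walk.edges_append, Walk.edges_cons, ← heq2] at hnodup
        obtain ⟨-, hnd2, hdisj⟩ := List.nodup_append'.mp hnodup
        exact ⟨fun hm => hdisj hm List.mem_cons_self, (List.nodup_cons.mp hnd2).1⟩
      have hdT1 : G'.edist u u' ≤ (T₁.length : ℕ∞) := edist_deleteEdges_le T₁ hTe.1
      have hdT2 : G'.edist v' w ≤ (T₂.length : ℕ∞) := edist_deleteEdges_le T₂ hTe.2
      have hA' : ((2 * ℓ : ℕ) : ℕ∞) ≤ G'.edist u' v' := by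
        rcases Sym2.eq_iff.mp (heq2.symm.trans heq) with ⟨h1, h2⟩ | ⟨h1, h2⟩
        · rw [h1, h2]; exact huv2
        · rw [h1, h2, SimpleGraph.edist_comm]; exact huv2
      rcases eq_or_ne (G'.edist u w) ⊤ with h | h
      · rw [h]; exact ENat.coe_lt_top _
      · obtain ⟨m, hm⟩ : ∃ m : ℕ, G'.edist u w = (m : ℕ∞) := ⟨_, (ENat.coe_toNat h).symm⟩
        have htri : G'.edist u' v' ≤ (T₁.length : ℕ∞) + (m : ℕ∞) + (T₂.length : ℕ∞) := by
          refine le_trans (le_trans (SimpleGraph.edist_triangle (v := w))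
            (add_le_add (SimpleGraph.edist_triangle (v := u)) le_rfl)) ?_
          refine add_le_add (add_le_add ?_ hm.le) ?_
          · rw [SimpleGraph.edist_comm]
            exact hdT1
          · rw [SimpleGraph.edist_comm]
            exact hdT2
        have h2 : ((2 * ℓ : ℕ) : ℕ∞) ≤ ((T₁.length + m + T₂.length : ℕ) : ℕ∞) := by
          refine le_trans hA' (le_trans htri ?_)
          push_cast
          exact le_rfl
        have h3 : 2 * ℓ ≤ T₁.length + m + T₂.length := by exact_mod_cast h2
        rw [hm]
        exact_mod_cast (by omega : ℓ < m)
    · have hvS : v ∉ S.support := by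
        intro hv
        have hTD : (S.takeUntil v hv).append (S.dropUntil v hv) = S := Walk.take_spec _ hv
        have hlen : (S.takeUntil v hv).length + (S.dropUntil v hv).length = ℓ := by
          have h0 : ((S.takeUntil v hv).append (S.dropUntil v hv)).length = S.length := by
            rw [hTD]
          rw [Walk.length_append] at h0
          omega
        have hT1 : 1 ≤ (S.takeUntil v hv).length := by
          by_contra hcon
          push_neg at hcon
          have h0 : (S.takeUntil v hv).length = 0 := by omega
          exact huv.ne (Walk.eq_of_length_eq_zero h0)
        have hD : (ℓ : ℕ) - 1 ≤ (S.dropUntil v hv).length := by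
          have h1 : G.edist u w ≤ G.edist u v + G.edist v w := SimpleGraph.edist_triangle
          have h2 : G.edist u v = 1 := SimpleGraph.edist_eq_one_iff_adj.mpr huv
          have h3 : G.edist v w ≤ ((S.dropUntil v hv).length : ℕ∞) :=
            Walk.edist_le (S.dropUntil v hv)
          rw [hwdist, h2] at h1
          have h4 : ((ℓ : ℕ) : ℕ∞) ≤ 1 + ((S.dropUntil v hv).length : ℕ∞) :=
            le_trans h1 (add_le_add le_rfl h3)
          have h5 : ℓ ≤ 1 + (S.dropUntil v hv).length := by exact_mod_cast h4
          omega
        have hTlen : (S.takeUntil v hv).length = 1 := by omega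
        have heT : e ∈ (S.takeUntil v hv).edges := by
          rw [heq]
          exact Walk.edge_mem_of_length_one hTlen
        exact heS (Walk.edges_takeUntil_subset _ hv heT)
      have hS'len : (S.takeW (ℓ - 1)).length = ℓ - 1 := Walk.length_takeW _ _ (by omega)
      have hS'path : (S.takeW (ℓ - 1)).IsPath := by
        have h1 : ((S.takeW (ℓ - 1)).append (S.dropW (ℓ - 1))).IsPath := by
          rw [Walk.takeW_append_dropW]; exact hSpath
        exact h1.of_append_left
      have hvS' : v ∉ (S.takeW (ℓ - 1)).support := by
        intro hm
        apply hvS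
        have h1 : (S.takeW (ℓ - 1)).support ⊆ S.support := by
          conv_rhs => rw [← Walk.takeW_append_dropW S (ℓ - 1)]
          exact Walk.subset_support_append_left _ _
        exact h1 hm
      refine ⟨v, S.getVert (ℓ - 1), Walk.cons huv.symm (S.takeW (ℓ - 1)),
        hS'path.cons hvS', ?_, ?_, ?_⟩
      · rw [Walk.length_cons, hS'len]; omega
      · rw [Walk.edges_cons]
        have hvu : s(v, u) = e := by rw [heq]; exact Sym2.eq_swap
        rw [hvu]
        exact List.mem_cons_self
      · have hS'e : e ∉ (S.takeW (ℓ - 1)).edges := fun hm => heS (Walk.edges_takeW_subset _ _ hm)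
        have h1 : G'.edist u (S.getVert (ℓ - 1)) ≤ ((ℓ - 1 : ℕ) : ℕ∞) := by
          have h0 := edist_deleteEdges_le (S.takeW (ℓ - 1)) hS'e
          rwa [hS'len] at h0
        rcases eq_or_ne (G'.edist v (S.getVert (ℓ - 1))) ⊤ with h | h
        · rw [h]; exact ENat.coe_lt_top _
        · obtain ⟨m, hm⟩ : ∃ m : ℕ, G'.edist v (S.getVert (ℓ - 1)) = (m : ℕ∞) :=
            ⟨_, (ENat.coe_toNat h).symm⟩
          have htri : G'.edist u v ≤ ((ℓ - 1 : ℕ) : ℕ∞) + (m : ℕ∞) := by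
            refine le_trans (SimpleGraph.edist_triangle (v := S.getVert (ℓ - 1))) ?_
            refine add_le_add h1 ?_
            rw [SimpleGraph.edist_comm]
            exact hm.le
          have h2 : ((2 * ℓ : ℕ) : ℕ∞) ≤ (((ℓ - 1) + m : ℕ) : ℕ∞) := by
            refine le_trans huv2 (le_trans htri ?_)
            push_cast
            exact le_rfl
          have h3 : 2 * ℓ ≤ (ℓ - 1) + m := by exact_mod_cast h2
          rw [hm]
          exact_mod_cast (by omega : ℓ < m)
end
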